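/- arXiv:2604.23895 — 7 statements merged into one kernel-verified Lean document; each statement's English description precedes it below -/
import Mathlib

section
/- Let n ≥ 1 and T > 0. Suppose Σ, Λ : [0,T] → ℝ^{n×n} are differentiable with Σ_t and Λ_t symmetric for every t, and define A_t := (1/2)(Σ_t Λ_t + Λ_t Σ_t) − (1/n)·tr(Λ_t Σ_t)·I. If Σ'(t) = A_t Σ_t + Σ_t A_t and Λ'(t) = −Λ_t A_t − A_t Λ_t for all t ∈ [0,T], then A_t is isospectral: for every positive integer m, the function t ↦ tr(A_t^m) is constant on [0,T] (equivalently, the eigenvalues of A_t do not depend on t). -/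
open MeasureTheory Matrix

private lemma hdw_entry_mul {n : ℕ} {s : Set ℝ} {t : ℝ}
    {M N : ℝ → Matrix (Fin n) (Fin n) ℝ} {M' N' : Matrix (Fin n) (Fin n) ℝ}
    (hM : ∀ i j, HasDerivWithinAt (fun τ => M τ i j) (M' i j) s t)
    (hN : ∀ i j, HasDerivWithinAt (fun τ => N τ i j) (N' i j) s t)
    (i j : Fin n) :
    HasDerivWithinAt (fun τ => (M τ * N τ) i j) ((M' * N t + M t * N') i j) s t := by
  have h := HasDerivWithinAt.fun_sum (u := Finset.univ)
    (A := fun k τ => M τ i k * N τ k j)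
    (A' := fun k => M' i k * N t k j + M t i k * N' k j)
    (fun k _ => (hM i k).mul (hN k j))
  simpa [Matrix.mul_apply, Matrix.add_apply, Finset.sum_add_distrib] using h

/-- Proposition 1, isospectrality of the shear-minimizing gain.
Under the Euler–Lagrange/Pontryagin stationarity conditions for minimizing
`∫₀ᵀ tr(A_t²) dt` subject to the Lyapunov equation, the gain
`A_t = (1/2)(Σ_tΛ_t + Λ_tΣ_t) − (1/n)·tr(Λ_tΣ_t)·I` is isospectral:
`t ↦ tr(A_t^m)` is constant on `[0,T]` for every `m ≥ 1`. -/
theorem shear_optimal_gain_isospectral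
    {n : ℕ} (hn : 1 ≤ n) (T : ℝ) (hT : 0 < T)
    (S L A : ℝ → Matrix (Fin n) (Fin n) ℝ)
    (hSsym : ∀ t ∈ Set.Icc (0:ℝ) T, (S t).IsSymm)
    (hLsym : ∀ t ∈ Set.Icc (0:ℝ) T, (L t).IsSymm)
    (hA : ∀ t ∈ Set.Icc (0:ℝ) T,
      A t = (1/2 : ℝ) • (S t * L t + L t * S t)
        - (((L t * S t).trace / (n : ℝ)) • (1 : Matrix (Fin n) (Fin n) ℝ)))
    (hS' : ∀ t ∈ Set.Icc (0:ℝ) T, ∀ i j,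
      HasDerivWithinAt (fun τ => S τ i j)
        ((A t * S t + S t * A t) i j) (Set.Icc (0:ℝ) T) t)
    (hL' : ∀ t ∈ Set.Icc (0:ℝ) T, ∀ i j,
      HasDerivWithinAt (fun τ => L τ i j)
        ((-(L t * A t) - A t * L t) i j) (Set.Icc (0:ℝ) T) t) :
    ∀ m : ℕ, 0 < m → ∀ t ∈ Set.Icc (0:ℝ) T,
      ((A t) ^ m).trace = ((A 0) ^ m).trace := by
  intro m _hm t ht
  set B : ℝ → Matrix (Fin n) (Fin n) ℝ :=
    fun τ => (1/2 : ℝ) • (S τ * L τ - L τ * S τ) with hB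
  -- derivative of products S*L and L*S
  have hSL : ∀ u ∈ Set.Icc (0:ℝ) T, ∀ i j,
      HasDerivWithinAt (fun τ => (S τ * L τ) i j)
        ((A u * (S u * L u) - (S u * L u) * A u) i j) (Set.Icc (0:ℝ) T) u := by
    intro u hu i j
    have h := hdw_entry_mul (hS' u hu) (hL' u hu) i j
    have heq : (A u * S u + S u * A u) * L u + S u * (-(L u * A u) - A u * L u)
        = A u * (S u * L u) - (S u * L u) * A u := by noncomm_ring
    rwa [heq] at h
  have hLS : ∀ u ∈ Set.Icc (0:ℝ) T, ∀ i j,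
      HasDerivWithinAt (fun τ => (L τ * S τ) i j)
        (((L u * S u) * A u - A u * (L u * S u)) i j) (Set.Icc (0:ℝ) T) u := by
    intro u hu i j
    have h := hdw_entry_mul (hL' u hu) (hS' u hu) i j
    have heq : (-(L u * A u) - A u * L u) * S u + L u * (A u * S u + S u * A u)
        = (L u * S u) * A u - A u * (L u * S u) := by noncomm_ring
    rwa [heq] at h
  -- derivative of tr(L*S) is zero
  have htr : ∀ u ∈ Set.Icc (0:ℝ) T,
      HasDerivWithinAt (fun τ => (L τ * S τ).trace) 0 (Set.Icc (0:ℝ) T) u := by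
    intro u hu
    have h := HasDerivWithinAt.fun_sum (u := Finset.univ)
      (A := fun k τ => (L τ * S τ) k k)
      (A' := fun k => ((L u * S u) * A u - A u * (L u * S u)) k k)
      (fun k _ => hLS u hu k k)
    have hz : ∑ k, ((L u * S u) * A u - A u * (L u * S u)) k k = 0 := by
      have h0 : ((L u * S u) * A u - A u * (L u * S u)).trace = 0 := by
        rw [Matrix.trace_sub, Matrix.trace_mul_comm, sub_self]
      simpa [Matrix.trace, Matrix.diag] using h0
    rw [hz] at h
    have hfun : (fun τ => (L τ * S τ).trace) = fun τ => ∑ k, (L τ * S τ) k k := by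
      funext τ; simp [Matrix.trace, Matrix.diag]
    rwa [hfun]
  -- Lax equation A' = A B - B A (entrywise, within the interval)
  have hA' : ∀ u ∈ Set.Icc (0:ℝ) T, ∀ i j,
      HasDerivWithinAt (fun τ => A τ i j)
        ((A u * B u - B u * A u) i j) (Set.Icc (0:ℝ) T) u := by
    intro u hu i j
    have h1 := (((hSL u hu i j).add (hLS u hu i j)).const_mul (1/2 : ℝ))
    have h2 := ((htr u hu).div_const (n : ℝ)).mul_const ((1 : Matrix (Fin n) (Fin n) ℝ) i j)
    have h3 := h1.sub h2
    have hiden : (1/2 : ℝ) • ((A u * (S u * L u) - (S u * L u) * A u)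
          + ((L u * S u) * A u - A u * (L u * S u)))
        = A u * B u - B u * A u := by
      rw [hB]
      simp only [smul_sub, smul_add, mul_smul_comm, smul_mul_assoc, mul_sub, sub_mul]
      abel
    have hg : HasDerivWithinAt
        (fun τ => ((1/2 : ℝ) • (S τ * L τ + L τ * S τ)
          - (((L τ * S τ).trace / (n : ℝ)) • (1 : Matrix (Fin n) (Fin n) ℝ))) i j)
        ((A u * B u - B u * A u) i j) (Set.Icc (0:ℝ) T) u := by
      have : ((A u * B u - B u * A u) i j)
          = (1/2 : ℝ) * ((A u * (S u * L u) - (S u * L u) * A u) i j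
              + ((L u * S u) * A u - A u * (L u * S u)) i j)
            - (0 / (n : ℝ)) * ((1 : Matrix (Fin n) (Fin n) ℝ) i j) := by
        rw [← hiden]; simp [Matrix.smul_apply, Matrix.add_apply]
      rw [this]
      exact h3.congr_deriv rfl |>.congr (fun y _ => by
        simp [Matrix.sub_apply, Matrix.smul_apply, Matrix.add_apply, mul_add]) (by
        simp [Matrix.sub_apply, Matrix.smul_apply, Matrix.add_apply, mul_add])
    exact hg.congr (fun y hy => by rw [hA y hy]) (by rw [hA u hu])
  -- derivative of powers
  have hpow : ∀ k : ℕ, ∀ u ∈ Set.Icc (0:ℝ) T, ∀ i j,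
      HasDerivWithinAt (fun τ => (A τ ^ k) i j)
        ((A u ^ k * B u - B u * A u ^ k) i j) (Set.Icc (0:ℝ) T) u := by
    intro k
    induction k with
    | zero =>
      intro u hu i j
      have h : HasDerivWithinAt (fun _ : ℝ => (1 : Matrix (Fin n) (Fin n) ℝ) i j) 0
          (Set.Icc (0:ℝ) T) u := hasDerivWithinAt_const _ _ _
      have : ((A u ^ 0 * B u - B u * A u ^ 0) i j) = 0 := by simp
      rw [this]
      simpa [pow_zero] using h
    | succ k ih =>
      intro u hu i j
      have h := hdw_entry_mul (fun i j => ih u hu i j) (fun i j => hA' u hu i j) i j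
      have heq : (A u ^ k * B u - B u * A u ^ k) * A u + A u ^ k * (A u * B u - B u * A u)
          = A u ^ (k + 1) * B u - B u * A u ^ (k + 1) := by
        simp only [pow_succ]; noncomm_ring
      rw [heq] at h
      have hfun : (fun τ => (A τ ^ (k + 1)) i j) = fun τ => (A τ ^ k * A τ) i j := by
        funext τ; rw [pow_succ]
      rwa [hfun]
  -- derivative of the trace of the power is zero
  have htrace : ∀ u ∈ Set.Icc (0:ℝ) T,
      HasDerivWithinAt (fun τ => (A τ ^ m).trace) 0 (Set.Icc (0:ℝ) T) u := by
    intro u hu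
    have h := HasDerivWithinAt.fun_sum (u := Finset.univ)
      (A := fun k τ => (A τ ^ m) k k)
      (A' := fun k => (A u ^ m * B u - B u * A u ^ m) k k)
      (fun k _ => hpow m u hu k k)
    have hz : ∑ k, (A u ^ m * B u - B u * A u ^ m) k k = 0 := by
      have h0 : (A u ^ m * B u - B u * A u ^ m).trace = 0 := by
        rw [Matrix.trace_sub, Matrix.trace_mul_comm, sub_self]
      simpa [Matrix.trace, Matrix.diag] using h0
    rw [hz] at h
    have hfun : (fun τ => (A τ ^ m).trace) = fun τ => ∑ k, (A τ ^ m) k k := by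
      funext τ; simp [Matrix.trace, Matrix.diag]
    rwa [hfun]
  -- constancy on the interval
  have hcont : ContinuousOn (fun τ => (A τ ^ m).trace) (Set.Icc (0:ℝ) T) :=
    fun u hu => (htrace u hu).continuousWithinAt
  have hconst := constant_of_has_deriv_right_zero hcont (fun x hx =>
    (htrace x (Set.Ico_subset_Icc_self hx)).mono_of_mem_nhdsWithin
      (Icc_mem_nhdsGE_of_mem hx))
  exact hconst t ht
end

section
/- Let n ≥ 1, T > 0, and let f : ℝ → ℝ be twice continuously differentiable with f' strictly monotone (hence injective). Suppose Σ, Λ : [0,T] → ℝ^{n×n} are differentiable with Σ_t and Λ_t symmetric, A : [0,T] → ℝ^{n×n} is differentiable with A_t symmetric and traceless, and for all t ∈ [0,T]: Σ'(t) = A_t Σ_t + Σ_t A_t, Λ'(t) = −Λ_t A_t − A_t Λ_t, and f'(A_t) = Σ_t Λ_t + Λ_t Σ_t − (2/n)·tr(Λ_t Σ_t)·I, where f'(A_t) is defined by the functional calculus for the symmetric matrix A_t (apply f' to the eigenvalues in a spectral decomposition). Then A_t is isospectral: for every positive integer m, t ↦ tr(A_t^m) is constant on [0,T]. -/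
open MeasureTheory Matrix
open Finset

/-- Functional calculus for a real symmetric matrix: apply `g : ℝ → ℝ` to the
eigenvalues in a spectral decomposition `A = W diag(a₁,…,aₙ) Wᵀ`. -/
noncomputable def matFun {n : ℕ} (g : ℝ → ℝ) {A : Matrix (Fin n) (Fin n) ℝ}
    (hA : A.IsHermitian) : Matrix (Fin n) (Fin n) ℝ :=
  (hA.eigenvectorUnitary : Matrix (Fin n) (Fin n) ℝ) *
    Matrix.diagonal (g ∘ hA.eigenvalues) *
    star (hA.eigenvectorUnitary : Matrix (Fin n) (Fin n) ℝ)

section spec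
variable {n : ℕ} {A : Matrix (Fin n) (Fin n) ℝ} (hA : A.IsHermitian)

lemma star_mul_self_eigen : star (hA.eigenvectorUnitary : Matrix (Fin n) (Fin n) ℝ) *
    (hA.eigenvectorUnitary : Matrix (Fin n) (Fin n) ℝ) = 1 := by
  simpa using unitary.coe_star_mul_self hA.eigenvectorUnitary

lemma matFun_id : matFun id hA = A := by
  have := hA.spectral_theorem
  simpa [matFun] using this.symm

lemma matFun_mul (g h : ℝ → ℝ) : matFun g hA * matFun h hA = matFun (fun x => g x * h x) hA := by
  simp only [matFun, Matrix.mul_assoc]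
  rw [← Matrix.mul_assoc (star (hA.eigenvectorUnitary : Matrix (Fin n) (Fin n) ℝ))
      (hA.eigenvectorUnitary : Matrix (Fin n) (Fin n) ℝ), star_mul_self_eigen hA,
    Matrix.one_mul, ← Matrix.mul_assoc (Matrix.diagonal (g ∘ hA.eigenvalues)),
    diagonal_mul_diagonal]
  rfl

lemma matFun_comm (g : ℝ → ℝ) : A * matFun g hA = matFun g hA * A := by
  conv_lhs => lhs; rw [← matFun_id hA]
  conv_rhs => rhs; rw [← matFun_id hA]
  rw [matFun_mul, matFun_mul]
  congr 1
  ext x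
  simp [mul_comm]

lemma matFun_one : matFun (fun _ => (1:ℝ)) hA = 1 := by
  rw [matFun]
  have : (fun _ : ℝ => (1:ℝ)) ∘ hA.eigenvalues = fun _ => 1 := rfl
  rw [this, show Matrix.diagonal (fun _ : Fin n => (1:ℝ)) = 1 from Matrix.diagonal_one,
    Matrix.mul_one]
  simpa using unitary.coe_mul_star_self hA.eigenvectorUnitary

lemma matFun_pow (g : ℝ → ℝ) (k : ℕ) : (matFun g hA) ^ k = matFun (fun x => g x ^ k) hA := by
  induction k with
  | zero =>
    simp only [pow_zero]
    exact (matFun_one hA).symm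
  | succ k ih =>
    rw [pow_succ, ih, matFun_mul]
    congr 1

lemma trace_matFun (g : ℝ → ℝ) : (matFun g hA).trace = ∑ i, g (hA.eigenvalues i) := by
  rw [matFun, Matrix.trace_mul_cycle, star_mul_self_eigen hA,
    Matrix.one_mul, Matrix.trace_diagonal]
  rfl

lemma trace_matFun_pow (g : ℝ → ℝ) (k : ℕ) :
    ((matFun g hA) ^ k).trace = ∑ i, g (hA.eigenvalues i) ^ k := by
  rw [matFun_pow, trace_matFun]

lemma trace_pow_eq (m : ℕ) : (A ^ m).trace = ∑ i, hA.eigenvalues i ^ m := by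
  conv_lhs => rw [← matFun_id hA]
  rw [trace_matFun_pow]
  simp

end spec

lemma aeval_psum {n : ℕ} (b : Fin n → ℝ) (k : ℕ) :
    MvPolynomial.aeval b (MvPolynomial.psum (Fin n) ℝ k) = ∑ i, b i ^ k := by
  simp [MvPolynomial.psum]

lemma esymm_eq_of_psum_eq {n : ℕ} (b b0 : Fin n → ℝ)
    (h : ∀ k, 0 < k → ∑ i, b i ^ k = ∑ i, b0 i ^ k) :
    ∀ k, MvPolynomial.aeval b (MvPolynomial.esymm (Fin n) ℝ k)
      = MvPolynomial.aeval b0 (MvPolynomial.esymm (Fin n) ℝ k) := by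
  intro k
  induction k using Nat.strong_induction_on with
  | _ k ih =>
    rcases Nat.eq_zero_or_pos k with hk | hk
    · subst hk; simp [MvPolynomial.esymm_zero]
    · have H := congrArg (MvPolynomial.aeval b) (MvPolynomial.mul_esymm_eq_sum (Fin n) ℝ k)
      have H0 := congrArg (MvPolynomial.aeval b0) (MvPolynomial.mul_esymm_eq_sum (Fin n) ℝ k)
      simp only [_root_.map_mul, map_sum, map_pow, map_neg, _root_.map_one, map_natCast] at H H0
      have hsum : ∑ a ∈ (antidiagonal k).filter (fun a => a.1 < k),
            (-1:ℝ)^a.1 * MvPolynomial.aeval b (MvPolynomial.esymm (Fin n) ℝ a.1)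
              * MvPolynomial.aeval b (MvPolynomial.psum (Fin n) ℝ a.2)
          = ∑ a ∈ (antidiagonal k).filter (fun a => a.1 < k),
            (-1:ℝ)^a.1 * MvPolynomial.aeval b0 (MvPolynomial.esymm (Fin n) ℝ a.1)
              * MvPolynomial.aeval b0 (MvPolynomial.psum (Fin n) ℝ a.2) := by
        refine Finset.sum_congr rfl fun a ha => ?_
        rw [Finset.mem_filter, Finset.HasAntidiagonal.mem_antidiagonal] at ha
        have h2 : 0 < a.2 := by omega
        rw [ih a.1 (by omega), aeval_psum, aeval_psum, h a.2 h2]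
      have : (k:ℝ) * MvPolynomial.aeval b (MvPolynomial.esymm (Fin n) ℝ k)
          = (k:ℝ) * MvPolynomial.aeval b0 (MvPolynomial.esymm (Fin n) ℝ k) := by
        rw [H, H0, hsum]
      exact mul_left_cancel₀ (by exact_mod_cast hk.ne') this

lemma multiset_eq_of_psum_eq {n : ℕ} (b b0 : Fin n → ℝ)
    (h : ∀ k, 0 < k → ∑ i, b i ^ k = ∑ i, b0 i ^ k) :
    Finset.univ.val.map b = Finset.univ.val.map b0 := by
  have hes : ∀ k, (Finset.univ.val.map b).esymm k = (Finset.univ.val.map b0).esymm k := by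
    intro k
    have := esymm_eq_of_psum_eq b b0 h k
    rwa [MvPolynomial.aeval_esymm_eq_multiset_esymm, MvPolynomial.aeval_esymm_eq_multiset_esymm]
      at this
  have hcard : Multiset.card (Finset.univ.val.map b) = Multiset.card (Finset.univ.val.map b0) := by
    simp
  have hprod : ((Finset.univ.val.map b).map fun t => Polynomial.X - Polynomial.C t).prod
      = ((Finset.univ.val.map b0).map fun t => Polynomial.X - Polynomial.C t).prod := by
    rw [Multiset.prod_X_sub_X_eq_sum_esymm, Multiset.prod_X_sub_X_eq_sum_esymm, hcard]
    exact Finset.sum_congr rfl fun j _ => by rw [hes]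
  have := congrArg Polynomial.roots hprod
  rwa [Polynomial.roots_multiset_prod_X_sub_C, Polynomial.roots_multiset_prod_X_sub_C] at this

section derivhelp
variable {n : ℕ} {s : Set ℝ} {t : ℝ}

lemma hasDeriv_matmul {F G : ℝ → Matrix (Fin n) (Fin n) ℝ}
    {F' G' : Matrix (Fin n) (Fin n) ℝ}
    (hF : ∀ i j, HasDerivWithinAt (fun τ => F τ i j) (F' i j) s t)
    (hG : ∀ i j, HasDerivWithinAt (fun τ => G τ i j) (G' i j) s t) :
    ∀ i j, HasDerivWithinAt (fun τ => (F τ * G τ) i j)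
      ((F' * G t + F t * G') i j) s t := by
  intro i j
  simp only [Matrix.mul_apply, Matrix.add_apply]
  rw [← Finset.sum_add_distrib]
  exact HasDerivWithinAt.fun_sum fun k _ => (hF i k).mul (hG k j)

lemma hasDeriv_trace {F : ℝ → Matrix (Fin n) (Fin n) ℝ} {F' : Matrix (Fin n) (Fin n) ℝ}
    (hF : ∀ i j, HasDerivWithinAt (fun τ => F τ i j) (F' i j) s t) :
    HasDerivWithinAt (fun τ => (F τ).trace) F'.trace s t := by
  simp only [Matrix.trace, Matrix.diag]
  exact HasDerivWithinAt.fun_sum fun i _ => hF i i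

end derivhelp
/-- Proposition 2, isospectrality for general spread-penalizing costs.
Under the stationarity conditions for minimizing `∫₀ᵀ tr(f(A_t)) dt` subject to the
Lyapunov equation, with `f'` strictly monotone (hence injective), the symmetric traceless
gain `A_t` is isospectral: `t ↦ tr(A_t^m)` is constant on `[0,T]` for every `m ≥ 1`. -/
theorem general_cost_optimal_gain_isospectral
    {n : ℕ} (hn : 1 ≤ n) (T : ℝ) (hT : 0 < T)
    (f : ℝ → ℝ) (hf : ContDiff ℝ 2 f)
    (hf' : StrictMono (deriv f) ∨ StrictAnti (deriv f))
    (S L A : ℝ → Matrix (Fin n) (Fin n) ℝ)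
    (hSsym : ∀ t ∈ Set.Icc (0:ℝ) T, (S t).IsHermitian)
    (hLsym : ∀ t ∈ Set.Icc (0:ℝ) T, (L t).IsHermitian)
    (hAsym : ∀ t, t ∈ Set.Icc (0:ℝ) T → (A t).IsHermitian)
    (hAtr : ∀ t ∈ Set.Icc (0:ℝ) T, (A t).trace = 0)
    (hSdiff : ∀ i j, DifferentiableOn ℝ (fun t => S t i j) (Set.Icc (0:ℝ) T))
    (hLdiff : ∀ i j, DifferentiableOn ℝ (fun t => L t i j) (Set.Icc (0:ℝ) T))
    (hAdiff : ∀ i j, DifferentiableOn ℝ (fun t => A t i j) (Set.Icc (0:ℝ) T))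
    (hS' : ∀ t ∈ Set.Icc (0:ℝ) T, ∀ i j,
      HasDerivWithinAt (fun τ => S τ i j)
        ((A t * S t + S t * A t) i j) (Set.Icc (0:ℝ) T) t)
    (hL' : ∀ t ∈ Set.Icc (0:ℝ) T, ∀ i j,
      HasDerivWithinAt (fun τ => L τ i j)
        ((-(L t * A t) - A t * L t) i j) (Set.Icc (0:ℝ) T) t)
    (hstat : ∀ t, ∀ ht : t ∈ Set.Icc (0:ℝ) T,
      matFun (deriv f) (hAsym t ht) =
        S t * L t + L t * S t
          - (((2 / (n : ℝ)) * (L t * S t).trace) • (1 : Matrix (Fin n) (Fin n) ℝ))) :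
    ∀ m : ℕ, 0 < m → ∀ t ∈ Set.Icc (0:ℝ) T,
      ((A t) ^ m).trace = ((A 0) ^ m).trace := by
  have h0 : (0:ℝ) ∈ Set.Icc (0:ℝ) T := ⟨le_refl 0, hT.le⟩
  set Icc := Set.Icc (0:ℝ) T with hIcc
  -- the matrix N = f'(A)
  set N : ℝ → Matrix (Fin n) (Fin n) ℝ := fun τ =>
    S τ * L τ + L τ * S τ - (((2 / (n : ℝ)) * (L τ * S τ).trace) • 1) with hN
  set C : ℝ → Matrix (Fin n) (Fin n) ℝ := fun τ => S τ * L τ - L τ * S τ with hC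
  set D : ℝ → Matrix (Fin n) (Fin n) ℝ := fun τ => A τ * C τ - C τ * A τ with hD
  -- derivative of trace (L * S) is zero
  have hc : ∀ t ∈ Icc, HasDerivWithinAt (fun τ => (L τ * S τ).trace) 0 Icc t := by
    intro t ht
    have := hasDeriv_trace (F' := (-(L t * A t) - A t * L t) * S t + L t * (A t * S t + S t * A t))
      (hasDeriv_matmul (hL' t ht) (hS' t ht))
    have htr : ((-(L t * A t) - A t * L t) * S t + L t * (A t * S t + S t * A t)).trace = 0 := by
      have e : (-(L t * A t) - A t * L t) * S t + L t * (A t * S t + S t * A t)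
          = L t * S t * A t - A t * (L t * S t) := by noncomm_ring
      rw [e, Matrix.trace_sub, Matrix.trace_mul_comm (A t) (L t * S t), Matrix.trace_mul_comm,
        sub_self]
    rwa [htr] at this
  -- derivative of entries of N
  have hNd : ∀ t ∈ Icc, ∀ i j,
      HasDerivWithinAt (fun τ => N τ i j) (D t i j) Icc t := by
    intro t ht i j
    have h1 := hasDeriv_matmul (hS' t ht) (hL' t ht)
    have h2 := hasDeriv_matmul (hL' t ht) (hS' t ht)
    have h3 : HasDerivWithinAt
        (fun τ => ((((2 / (n : ℝ)) * (L τ * S τ).trace)) • (1 : Matrix (Fin n) (Fin n) ℝ)) i j)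
        0 Icc t := by
      simp only [Matrix.smul_apply, smul_eq_mul]
      have := ((hc t ht).const_mul (2 / (n:ℝ))).mul_const ((1 : Matrix (Fin n) (Fin n) ℝ) i j)
      simpa using this
    have h4 := ((h1 i j).add (h2 i j)).sub h3
    have e : (A t * S t + S t * A t) * L t + S t * (-(L t * A t) - A t * L t)
        + ((-(L t * A t) - A t * L t) * S t + L t * (A t * S t + S t * A t)) = D t := by
      rw [hD, hC]; noncomm_ring
    have : (fun τ => N τ i j)
        = fun τ => (S τ * L τ) i j + (L τ * S τ) i j
            - ((((2 / (n : ℝ)) * (L τ * S τ).trace)) • (1 : Matrix (Fin n) (Fin n) ℝ)) i j := by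
      funext τ
      simp [hN]
    rw [this]
    refine h4.congr_deriv ?_
    rw [← e]
    simp [Matrix.add_apply]
  -- N commutes with A on Icc
  have hcomm : ∀ t (ht : t ∈ Icc), A t * N t = N t * A t := by
    intro t ht
    have := matFun_comm (hAsym t ht) (deriv f)
    rwa [hstat t ht] at this
  have hcommPow : ∀ t (ht : t ∈ Icc), ∀ p : ℕ, A t * N t ^ p = N t ^ p * A t := by
    intro t ht p
    induction p with
    | zero => simp
    | succ p ih => rw [pow_succ, ← Matrix.mul_assoc, ih, Matrix.mul_assoc, hcomm t ht,
        ← Matrix.mul_assoc]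
  -- trace (N^{p} * D) = 0 on Icc
  have htrD : ∀ t (ht : t ∈ Icc), ∀ p : ℕ, (N t ^ p * D t).trace = 0 := by
    intro t ht p
    rw [hD]
    have e1 : N t ^ p * (A t * C t - C t * A t)
        = N t ^ p * A t * C t - N t ^ p * C t * A t := by noncomm_ring
    rw [e1, Matrix.trace_sub, ← hcommPow t ht p, Matrix.trace_mul_cycle (N t ^ p) (C t) (A t)]
    exact sub_self _
  -- derivative of entries of N^k with trace control
  have key : ∀ k : ℕ, ∃ P : ℝ → Matrix (Fin n) (Fin n) ℝ,
      (∀ t (ht : t ∈ Icc), ∀ i j,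
        HasDerivWithinAt (fun τ => (N τ ^ k) i j) (P t i j) Icc t) ∧
      (∀ t, t ∈ Icc → ∀ r : ℕ,
        (N t ^ r * P t).trace = (k : ℝ) * (N t ^ (r + k - 1) * D t).trace) := by
    intro k
    induction k with
    | zero =>
      refine ⟨fun _ => 0, fun t ht i j => ?_, fun t ht r => by simp⟩
      simp only [pow_zero]
      exact hasDerivWithinAt_const t Icc ((1 : Matrix (Fin n) (Fin n) ℝ) i j)
    | succ k ih =>
      obtain ⟨P, hP, hPtr⟩ := ih
      refine ⟨fun τ => D τ * N τ ^ k + N τ * P τ, fun t ht i j => ?_, fun t ht r => ?_⟩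
      · have := hasDeriv_matmul (F := N) (G := fun τ => N τ ^ k)
          (hNd t ht) (hP t ht) i j
        have e : (fun τ => (N τ ^ (k+1)) i j) = fun τ => (N τ * N τ ^ k) i j := by
          funext τ; rw [pow_succ']
        rw [e]
        exact this
      · have e : N t ^ r * (D t * N t ^ k + N t * P t)
            = N t ^ r * D t * N t ^ k + N t ^ (r+1) * P t := by
          rw [pow_succ]; noncomm_ring
        have e2 : r + 1 + k - 1 = k + r := by omega
        have e3 : r + (k + 1) - 1 = k + r := by omega
        rw [e, Matrix.trace_add, Matrix.trace_mul_cycle (N t ^ r) (D t) (N t ^ k),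
          ← pow_add, hPtr t ht (r+1), e2, e3, Nat.cast_add, Nat.cast_one]
        ring
  -- trace (N^k) is constant on Icc
  have hconst : ∀ k : ℕ, ∀ t ∈ Icc, ((N t) ^ k).trace = ((N 0) ^ k).trace := by
    intro k
    obtain ⟨P, hP, hPtr⟩ := key k
    have hq : ∀ t ∈ Icc, HasDerivWithinAt (fun τ => ((N τ) ^ k).trace) 0 Icc t := by
      intro t ht
      have := hasDeriv_trace (hP t ht)
      have htr0 : (P t).trace = 0 := by
        have := hPtr t ht 0
        simpa [htrD t ht] using this
      rwa [htr0] at this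
    have hdiff : DifferentiableOn ℝ (fun τ => ((N τ) ^ k).trace) Icc :=
      fun t ht => (hq t ht).differentiableWithinAt
    have hderiv : ∀ t ∈ Set.Ico (0:ℝ) T,
        derivWithin (fun τ => ((N τ) ^ k).trace) Icc t = 0 := by
      intro t ht
      have ht' : t ∈ Icc := ⟨ht.1, ht.2.le⟩
      exact (hq t ht').derivWithin (uniqueDiffOn_Icc hT t ht')
    exact fun t ht => constant_of_derivWithin_zero hdiff hderiv t ht
  -- power sums of f'(eigenvalues) are constant
  have hinj : Function.Injective (deriv f) := by
    rcases hf' with h | h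
    · exact h.injective
    · exact h.injective
  intro m hm t ht
  have hpsum : ∀ k, 0 < k →
      ∑ i, deriv f ((hAsym t ht).eigenvalues i) ^ k
        = ∑ i, deriv f ((hAsym 0 h0).eigenvalues i) ^ k := by
    intro k _
    have e1 : ((N t) ^ k).trace = ∑ i, deriv f ((hAsym t ht).eigenvalues i) ^ k := by
      have : N t = matFun (deriv f) (hAsym t ht) := (hstat t ht).symm
      rw [this, trace_matFun_pow]
    have e0 : ((N 0) ^ k).trace = ∑ i, deriv f ((hAsym 0 h0).eigenvalues i) ^ k := by
      have : N 0 = matFun (deriv f) (hAsym 0 h0) := (hstat 0 h0).symm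
      rw [this, trace_matFun_pow]
    rw [← e1, ← e0, hconst k t ht]
  -- multiset of eigenvalues is constant
  have hms : Finset.univ.val.map (fun i => deriv f ((hAsym t ht).eigenvalues i))
      = Finset.univ.val.map (fun i => deriv f ((hAsym 0 h0).eigenvalues i)) :=
    multiset_eq_of_psum_eq _ _ hpsum
  have hms' : Finset.univ.val.map (hAsym t ht).eigenvalues
      = Finset.univ.val.map (hAsym 0 h0).eigenvalues := by
    apply Multiset.map_injective hinj
    rw [Multiset.map_map, Multiset.map_map]
    exact hms
  -- conclude
  rw [trace_pow_eq (hAsym t ht) m, trace_pow_eq (hAsym 0 h0) m]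
  have : ∀ (a : Fin n → ℝ), ∑ i, a i ^ m = ((Finset.univ.val.map a).map (fun x => x ^ m)).sum := by
    intro a
    rw [Multiset.map_map]
    rfl
  rw [this, this, hms']
end

section
/- Let n ≥ 1, T > 0, D a real diagonal n×n matrix, and Σ₀, Σ_T ∈ S⁺⁺ⁿ. If there exist c > 0 and t ∈ [0,T] such that log(λ(Σ_T)/c) ≺ 2(T−t)·λ(D) and log(λ(Σ₀)/c) ≺ 2t·λ(−D) (with division by c and log applied entrywise), then Σ_T ∈ R(Σ₀, D, T). -/
open MeasureTheory Matrix

/-- The entries of `v` sorted in decreasing order. -/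
noncomputable def sortDesc {n : ℕ} (v : Fin n → ℝ) : Fin n → ℝ :=
  fun i => v (Tuple.sort v i.rev)

/-- `x` is majorized by `y`. -/
def IsMajorizedBy {n : ℕ} (x y : Fin n → ℝ) : Prop :=
  (∑ i, x i = ∑ i, y i) ∧
  ∀ k : ℕ, k < n →
    ∑ i ∈ Finset.univ.filter (fun i : Fin n => (i : ℕ) < k), sortDesc x i ≤
    ∑ i ∈ Finset.univ.filter (fun i : Fin n => (i : ℕ) < k), sortDesc y i

/-- `ΣT` is reachable from `Σ₀` under isospectral control with spectrum `D` in time `T`. -/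
noncomputable def IsReachable {n : ℕ} (P₀ PT D : Matrix (Fin n) (Fin n) ℝ) (T : ℝ) : Prop :=
  ∃ U S : ℝ → Matrix (Fin n) (Fin n) ℝ,
    (∀ i j, Measurable fun t => U t i j) ∧
    (∀ t ∈ Set.Icc (0:ℝ) T, U t * (U t)ᵀ = 1) ∧
    (∀ t ∈ Set.Icc (0:ℝ) T, (S t).PosDef) ∧
    S 0 = P₀ ∧ S T = PT ∧
    (∀ i j, IntervalIntegrable
        (fun t => ((U t * D * (U t)ᵀ) * S t + S t * (U t * D * (U t)ᵀ)) i j)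
        MeasureTheory.volume 0 T) ∧
    (∀ t ∈ Set.Icc (0:ℝ) T, ∀ i j,
      S t i j = P₀ i j +
        ∫ s in (0:ℝ)..t, ((U s * D * (U s)ᵀ) * S s + S s * (U s * D * (U s)ᵀ)) i j)

/-- prefix sums -/
private def pSum {n : ℕ} (V : Fin n → ℝ) (k : ℕ) : ℝ :=
  ∑ i ∈ Finset.univ.filter (fun i : Fin n => (i : ℕ) < k), V i

private lemma telescope_Ico (g : ℕ → ℝ) (a b : ℕ) (hab : a ≤ b) :
    ∑ k ∈ Finset.Ico a b, (g k - g (k+1)) = g a - g b := by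
  induction b, hab using Nat.le_induction with
  | base => simp
  | succ b hab ih => rw [Finset.sum_Ico_succ_top hab, ih]; ring

private lemma abel_identity {n : ℕ} (C V : Fin n → ℝ) (c' : ℕ → ℝ)
    (hc' : ∀ i : Fin n, c' i = C i) (hcn : c' n = 0) :
    ∑ i, C i * V i = ∑ k ∈ Finset.range n, (c' k - c' (k+1)) * pSum V (k+1) := by
  have : ∀ k, (c' k - c' (k+1)) * pSum V (k+1)
      = ∑ i : Fin n, (if (i : ℕ) ≤ k then (c' k - c' (k+1)) * V i else 0) := by
    intro k
    rw [pSum, Finset.mul_sum, Finset.sum_filter]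
    exact Finset.sum_congr rfl fun i _ => by simp [Nat.lt_succ_iff]
  simp only [this]
  rw [Finset.sum_comm]
  refine Finset.sum_congr rfl fun i _ => ?_
  have h1 : ∑ k ∈ Finset.range n, (if (i : ℕ) ≤ k then (c' k - c' (k+1)) * V i else 0)
      = ∑ k ∈ Finset.Ico (i : ℕ) n, (c' k - c' (k+1)) * V i := by
    rw [← Finset.sum_filter]
    refine Finset.sum_congr ?_ fun _ _ => rfl
    ext k
    simp [Finset.mem_Ico, Finset.mem_filter, Finset.mem_range, and_comm]
  rw [h1, ← Finset.sum_mul, telescope_Ico c' i n i.isLt.le, hcn, hc' i]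
  ring

private lemma sum_mul_le_of_prefix {n : ℕ} (C X Y : Fin n → ℝ) (hC : Antitone C)
    (hk : ∀ k, k < n → pSum X k ≤ pSum Y k) (hn : pSum X n = pSum Y n) :
    ∑ i, C i * X i ≤ ∑ i, C i * Y i := by
  classical
  set c' : ℕ → ℝ := fun k => if h : k < n then C ⟨k, h⟩ else 0 with hc'def
  have hc' : ∀ i : Fin n, c' i = C i := fun i => by simp [hc'def, i.isLt]
  have hcn : c' n = 0 := by simp [hc'def]
  rw [abel_identity C X c' hc' hcn, abel_identity C Y c' hc' hcn]
  refine Finset.sum_le_sum fun k hk' => ?_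
  rcases lt_or_eq_of_le (Nat.succ_le_of_lt (Finset.mem_range.mp hk')) with hlt | heq
  · refine mul_le_mul_of_nonneg_left (hk _ hlt) ?_
    have hkn : k < n := Nat.lt_of_succ_lt hlt
    have : C ⟨k+1, hlt⟩ ≤ C ⟨k, hkn⟩ := hC (by simp [Fin.le_def])
    simp only [hc'def, dif_pos hlt, dif_pos hkn]
    linarith
  · rw [show pSum X (k+1) = pSum Y (k+1) from heq ▸ hn]

private lemma sortDesc_antitone {n : ℕ} (v : Fin n → ℝ) : Antitone (sortDesc v) := by
  intro i j hij
  exact Tuple.monotone_sort v (Fin.rev_le_rev.mpr hij)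

private lemma sum_sortDesc {n : ℕ} (v : Fin n → ℝ) : ∑ i, sortDesc v i = ∑ i, v i := by
  exact Equiv.sum_comp (Fin.revPerm.trans (Tuple.sort v)) v

private lemma pSum_full {n : ℕ} (v : Fin n → ℝ) : pSum v n = ∑ i, v i := by
  rw [pSum]
  exact Finset.sum_congr (by simp [Finset.filter_true_of_mem, Fin.isLt]) fun _ _ => rfl

private lemma sum_mul_sortDesc {n : ℕ} (c v : Fin n → ℝ) :
    ∑ i, sortDesc c i * sortDesc v i
      = ∑ i, c i * v ((Tuple.sort v) ((Tuple.sort c)⁻¹ i)) := by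
  rw [← Equiv.sum_comp (Fin.revPerm.trans (Tuple.sort c))
    (fun i => c i * v ((Tuple.sort v) ((Tuple.sort c)⁻¹ i)))]
  refine Finset.sum_congr rfl fun k _ => ?_
  simp [sortDesc]

private lemma sum_mul_le_sorted {n : ℕ} (c x : Fin n → ℝ) :
    ∑ i, c i * x i ≤ ∑ i, sortDesc c i * sortDesc x i := by
  rw [sum_mul_sortDesc c x]
  set π : Equiv.Perm (Fin n) := ((Tuple.sort c)⁻¹ : Equiv.Perm (Fin n)).trans (Tuple.sort x)
    with hπ
  have hmono : Monovary c (x ∘ π) := by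
    intro i j hlt
    have h1 : ((Tuple.sort c)⁻¹ i : Fin n) < (Tuple.sort c)⁻¹ j := by
      by_contra hle
      push_neg at hle
      exact absurd (Tuple.monotone_sort x (Fin.le_def.mpr (Fin.le_def.mp hle))) (not_le.mpr hlt)
    have := Tuple.monotone_sort c (le_of_lt h1)
    simpa using this
  have h := hmono.sum_smul_comp_perm_le_sum_smul (σ := π⁻¹)
  simp only [smul_eq_mul, Function.comp_apply, Equiv.Perm.inv_def, Equiv.apply_symm_apply] at h
  exact le_of_le_of_eq h (Finset.sum_congr rfl fun i _ => by simp [hπ])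

private lemma weights_of_majorized {n : ℕ} {x y : Fin n → ℝ} (h : IsMajorizedBy x y) :
    ∃ w : Equiv.Perm (Fin n) → ℝ, (∀ σ, 0 ≤ w σ) ∧ (∑ σ, w σ) = 1 ∧
      ∀ i, x i = ∑ σ : Equiv.Perm (Fin n), w σ * y (σ i) := by
  classical
  set Φ : (Equiv.Perm (Fin n) → ℝ) →ₗ[ℝ] (Fin n → ℝ) :=
    { toFun := fun w i => ∑ σ : Equiv.Perm (Fin n), w σ * y (σ i)
      map_add' := fun a b => by
        funext i; simp [add_mul, Finset.sum_add_distrib]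
      map_smul' := fun r a => by
        funext i; simp [Finset.mul_sum, mul_assoc] } with hΦ
  have hΦapp : ∀ w i, Φ w i = ∑ σ : Equiv.Perm (Fin n), w σ * y (σ i) := fun _ _ => rfl
  suffices hx : x ∈ ⇑Φ '' stdSimplex ℝ (Equiv.Perm (Fin n)) by
    obtain ⟨w, hw, hwx⟩ := hx
    exact ⟨w, hw.1, hw.2, fun i => by rw [← hwx, hΦapp]⟩
  by_contra hx
  have hKc : Convex ℝ (⇑Φ '' stdSimplex ℝ (Equiv.Perm (Fin n))) :=
    (convex_stdSimplex ℝ _).linear_image Φ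
  have hKcl : IsClosed (⇑Φ '' stdSimplex ℝ (Equiv.Perm (Fin n))) :=
    ((isCompact_stdSimplex ℝ _).image Φ.continuous_of_finiteDimensional).isClosed
  obtain ⟨f, u, hfK, hfx⟩ := geometric_hahn_banach_closed_point hKc hKcl hx
  set c : Fin n → ℝ := fun i => f (fun j => if i = j then 1 else 0) with hc
  have hf : ∀ z : Fin n → ℝ, f z = ∑ i, z i * c i := by
    intro z
    conv_lhs => rw [pi_eq_sum_univ z]
    rw [map_sum]
    exact Finset.sum_congr rfl fun i _ => by rw [f.map_smul]; rfl
  have hyK : ∀ σ : Equiv.Perm (Fin n), (fun i => y (σ i)) ∈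
      ⇑Φ '' stdSimplex ℝ (Equiv.Perm (Fin n)) := by
    intro σ
    refine ⟨fun τ => if τ = σ then 1 else 0, ⟨fun τ => by positivity, by simp⟩, ?_⟩
    funext i
    rw [hΦapp]
    simp [ite_mul]
  set σy : Equiv.Perm (Fin n) := ((Tuple.sort c)⁻¹ : Equiv.Perm (Fin n)).trans (Tuple.sort y)
  have h5 : f (fun i => y (σy i)) < u := hfK _ (hyK σy)
  have h1 : ∑ i, c i * x i ≤ ∑ i, sortDesc c i * sortDesc x i := sum_mul_le_sorted c x
  have h2 : ∑ i, sortDesc c i * sortDesc x i ≤ ∑ i, sortDesc c i * sortDesc y i := by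
    refine sum_mul_le_of_prefix _ _ _ (sortDesc_antitone c) h.2 ?_
    rw [pSum_full, pSum_full, sum_sortDesc, sum_sortDesc]
    exact h.1
  have h3 : ∑ i, sortDesc c i * sortDesc y i = ∑ i, c i * y (σy i) := sum_mul_sortDesc c y
  have h4 : f x = ∑ i, c i * x i := by
    rw [hf x]; exact Finset.sum_congr rfl fun i _ => mul_comm _ _
  have h6 : f (fun i => y (σy i)) = ∑ i, c i * y (σy i) := by
    rw [hf]; exact Finset.sum_congr rfl fun i _ => mul_comm _ _
  have := h6 ▸ h5
  have := h4 ▸ hfx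
  linarith

private def permMat {n : ℕ} (σ : Equiv.Perm (Fin n)) : Matrix (Fin n) (Fin n) ℝ :=
  Matrix.of fun i j => if j = σ i then 1 else 0

private lemma permMat_mul_transpose {n : ℕ} (σ : Equiv.Perm (Fin n)) :
    permMat σ * (permMat σ)ᵀ = 1 := by
  ext i k
  rw [Matrix.mul_apply]
  simp [permMat, Matrix.one_apply, ite_mul, Finset.sum_ite_eq' Finset.univ (σ i),
    Equiv.apply_eq_iff_eq, eq_comm (a := i)]

private lemma permMat_conj_diag {n : ℕ} (σ : Equiv.Perm (Fin n)) (d : Fin n → ℝ) :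
    permMat σ * Matrix.diagonal d * (permMat σ)ᵀ = Matrix.diagonal (fun i => d (σ i)) := by
  ext i k
  rw [Matrix.mul_apply]
  simp only [permMat, Matrix.mul_diagonal, Matrix.transpose_apply, Matrix.of_apply, ite_mul,
    one_mul, zero_mul, mul_ite, mul_one, mul_zero]
  rw [Finset.sum_ite_eq' Finset.univ (σ k) (fun j => if j = σ i then d j else 0)]
  by_cases hik : i = k
  · simp [hik, Matrix.diagonal_apply_eq]
  · have : ¬ (σ k = σ i) := fun hc => hik (σ.injective hc.symm)
    simp [this, Matrix.diagonal_apply_ne _ hik]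

private lemma conj_entry {n : ℕ} (V : Matrix (Fin n) (Fin n) ℝ) (w : Fin n → ℝ) (i j : Fin n) :
    (V * Matrix.diagonal w * Vᵀ) i j = ∑ m, V i m * w m * V j m := by
  rw [Matrix.mul_apply]
  exact Finset.sum_congr rfl fun m _ => by rw [Matrix.mul_diagonal, Matrix.transpose_apply]

private lemma conj_mul_conj {n : ℕ} (V : Matrix (Fin n) (Fin n) ℝ) (hVtV : Vᵀ * V = 1)
    (p q : Fin n → ℝ) :
    (V * Matrix.diagonal p * Vᵀ) * (V * Matrix.diagonal q * Vᵀ)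
      = V * Matrix.diagonal (fun i => p i * q i) * Vᵀ := by
  rw [← Matrix.diagonal_mul_diagonal]
  rw [Matrix.mul_assoc (V * Matrix.diagonal p) Vᵀ _, ← Matrix.mul_assoc Vᵀ,
    ← Matrix.mul_assoc Vᵀ V, hVtV, Matrix.one_mul, Matrix.mul_assoc V,
    ← Matrix.mul_assoc (Matrix.diagonal p), ← Matrix.mul_assoc V,
    ← Matrix.mul_assoc V]

private lemma posDef_conj {n : ℕ} {V : Matrix (Fin n) (Fin n) ℝ} (hV : V * Vᵀ = 1)
    {w : Fin n → ℝ} (hw : ∀ i, 0 < w i) : (V * Matrix.diagonal w * Vᵀ).PosDef := by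
  refine Matrix.PosDef.of_dotProduct_mulVec_pos ?_ ?_
  · show _ = _
    have : ∀ M : Matrix (Fin n) (Fin n) ℝ, Mᴴ = Mᵀ := fun M => by
      ext a b; simp [Matrix.conjTranspose_apply, star_trivial]
    rw [this]
    simp [Matrix.transpose_mul, Matrix.transpose_transpose, Matrix.diagonal_transpose,
      Matrix.mul_assoc]
  · intro z hz
    have hy : Vᵀ *ᵥ z ≠ 0 := by
      intro h0
      apply hz
      have : V *ᵥ (Vᵀ *ᵥ z) = z := by rw [Matrix.mulVec_mulVec, hV, Matrix.one_mulVec]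
      rw [h0, Matrix.mulVec_zero] at this
      exact this.symm
    have hsplit : (V * Matrix.diagonal w * Vᵀ) *ᵥ z
        = V *ᵥ (Matrix.diagonal w *ᵥ (Vᵀ *ᵥ z)) := by
      rw [Matrix.mulVec_mulVec, Matrix.mulVec_mulVec]
    have hvm : z ᵥ* V = Vᵀ *ᵥ z := by
      rw [← Matrix.transpose_transpose V, Matrix.vecMul_transpose, Matrix.transpose_transpose]
    have hrw : star z ⬝ᵥ ((V * Matrix.diagonal w * Vᵀ) *ᵥ z)
        = ∑ i, w i * ((Vᵀ *ᵥ z) i)^2 := by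
      rw [show star z = z from star_trivial z, hsplit, Matrix.dotProduct_mulVec, hvm,
        dotProduct]
      exact Finset.sum_congr rfl fun i _ => by
        rw [Matrix.mulVec_diagonal]; ring
    rw [hrw]
    obtain ⟨i, hi⟩ := Function.ne_iff.mp hy
    refine Finset.sum_pos' (fun i _ => mul_nonneg (hw i).le (sq_nonneg _))
      ⟨i, Finset.mem_univ i, mul_pos (hw i) (pow_two_pos_of_ne_zero hi)⟩

private lemma isReachable_step {n : ℕ} {D : Matrix (Fin n) (Fin n) ℝ} (hD : D.IsDiag)
    {V : Matrix (Fin n) (Fin n) ℝ} (hV : V * Vᵀ = 1) (s : ℝ) (hs : 0 ≤ s)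
    (σ : Equiv.Perm (Fin n)) (μ : Fin n → ℝ) (hμ : ∀ i, 0 < μ i) :
    IsReachable (V * Matrix.diagonal μ * Vᵀ)
      (V * Matrix.diagonal (fun i => μ i * Real.exp (2 * D (σ i) (σ i) * s)) * Vᵀ) D s := by
  classical
  have hVtV : Vᵀ * V = 1 := mul_eq_one_comm.mp hV
  set d : Fin n → ℝ := fun i => D (σ i) (σ i) with hd
  set U₀ : Matrix (Fin n) (Fin n) ℝ := V * permMat σ with hU₀
  set Sf : ℝ → Matrix (Fin n) (Fin n) ℝ :=
    fun τ => V * Matrix.diagonal (fun i => μ i * Real.exp (2 * d i * τ)) * Vᵀ with hSf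
  have hUU : U₀ * U₀ᵀ = 1 := by
    rw [hU₀, Matrix.transpose_mul, Matrix.mul_assoc, ← Matrix.mul_assoc (permMat σ),
      permMat_mul_transpose, Matrix.one_mul, hV]
  have hconj : permMat σ * D * (permMat σ)ᵀ = Matrix.diagonal d := by
    conv_lhs => rw [← hD.diagonal_diag]
    exact permMat_conj_diag σ D.diag
  have hA : U₀ * D * U₀ᵀ = V * Matrix.diagonal d * Vᵀ := by
    rw [hU₀, Matrix.transpose_mul]
    calc V * permMat σ * D * ((permMat σ)ᵀ * Vᵀ)
        = V * (permMat σ * D * (permMat σ)ᵀ) * Vᵀ := by simp only [Matrix.mul_assoc]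
      _ = V * Matrix.diagonal d * Vᵀ := by rw [hconj]
  have hkey : ∀ τ : ℝ, (U₀ * D * U₀ᵀ) * Sf τ + Sf τ * (U₀ * D * U₀ᵀ)
      = V * Matrix.diagonal (fun i => 2 * d i * (μ i * Real.exp (2 * d i * τ))) * Vᵀ := by
    intro τ
    rw [hA, hSf]
    rw [conj_mul_conj V hVtV, conj_mul_conj V hVtV, ← Matrix.add_mul, ← Matrix.mul_add]
    congr 2
    ext a b
    by_cases hab : a = b
    · subst hab; simp [Matrix.diagonal_apply_eq]; ring
    · simp [Matrix.diagonal_apply_ne _ hab]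
  have hentry : ∀ (w : Fin n → ℝ) i j,
      (V * Matrix.diagonal w * Vᵀ) i j = ∑ m, V i m * w m * V j m := conj_entry V
  refine ⟨fun _ => U₀, Sf, fun i j => measurable_const, fun t _ => hUU, ?_, ?_, ?_, ?_, ?_⟩
  · intro t _
    exact posDef_conj hV (fun i => mul_pos (hμ i) (Real.exp_pos _))
  · rw [hSf]
    beta_reduce
    congr 2
    funext i
    simp
  · rw [hSf]
  · intro i j
    apply Continuous.intervalIntegrable
    have : (fun t => ((U₀ * D * U₀ᵀ) * Sf t + Sf t * (U₀ * D * U₀ᵀ)) i j)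
        = fun t => ∑ m, V i m * (2 * d m * (μ m * Real.exp (2 * d m * t))) * V j m := by
      funext t
      rw [hkey t, hentry]
    show Continuous fun t => ((U₀ * D * U₀ᵀ) * Sf t + Sf t * (U₀ * D * U₀ᵀ)) i j
    rw [this]
    refine continuous_finset_sum _ fun m _ => ?_
    fun_prop
  · intro t ht i j
    set g : ℝ → ℝ := fun τ => ∑ m, V i m * (2 * d m * (μ m * Real.exp (2 * d m * τ))) * V j m
      with hg
    have hfun : (fun τ => (((fun _ : ℝ => U₀) τ * D * ((fun _ : ℝ => U₀) τ)ᵀ) * Sf τ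
          + Sf τ * ((fun _ : ℝ => U₀) τ * D * ((fun _ : ℝ => U₀) τ)ᵀ)) i j) = g := by
      funext τ
      show (U₀ * D * U₀ᵀ * Sf τ + Sf τ * (U₀ * D * U₀ᵀ)) i j = g τ
      rw [hkey τ, hentry, hg]
    have hderiv : ∀ τ : ℝ, HasDerivAt (fun τ => Sf τ i j) (g τ) τ := by
      intro τ
      have hF : (fun τ => Sf τ i j)
          = fun τ => ∑ m, V i m * (μ m * Real.exp (2 * d m * τ)) * V j m := by
        funext τ'
        simp only [hSf]
        rw [hentry]
      rw [hF, hg]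
      refine HasDerivAt.fun_sum fun m _ => ?_
      have h1 : HasDerivAt (fun τ : ℝ => 2 * d m * τ) (2 * d m) τ := by
        simpa using (hasDerivAt_id τ).const_mul (2 * d m)
      have h2 := ((h1.exp.const_mul (μ m)).const_mul (V i m)).mul_const (V j m)
      exact h2.congr_deriv (by ring)
    have hcont : Continuous g := by
      rw [hg]
      refine continuous_finset_sum _ fun m _ => ?_
      fun_prop
    have hint : ∫ τ in (0:ℝ)..t, g τ = Sf t i j - Sf 0 i j :=
      intervalIntegral.integral_eq_sub_of_hasDerivAt (fun τ _ => hderiv τ)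
        (hcont.intervalIntegrable 0 t)
    have h0 : Sf 0 i j = (V * Matrix.diagonal μ * Vᵀ) i j := by
      simp only [hSf]
      rw [hentry, hentry]
      refine Finset.sum_congr rfl fun m _ => ?_
      simp
    rw [hfun, hint, h0]
    ring

private lemma isReachable_trans {n : ℕ} {D P Q R : Matrix (Fin n) (Fin n) ℝ} {s₁ s₂ : ℝ}
    (hs₁ : 0 ≤ s₁) (hs₂ : 0 ≤ s₂)
    (h₁ : IsReachable P Q D s₁) (h₂ : IsReachable Q R D s₂) :
    IsReachable P R D (s₁ + s₂) := by
  classical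
  obtain ⟨U₁, S₁, hU₁m, hU₁o, hS₁p, hS₁0, hS₁T, hI₁, hE₁⟩ := h₁
  obtain ⟨U₂, S₂, hU₂m, hU₂o, hS₂p, hS₂0, hS₂T, hI₂, hE₂⟩ := h₂
  set U : ℝ → Matrix (Fin n) (Fin n) ℝ :=
    fun τ => if τ ≤ s₁ then U₁ τ else U₂ (τ - s₁) with hU
  set S : ℝ → Matrix (Fin n) (Fin n) ℝ :=
    fun τ => if τ ≤ s₁ then S₁ τ else S₂ (τ - s₁) with hS
  have hmem₁ : ∀ τ, 0 ≤ τ → τ ≤ s₁ → τ ∈ Set.Icc (0:ℝ) s₁ := fun τ h1 h2 => ⟨h1, h2⟩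
  have hmem₂ : ∀ τ, ¬ τ ≤ s₁ → τ ≤ s₁ + s₂ → τ - s₁ ∈ Set.Icc (0:ℝ) s₂ := fun τ h1 h2 =>
    ⟨by linarith [not_le.mp h1], by linarith⟩
  -- the two integrands
  set f : ℝ → Matrix (Fin n) (Fin n) ℝ :=
    fun τ => (U τ * D * (U τ)ᵀ) * S τ + S τ * (U τ * D * (U τ)ᵀ) with hf
  set f₁ : ℝ → Matrix (Fin n) (Fin n) ℝ :=
    fun τ => (U₁ τ * D * (U₁ τ)ᵀ) * S₁ τ + S₁ τ * (U₁ τ * D * (U₁ τ)ᵀ) with hf₁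
  set f₂ : ℝ → Matrix (Fin n) (Fin n) ℝ :=
    fun τ => (U₂ τ * D * (U₂ τ)ᵀ) * S₂ τ + S₂ τ * (U₂ τ * D * (U₂ τ)ᵀ) with hf₂
  have hfeq₁ : ∀ τ, τ ≤ s₁ → f τ = f₁ τ := by
    intro τ hτ
    simp only [hf, hf₁, hU, hS, if_pos hτ]
  have hfeq₂ : ∀ τ, ¬ τ ≤ s₁ → f τ = f₂ (τ - s₁) := by
    intro τ hτ
    simp only [hf, hf₂, hU, hS, if_neg hτ]
  have hint1 : ∀ i j, IntervalIntegrable (fun τ => f τ i j) volume 0 s₁ := by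
    intro i j
    rw [intervalIntegrable_iff, Set.uIoc_of_le hs₁]
    refine (((intervalIntegrable_iff).mp (hI₁ i j)).mono_set
      (by rw [Set.uIoc_of_le hs₁])).congr_fun ?_ measurableSet_Ioc
    intro τ hτ
    exact congrFun (congrFun (hfeq₁ τ hτ.2).symm i) j
  have hint2 : ∀ i j, IntervalIntegrable (fun τ => f τ i j) volume s₁ (s₁ + s₂) := by
    intro i j
    rw [intervalIntegrable_iff, Set.uIoc_of_le (by linarith)]
    have h2 := (hI₂ i j).comp_sub_right s₁
    rw [zero_add, intervalIntegrable_iff, Set.uIoc_of_le (by linarith), add_comm s₂ s₁] at h2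
    refine h2.congr_fun ?_ measurableSet_Ioc
    intro τ hτ
    exact congrFun (congrFun (hfeq₂ τ (not_le.mpr hτ.1)).symm i) j
  refine ⟨U, S, ?_, ?_, ?_, ?_, ?_, ?_, ?_⟩
  · intro i j
    have : (fun t => U t i j) = fun t => if t ≤ s₁ then U₁ t i j else U₂ (t - s₁) i j := by
      funext t
      simp only [hU]
      by_cases hc : t ≤ s₁ <;> simp [hc]
    rw [this]
    exact Measurable.ite (measurableSet_Iic (a := s₁)) (hU₁m i j)
      ((hU₂m i j).comp (measurable_id.sub measurable_const))
  · intro τ hτ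
    by_cases hc : τ ≤ s₁
    · simp only [hU, if_pos hc]
      exact hU₁o τ (hmem₁ τ hτ.1 hc)
    · simp only [hU, if_neg hc]
      exact hU₂o _ (hmem₂ τ hc hτ.2)
  · intro τ hτ
    by_cases hc : τ ≤ s₁
    · simp only [hS, if_pos hc]
      exact hS₁p τ (hmem₁ τ hτ.1 hc)
    · simp only [hS, if_neg hc]
      exact hS₂p _ (hmem₂ τ hc hτ.2)
  · simp only [hS, if_pos hs₁, hS₁0]
  · by_cases hc : s₁ + s₂ ≤ s₁
    · have hz : s₂ = 0 := le_antisymm (by linarith) hs₂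
      subst hz
      rw [add_zero]
      simp only [hS, if_pos (le_refl s₁)]
      rw [hS₁T, ← hS₂0, hS₂T]
    · simp only [hS, if_neg hc]
      rw [show s₁ + s₂ - s₁ = s₂ from by ring, hS₂T]
  · intro i j
    exact (hint1 i j).trans (hint2 i j)
  · intro t ht i j
    by_cases hc : t ≤ s₁
    · have heq : ∫ τ in (0:ℝ)..t, f τ i j = ∫ τ in (0:ℝ)..t, f₁ τ i j := by
        refine intervalIntegral.integral_congr fun τ hτ => ?_
        rw [Set.uIcc_of_le ht.1] at hτ
        exact congrFun (congrFun (hfeq₁ τ (le_trans hτ.2 hc)) i) j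
      show S t i j = P i j + ∫ τ in (0:ℝ)..t, f τ i j
      rw [heq]
      simp only [hS, if_pos hc]
      exact hE₁ t ⟨ht.1, hc⟩ i j
    · have h1 : ∫ τ in (0:ℝ)..s₁, f τ i j = Q i j - P i j := by
        have heq : ∫ τ in (0:ℝ)..s₁, f τ i j = ∫ τ in (0:ℝ)..s₁, f₁ τ i j := by
          refine intervalIntegral.integral_congr fun τ hτ => ?_
          rw [Set.uIcc_of_le hs₁] at hτ
          exact congrFun (congrFun (hfeq₁ τ hτ.2) i) j
        rw [heq, ← hS₁T]
        have := hE₁ s₁ ⟨hs₁, le_refl s₁⟩ i j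
        linarith [this]
      have h2 : ∫ τ in s₁..t, f τ i j = S₂ (t - s₁) i j - Q i j := by
        have heq : ∫ τ in s₁..t, f τ i j = ∫ τ in s₁..t, f₂ (τ - s₁) i j := by
          refine intervalIntegral.integral_congr_ae ?_
          refine Filter.Eventually.of_forall fun τ hτ => ?_
          rw [Set.uIoc_of_le (le_of_not_ge hc)] at hτ
          exact congrFun (congrFun (hfeq₂ τ (not_le.mpr hτ.1)) i) j
        rw [heq, intervalIntegral.integral_comp_sub_right (fun τ => f₂ τ i j) s₁, sub_self]
        have h3 := hE₂ (t - s₁) ⟨by linarith [not_le.mp hc], by linarith [ht.2]⟩ i j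
        have hconv : ∫ x in (0:ℝ)..(t-s₁), f₂ x i j
            = ∫ τ in (0:ℝ)..(t-s₁), (U₂ τ * D * (U₂ τ)ᵀ * S₂ τ + S₂ τ * (U₂ τ * D * (U₂ τ)ᵀ)) i j := by
          refine intervalIntegral.integral_congr fun τ _ => ?_
          simp only [hf₂]
        rw [hconv]
        linarith [h3]
      have hsplit : ∫ τ in (0:ℝ)..t, f τ i j
          = (∫ τ in (0:ℝ)..s₁, f τ i j) + ∫ τ in s₁..t, f τ i j := by
        refine (intervalIntegral.integral_add_adjacent_intervals (hint1 i j) ?_).symm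
        refine (hint2 i j).mono_set ?_
        rw [Set.uIcc_of_le (by linarith [not_le.mp hc] : s₁ ≤ t),
          Set.uIcc_of_le (by linarith : s₁ ≤ s₁ + s₂)]
        exact Set.Icc_subset_Icc (le_refl _) ht.2
      show S t i j = P i j + ∫ τ in (0:ℝ)..t, f τ i j
      simp only [hS, if_neg hc]
      rw [hsplit, h1, h2]
      ring

private lemma isReachable_chain {n : ℕ} {D : Matrix (Fin n) (Fin n) ℝ} (hD : D.IsDiag)
    {V : Matrix (Fin n) (Fin n) ℝ} (hV : V * Vᵀ = 1)
    (L : List (ℝ × Equiv.Perm (Fin n))) :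
    (∀ p ∈ L, 0 ≤ p.1) → ∀ μ : Fin n → ℝ, (∀ i, 0 < μ i) →
    IsReachable (V * Matrix.diagonal μ * Vᵀ)
      (V * Matrix.diagonal (fun i => μ i * Real.exp
          ((L.map (fun p => 2 * D (p.2 i) (p.2 i) * p.1)).sum)) * Vᵀ)
      D ((L.map Prod.fst).sum) := by
  induction L with
  | nil =>
    intro _ μ hμ
    simpa using isReachable_step hD hV 0 le_rfl 1 μ hμ
  | cons p L ih =>
    intro hL μ hμ
    have h1 := isReachable_step hD hV p.1 (hL p (List.mem_cons_self)) p.2 μ hμ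
    set μ' : Fin n → ℝ := fun i => μ i * Real.exp (2 * D (p.2 i) (p.2 i) * p.1) with hμ'def
    have hμ' : ∀ i, 0 < μ' i := fun i => mul_pos (hμ i) (Real.exp_pos _)
    have h2 := ih (fun q hq => hL q (List.mem_cons_of_mem _ hq)) μ' hμ'
    have hsum0 : (0:ℝ) ≤ (L.map Prod.fst).sum := by
      refine List.sum_nonneg fun x hx => ?_
      obtain ⟨q, hq, rfl⟩ := List.mem_map.mp hx
      exact hL q (List.mem_cons_of_mem _ hq)
    have h3 := isReachable_trans (hL p (List.mem_cons_self)) hsum0 h1 h2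
    have hmat : (fun i => μ' i * Real.exp
          ((L.map (fun q => 2 * D (q.2 i) (q.2 i) * q.1)).sum))
        = fun i => μ i * Real.exp
          (((p :: L).map (fun q => 2 * D (q.2 i) (q.2 i) * q.1)).sum) := by
      funext i
      rw [List.map_cons, List.sum_cons, Real.exp_add, hμ'def]
      ring
    have htime : ((p :: L).map Prod.fst).sum = p.1 + (L.map Prod.fst).sum := by
      rw [List.map_cons, List.sum_cons]
    rw [htime, ← hmat]
    exact h3

private lemma isReachable_weights {n : ℕ} {D : Matrix (Fin n) (Fin n) ℝ} (hD : D.IsDiag)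
    {V : Matrix (Fin n) (Fin n) ℝ} (hV : V * Vᵀ = 1)
    (μ : Fin n → ℝ) (hμ : ∀ i, 0 < μ i) (s : ℝ) (hs : 0 ≤ s)
    (w : Equiv.Perm (Fin n) → ℝ) (hw : ∀ σ, 0 ≤ w σ) (hw1 : ∑ σ, w σ = 1) :
    IsReachable (V * Matrix.diagonal μ * Vᵀ)
      (V * Matrix.diagonal (fun i => μ i * Real.exp
          (∑ σ : Equiv.Perm (Fin n), 2 * D (σ i) (σ i) * (s * w σ))) * Vᵀ) D s := by
  classical
  set L : List (ℝ × Equiv.Perm (Fin n)) :=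
    (Finset.univ.toList (α := Equiv.Perm (Fin n))).map (fun σ => (s * w σ, σ)) with hL
  have hpos : ∀ p ∈ L, 0 ≤ p.1 := by
    intro p hp
    obtain ⟨σ, _, rfl⟩ := List.mem_map.mp hp
    exact mul_nonneg hs (hw σ)
  have h := isReachable_chain hD hV L hpos μ hμ
  have htime : (L.map Prod.fst).sum = s := by
    rw [hL, List.map_map, Finset.sum_map_toList]
    rw [show ((Prod.fst ∘ fun σ : Equiv.Perm (Fin n) => (s * w σ, σ)) = fun σ => s * w σ)
      from rfl]
    rw [← Finset.mul_sum, hw1, mul_one]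
  have hexp : (fun i => μ i * Real.exp
        ((L.map (fun q => 2 * D (q.2 i) (q.2 i) * q.1)).sum))
      = fun i => μ i * Real.exp
        (∑ σ : Equiv.Perm (Fin n), 2 * D (σ i) (σ i) * (s * w σ)) := by
    funext i
    rw [hL, List.map_map, Finset.sum_map_toList]
    rfl
  rw [htime, hexp] at h
  exact h

private lemma star_eq_transpose_real {n : ℕ} (M : Matrix (Fin n) (Fin n) ℝ) : star M = Mᵀ := by
  ext a b
  simp [Matrix.star_apply, Matrix.transpose_apply]


/-- Theorem 17, sufficiency via an isotropic intermediate state.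
If there exist `c > 0` and `t ∈ [0,T]` with `log(λ(ΣT)/c) ≺ 2(T−t)·λ(D)` and
`log(λ(Σ₀)/c) ≺ 2t·λ(−D)`, then `ΣT ∈ R(Σ₀, D, T)`. -/
theorem isReachable_of_majorizations_through_identity
    {n : ℕ} (hn : 1 ≤ n) (T : ℝ) (hT : 0 < T)
    (D P₀ PT : Matrix (Fin n) (Fin n) ℝ) (hD : D.IsDiag)
    (hP₀ : P₀.PosDef) (hPT : PT.PosDef)
    (h : ∃ c : ℝ, 0 < c ∧ ∃ t ∈ Set.Icc (0:ℝ) T,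
      IsMajorizedBy (fun i => Real.log (hPT.1.eigenvalues i / c))
        (fun i => 2 * (T - t) * D i i) ∧
      IsMajorizedBy (fun i => Real.log (hP₀.1.eigenvalues i / c))
        (fun i => 2 * t * (-(D i i)))) :
    IsReachable P₀ PT D T := by
  classical
  obtain ⟨c, hc, t, ⟨ht0, htT⟩, hmT, hm0⟩ := h
  set V₀ : Matrix (Fin n) (Fin n) ℝ := (hP₀.1.eigenvectorUnitary : Matrix (Fin n) (Fin n) ℝ)
    with hV₀def
  set VT : Matrix (Fin n) (Fin n) ℝ := (hPT.1.eigenvectorUnitary : Matrix (Fin n) (Fin n) ℝ)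
    with hVTdef
  have hV₀o : V₀ * V₀ᵀ = 1 := by
    rw [← star_eq_transpose_real]
    exact Matrix.mem_unitaryGroup_iff.mp hP₀.1.eigenvectorUnitary.2
  have hVTo : VT * VTᵀ = 1 := by
    rw [← star_eq_transpose_real]
    exact Matrix.mem_unitaryGroup_iff.mp hPT.1.eigenvectorUnitary.2
  have hspec₀ : P₀ = V₀ * Matrix.diagonal (hP₀.1.eigenvalues) * V₀ᵀ := by
    have hsp := hP₀.1.spectral_theorem
    rw [Unitary.conjStarAlgAut_apply, star_eq_transpose_real] at hsp
    exact hsp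
  have hspecT : PT = VT * Matrix.diagonal (hPT.1.eigenvalues) * VTᵀ := by
    have hsp := hPT.1.spectral_theorem
    rw [Unitary.conjStarAlgAut_apply, star_eq_transpose_real] at hsp
    exact hsp
  obtain ⟨w0, hw0, hw0sum, hw0eq⟩ := weights_of_majorized hm0
  obtain ⟨wT, hwT, hwTsum, hwTeq⟩ := weights_of_majorized hmT
  have hlam0 : ∀ i, 0 < hP₀.1.eigenvalues i := fun i => hP₀.eigenvalues_pos i
  have hlamT : ∀ i, 0 < hPT.1.eigenvalues i := fun i => hPT.eigenvalues_pos i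
  -- phase 1
  have phase1 := isReachable_weights hD hV₀o (hP₀.1.eigenvalues) hlam0 t ht0 w0 hw0 hw0sum
  have hdiag1 : (fun i => hP₀.1.eigenvalues i * Real.exp
        (∑ σ : Equiv.Perm (Fin n), 2 * D (σ i) (σ i) * (t * w0 σ)))
      = fun _ => c := by
    funext i
    have hx : Real.log (hP₀.1.eigenvalues i / c)
        = ∑ σ : Equiv.Perm (Fin n), w0 σ * (2 * t * (-(D (σ i) (σ i)))) := hw0eq i
    have hsum : (∑ σ : Equiv.Perm (Fin n), 2 * D (σ i) (σ i) * (t * w0 σ))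
        = - Real.log (hP₀.1.eigenvalues i / c) := by
      rw [hx, ← Finset.sum_neg_distrib]
      exact Finset.sum_congr rfl fun σ _ => by ring
    rw [hsum, Real.exp_neg, Real.exp_log (div_pos (hlam0 i) hc)]
    field_simp
    exact div_self (ne_of_gt (hlam0 i))
  rw [hdiag1] at phase1
  have hMc : ∀ (V : Matrix (Fin n) (Fin n) ℝ), V * Vᵀ = 1 →
      V * Matrix.diagonal (fun _ => c) * Vᵀ = Matrix.diagonal (fun _ : Fin n => c) := by
    intro V hV
    rw [← Matrix.smul_one_eq_diagonal, Matrix.mul_smul, Matrix.smul_mul, Matrix.mul_one, hV]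
  rw [hMc V₀ hV₀o, ← hspec₀] at phase1
  -- phase 2
  have phase2 := isReachable_weights hD hVTo (fun _ => c) (fun _ => hc) (T - t)
    (by linarith) wT hwT hwTsum
  have hdiag2 : (fun i => (fun _ : Fin n => c) i * Real.exp
        (∑ σ : Equiv.Perm (Fin n), 2 * D (σ i) (σ i) * ((T - t) * wT σ)))
      = hPT.1.eigenvalues := by
    funext i
    have hx : Real.log (hPT.1.eigenvalues i / c)
        = ∑ σ : Equiv.Perm (Fin n), wT σ * (2 * (T - t) * D (σ i) (σ i)) := hwTeq i
    have hsum : (∑ σ : Equiv.Perm (Fin n), 2 * D (σ i) (σ i) * ((T - t) * wT σ))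
        = Real.log (hPT.1.eigenvalues i / c) := by
      rw [hx]
      exact Finset.sum_congr rfl fun σ _ => by ring
    show c * Real.exp _ = _
    rw [hsum, Real.exp_log (div_pos (hlamT i) hc)]
    field_simp
  rw [hdiag2, hMc VT hVTo, ← hspecT] at phase2
  have hfinal := isReachable_trans ht0 (by linarith : (0:ℝ) ≤ T - t) phase1 phase2
  rwa [show t + (T - t) = T from by ring] at hfinal
end

section
/- Let n ≥ 1 and let D be a nonzero real diagonal n×n matrix with tr(D) = 0. For any Σ₁, Σ₂ ∈ S⁺⁺ⁿ with det(Σ₁) = det(Σ₂), there exists T > 0 such that Σ₂ ∈ R(Σ₁, D, T), i.e., Σ₂ is reachable from Σ₁ under isospectral control with spectrum D in some finite time. -/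
open MeasureTheory Matrix

namespace IsoCtrlAux

variable {n : ℕ}

lemma ctr (M : Matrix (Fin n) (Fin n) ℝ) : Mᴴ = Mᵀ := by
  ext i j; simp [Matrix.conjTranspose_apply]

lemma mulVec_ne_zero {B : Matrix (Fin n) (Fin n) ℝ} (hB : IsUnit B.det)
    {x : Fin n → ℝ} (hx : x ≠ 0) : B *ᵥ x ≠ 0 := by
  intro h
  apply hx
  have h2 : B⁻¹ *ᵥ (B *ᵥ x) = x := by
    rw [Matrix.mulVec_mulVec, Matrix.nonsing_inv_mul _ hB, Matrix.one_mulVec]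
  rw [h, Matrix.mulVec_zero] at h2
  exact h2.symm

lemma posDef_conj' {A B : Matrix (Fin n) (Fin n) ℝ} (hA : A.PosDef) (hB : IsUnit B.det) :
    (Bᴴᴴ * A * Bᴴ).PosDef := by
  rw [posDef_iff_dotProduct_mulVec]
  replace hA := posDef_iff_dotProduct_mulVec.mp hA
  constructor
  · rw [Matrix.conjTranspose_conjTranspose]
    exact Matrix.isHermitian_mul_mul_conjTranspose B hA.1
  · intro x hx
    have hBt : IsUnit (Bᴴ).det := by
      rw [Matrix.det_conjTranspose]
      simpa using hB
    have hx' : Bᴴ *ᵥ x ≠ 0 := mulVec_ne_zero hBt hx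
    have := hA.2 hx'
    simpa only [Matrix.star_mulVec, Matrix.dotProduct_mulVec, Matrix.vecMul_vecMul] using this

lemma posDef_conj {A B : Matrix (Fin n) (Fin n) ℝ} (hA : A.PosDef) (hB : IsUnit B.det) :
    (B * A * Bᵀ).PosDef := by
  have := posDef_conj' hA hB
  rwa [Matrix.conjTranspose_conjTranspose, ctr] at this

lemma posDef_of_posSemidef_isUnit {A : Matrix (Fin n) (Fin n) ℝ}
    (hA : A.PosSemidef) (h : IsUnit A.det) : A.PosDef := by
  rw [posDef_iff_dotProduct_mulVec]
  refine ⟨hA.1, fun x hx => ?_⟩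
  rcases lt_or_eq_of_le (hA.dotProduct_mulVec_nonneg x) with h' | h'
  · exact h'
  · exfalso
    have h0 : A *ᵥ x = 0 := (hA.dotProduct_mulVec_zero_iff x).mp h'.symm
    exact mulVec_ne_zero h hx h0


/-- The permutation matrix of `σ`: entry `(i,j)` is `1` iff `j = σ i`. -/
def permMat (σ : Equiv.Perm (Fin n)) : Matrix (Fin n) (Fin n) ℝ :=
  Matrix.of fun i j => if j = σ i then 1 else 0

lemma permMat_mul_transpose (σ : Equiv.Perm (Fin n)) :
    permMat σ * (permMat σ)ᵀ = 1 := by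
  ext i k
  simp [permMat, Matrix.mul_apply, Matrix.transpose_apply, Matrix.one_apply,
    ite_and, Finset.sum_ite_eq, Equiv.apply_eq_iff_eq, eq_comm]

lemma permMat_conj_diag (σ : Equiv.Perm (Fin n)) (lam : Fin n → ℝ) :
    permMat σ * diagonal lam * (permMat σ)ᵀ = diagonal (lam ∘ σ) := by
  ext i k
  rw [Matrix.mul_apply]
  simp only [Matrix.mul_diagonal, Matrix.transpose_apply, permMat, Matrix.of_apply]
  rw [Finset.sum_eq_single (σ i)]
  · by_cases h : i = k
    · subst h; simp
    · simp [diagonal_apply_ne _ h, (Equiv.injective σ).ne h]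
  · intro b _ hb
    simp [hb]
  · intro hmem
    simp at hmem


/-- `μ` is a finite nonnegative combination of permuted copies of `lam`. -/
def ConeRep (lam μ : Fin n → ℝ) : Prop :=
  ∃ L : List (ℝ × Equiv.Perm (Fin n)), (∀ p ∈ L, 0 ≤ p.1) ∧
    (L.map fun p => p.1 • (lam ∘ p.2)).sum = μ

lemma coneRep_zero (lam : Fin n → ℝ) : ConeRep lam 0 := ⟨[], by simp, by simp⟩

lemma coneRep_add {lam μ ν : Fin n → ℝ} (h₁ : ConeRep lam μ) (h₂ : ConeRep lam ν) :
    ConeRep lam (μ + ν) := by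
  obtain ⟨L₁, hL₁, hs₁⟩ := h₁
  obtain ⟨L₂, hL₂, hs₂⟩ := h₂
  refine ⟨L₁ ++ L₂, ?_, ?_⟩
  · intro p hp
    rcases List.mem_append.mp hp with h | h
    · exact hL₁ p h
    · exact hL₂ p h
  · rw [List.map_append, List.sum_append, hs₁, hs₂]

lemma coneRep_smul {lam μ : Fin n → ℝ} {c : ℝ} (hc : 0 ≤ c) (h : ConeRep lam μ) :
    ConeRep lam (c • μ) := by
  obtain ⟨L, hL, hs⟩ := h
  refine ⟨L.map fun p => (c * p.1, p.2), ?_, ?_⟩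
  · intro p hp
    obtain ⟨q, hq, rfl⟩ := List.mem_map.mp hp
    exact mul_nonneg hc (hL q hq)
  · rw [List.map_map, ← hs]
    have key : ∀ (L : List (ℝ × Equiv.Perm (Fin n))),
        (L.map ((fun p : ℝ × Equiv.Perm (Fin n) => p.1 • (lam ∘ ⇑p.2)) ∘
          fun p => (c * p.1, p.2))).sum
        = c • (L.map fun p : ℝ × Equiv.Perm (Fin n) => p.1 • (lam ∘ ⇑p.2)).sum := by
      intro L
      induction L with
      | nil => simp
      | cons q L ih =>
        simp only [List.map_cons, List.sum_cons, smul_add, ih, Function.comp_apply]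
        rw [mul_smul]
    exact key L

lemma coneRep_single (lam : Fin n → ℝ) {c : ℝ} (hc : 0 ≤ c) (σ : Equiv.Perm (Fin n)) :
    ConeRep lam (c • (lam ∘ σ)) := ⟨[(c, σ)], by simpa using hc, by simp⟩

lemma coneRep_neg [NeZero n] {lam : Fin n → ℝ} (hsum : ∑ i, lam i = 0)
    (π : Equiv.Perm (Fin n)) : ConeRep lam (-(lam ∘ π)) := by
  classical
  refine ⟨((Finset.univ.erase (0 : Fin n)).toList).map
      (fun k => ((1:ℝ), π.trans (Equiv.addRight k))), ?_, ?_⟩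
  · intro p hp
    obtain ⟨k, hk, rfl⟩ := List.mem_map.mp hp
    norm_num
  · rw [List.map_map]
    have : ((Finset.univ.erase (0 : Fin n)).toList.map
        ((fun p : ℝ × Equiv.Perm (Fin n) => p.1 • (lam ∘ p.2)) ∘
          (fun k => ((1:ℝ), π.trans (Equiv.addRight k))))).sum
        = ∑ k ∈ Finset.univ.erase (0 : Fin n), (lam ∘ (π.trans (Equiv.addRight k))) := by
      rw [Finset.sum_map_toList]
      simp [Function.comp]
      rfl
    rw [this]
    have htot : ∑ k : Fin n, (lam ∘ (π.trans (Equiv.addRight k))) = 0 := by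
      funext j
      rw [Finset.sum_apply]
      have : ∀ k : Fin n, (lam ∘ (π.trans (Equiv.addRight k))) j = lam ((Equiv.addLeft (π j)) k) := by
        intro k
        simp [Equiv.addRight, Equiv.addLeft, add_comm]
      rw [Finset.sum_congr rfl (fun k _ => this k), Equiv.sum_comp (Equiv.addLeft (π j)) lam]
      simpa using hsum
    have hsplit := Finset.sum_erase_add Finset.univ
      (fun k : Fin n => (lam ∘ (π.trans (Equiv.addRight k)))) (Finset.mem_univ (0 : Fin n))
    rw [htot] at hsplit
    have h0 : (fun k : Fin n => (lam ∘ (π.trans (Equiv.addRight k)))) 0 = lam ∘ π := by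
      funext j; simp [Equiv.addRight]
    have hres := eq_neg_of_add_eq_zero_left hsplit
    rw [show lam ∘ ⇑(Equiv.trans π (Equiv.addRight 0)) = lam ∘ π from h0] at hres
    exact hres

lemma exists_perm_two {i j a b : Fin n} (hij : i ≠ j) (hab : a ≠ b) :
    ∃ σ : Equiv.Perm (Fin n), σ i = a ∧ σ j = b := by
  classical
  set τ := Equiv.swap i a with hτ
  set b' := τ j with hb'
  have hti : τ i = a := Equiv.swap_apply_left i a
  have hb'a : b' ≠ a := by
    intro h
    apply hij
    apply τ.injective
    rw [hti, ← h, hb']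
  refine ⟨τ.trans (Equiv.swap b' b), ?_, ?_⟩
  · simp only [Equiv.trans_apply, hti]
    exact Equiv.swap_apply_of_ne_of_ne (Ne.symm hb'a) hab
  · simp only [Equiv.trans_apply, ← hb']
    exact Equiv.swap_apply_left b' b

lemma coneRep_diff [NeZero n] {lam : Fin n → ℝ} (hsum : ∑ i, lam i = 0)
    {a b : Fin n} (hab : lam a ≠ lam b) {t : ℝ} (ht : 0 ≤ t) {i j : Fin n} (hij : i ≠ j) :
    ConeRep lam ((t * (lam a - lam b)) • (Pi.single i (1:ℝ) - Pi.single j 1)) := by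
  classical
  have hab' : a ≠ b := fun h => hab (by rw [h])
  obtain ⟨σ, hσi, hσj⟩ := exists_perm_two hij hab'
  set π : Equiv.Perm (Fin n) := (Equiv.swap i j).trans σ with hπ
  have hkey : lam ∘ σ + (-(lam ∘ π)) = (lam a - lam b) • (Pi.single i (1:ℝ) - Pi.single j 1) := by
    funext x
    simp only [Pi.add_apply, Pi.neg_apply, Function.comp_apply, Pi.smul_apply, Pi.sub_apply,
      Pi.single_apply, smul_eq_mul, hπ, Equiv.trans_apply]
    by_cases hx : x = i
    · subst hx
      rw [Equiv.swap_apply_left, hσi, hσj, if_pos rfl, if_neg hij]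
      ring
    · by_cases hx' : x = j
      · subst hx'
        rw [Equiv.swap_apply_right, hσi, hσj, if_neg hx, if_pos rfl]
        ring
      · rw [Equiv.swap_apply_of_ne_of_ne hx hx', if_neg hx, if_neg hx']
        ring
  have h1 : ConeRep lam (lam ∘ σ + (-(lam ∘ π))) :=
    coneRep_add (by simpa using coneRep_single lam (by norm_num : (0:ℝ) ≤ 1) σ) (coneRep_neg hsum π)
  rw [hkey] at h1
  have h2 := coneRep_smul ht h1
  rwa [smul_smul] at h2

lemma coneRep_sign_diff [NeZero n] {lam : Fin n → ℝ} (hsum : ∑ i, lam i = 0)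
    {a b : Fin n} (hab : lam a ≠ lam b) (c : ℝ) {i j : Fin n} (hij : i ≠ j) :
    ConeRep lam (c • (Pi.single i (1:ℝ) - Pi.single j 1)) := by
  rcases le_or_gt 0 (c / (lam a - lam b)) with h | h
  · have := coneRep_diff hsum hab h hij
    rwa [div_mul_cancel₀ c (sub_ne_zero.mpr hab)] at this
  · have hab2 : lam b ≠ lam a := Ne.symm hab
    have h' : 0 ≤ c / (lam b - lam a) := by
      have hne : lam a - lam b ≠ 0 := sub_ne_zero.mpr hab
      have : lam b - lam a = -(lam a - lam b) := by ring
      rw [this, div_neg]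
      linarith
    have := coneRep_diff hsum hab2 h' hij
    rwa [div_mul_cancel₀ c (sub_ne_zero.mpr hab2)] at this

lemma coneRep_of_sum_zero [NeZero n] {lam : Fin n → ℝ} (hsum : ∑ i, lam i = 0)
    {a b : Fin n} (hab : lam a ≠ lam b) {μ : Fin n → ℝ} (hμ : ∑ i, μ i = 0) :
    ConeRep lam μ := by
  classical
  set j₀ : Fin n := 0 with hj₀
  have hdecomp : μ = ∑ i : Fin n, μ i • (Pi.single i (1:ℝ) - Pi.single j₀ 1) := by
    funext x
    rw [Finset.sum_apply]
    simp only [Pi.smul_apply, Pi.sub_apply, Pi.single_apply, smul_eq_mul]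
    rw [Finset.sum_congr rfl (fun i _ => mul_sub (μ i) _ _), Finset.sum_sub_distrib]
    have e1 : ∑ i : Fin n, μ i * (if x = i then (1:ℝ) else 0) = μ x := by
      rw [Finset.sum_eq_single x]
      · simp
      · intro b _ hb; simp [Ne.symm hb]
      · intro h; exact absurd (Finset.mem_univ x) h
    have e2 : ∑ i : Fin n, μ i * (if x = j₀ then (1:ℝ) else 0) = 0 := by
      by_cases hx : x = j₀
      · subst hx
        simpa using hμ
      · simp [hx]
    rw [e1, e2, sub_zero]
  rw [hdecomp]
  apply Finset.sum_induction _ (ConeRep lam) (fun _ _ => coneRep_add) (coneRep_zero lam)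
  intro i _
  by_cases hi : i = j₀
  · subst hi
    simp only [sub_self, smul_zero]
    exact coneRep_zero lam
  · exact coneRep_sign_diff hsum hab (μ i) hi


open scoped MatrixOrder in
lemma exists_riccati {P₁ P₂ : Matrix (Fin n) (Fin n) ℝ} (hP₁ : P₁.PosDef) (hP₂ : P₂.PosDef)
    (hdet : P₁.det = P₂.det) :
    ∃ P : Matrix (Fin n) (Fin n) ℝ, P.PosDef ∧ P.det = 1 ∧ P * P₁ * P = P₂ := by
  classical
  set S : Matrix (Fin n) (Fin n) ℝ := CFC.sqrt P₁ with hSdef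
  have hSS : S * S = P₁ := CFC.sqrt_mul_sqrt_self P₁ hP₁.posSemidef.nonneg
  have hSsym : Sᵀ = S := by
    rw [← ctr]; exact (CFC.sqrt_nonneg P₁).posSemidef.isHermitian
  have hdetS : IsUnit S.det := by
    have h1 : S.det * S.det = P₁.det := by rw [← Matrix.det_mul, hSS]
    have h2 : (0:ℝ) < P₁.det := hP₁.det_pos
    refine isUnit_iff_ne_zero.mpr fun h => ?_
    rw [h, zero_mul] at h1
    linarith
  have hQ : (S * P₂ * Sᵀ).PosDef := posDef_conj hP₂ hdetS
  rw [hSsym] at hQ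
  set R : Matrix (Fin n) (Fin n) ℝ := CFC.sqrt (S * P₂ * S) with hRdef
  have hRR : R * R = S * P₂ * S := CFC.sqrt_mul_sqrt_self (S * P₂ * S) hQ.posSemidef.nonneg
  have hdetR : IsUnit R.det := by
    have h1 : R.det * R.det = (S * P₂ * S).det := by rw [← Matrix.det_mul, hRR]
    have h2 : (0:ℝ) < (S * P₂ * S).det := hQ.det_pos
    refine isUnit_iff_ne_zero.mpr fun h => ?_
    rw [h, zero_mul] at h1
    linarith
  have hRpos : R.PosDef := posDef_of_posSemidef_isUnit (CFC.sqrt_nonneg (S * P₂ * S)).posSemidef hdetR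
  set P : Matrix (Fin n) (Fin n) ℝ := S⁻¹ * R * S⁻¹ with hPdef
  have hinvT : (S⁻¹)ᵀ = S⁻¹ := by rw [Matrix.transpose_nonsing_inv, hSsym]
  have hdetSinv : IsUnit (S⁻¹).det := by
    rw [Matrix.det_nonsing_inv, Ring.inverse_eq_inv]
    exact isUnit_iff_ne_zero.mpr (inv_ne_zero (isUnit_iff_ne_zero.mp hdetS))
  have hPpos : P.PosDef := by
    have := posDef_conj (B := S⁻¹) hRpos hdetSinv
    rwa [hinvT] at this
  have hinvS : S⁻¹ * S = 1 := Matrix.nonsing_inv_mul S hdetS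
  have hSinv : S * S⁻¹ = 1 := Matrix.mul_nonsing_inv S hdetS
  have hPP : P * P₁ * P = P₂ := by
    have e1 : P * P₁ * P = S⁻¹ * (R * ((S⁻¹ * S) * (S * S⁻¹)) * R) * S⁻¹ := by
      rw [hPdef, ← hSS]
      noncomm_ring
    rw [e1, hinvS, hSinv, one_mul, mul_one, hRR]
    have e2 : S⁻¹ * (S * P₂ * S) * S⁻¹ = (S⁻¹ * S) * P₂ * (S * S⁻¹) := by noncomm_ring
    rw [e2, hinvS, hSinv, one_mul, mul_one]
  have hdetP : P.det = 1 := by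
    have h1 : P.det * P₁.det * P.det = P₂.det := by
      rw [← hPP]; simp [Matrix.det_mul]
    rw [← hdet] at h1
    have h2 : (0:ℝ) < P₁.det := hP₁.det_pos
    have h3 : (0:ℝ) < P.det := hPpos.det_pos
    have h4 : (P.det - 1) * (P.det + 1) = 0 := by nlinarith
    rcases mul_eq_zero.mp h4 with h | h
    · linarith
    · linarith
  exact ⟨P, hPpos, hdetP, hPP⟩


lemma exists_orth_diag {P : Matrix (Fin n) (Fin n) ℝ} (hP : P.PosDef) (hdet : P.det = 1) :
    ∃ (V : Matrix (Fin n) (Fin n) ℝ) (μ : Fin n → ℝ),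
      V * Vᵀ = 1 ∧ P = V * Matrix.diagonal (fun i => Real.exp (μ i)) * Vᵀ ∧
      ∑ i, μ i = 0 := by
  classical
  have hH : P.IsHermitian := hP.isHermitian
  set V : Matrix (Fin n) (Fin n) ℝ := (hH.eigenvectorUnitary : Matrix (Fin n) (Fin n) ℝ) with hV
  have hstar : star V = Vᵀ := by rw [Matrix.star_eq_conjTranspose, ctr]
  have hVV : V * Vᵀ = 1 := by
    rw [← hstar]
    exact (Matrix.mem_unitaryGroup_iff).mp hH.eigenvectorUnitary.2
  set ev : Fin n → ℝ := hH.eigenvalues with hev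
  have hevpos : ∀ i, 0 < ev i := hP.eigenvalues_pos
  set μ : Fin n → ℝ := fun i => Real.log (ev i) with hμ
  have hexp : (fun i => Real.exp (μ i)) = ev := by
    funext i
    rw [hμ]
    exact Real.exp_log (hevpos i)
  refine ⟨V, μ, hVV, ?_, ?_⟩
  · rw [hexp]
    have := hH.spectral_theorem
    rw [Unitary.conjStarAlgAut_apply, ← hV, hstar] at this
    exact this
  · have hdet2 : P.det = ∏ i, ev i := by
      have := hH.det_eq_prod_eigenvalues
      rw [this]
      norm_num
      rfl
    rw [hμ]
    have : ∑ i, Real.log (ev i) = Real.log (∏ i, ev i) := by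
      rw [Real.log_prod]
      intro i _
      exact (hevpos i).ne'
    rw [this, ← hdet2, hdet, Real.log_one]


lemma isReachable_segment (D : Matrix (Fin n) (Fin n) ℝ) (hDs : Dᵀ = D)
    (W S₀ : Matrix (Fin n) (Fin n) ℝ) (hW : W * Wᵀ = 1) (hS₀ : S₀.PosDef)
    {τ : ℝ} (hτ : 0 ≤ τ) :
    IsReachable S₀
      (NormedSpace.exp (τ • (W * D * Wᵀ)) * S₀ * (NormedSpace.exp (τ • (W * D * Wᵀ)))ᵀ)
      D τ := by
  set A : Matrix (Fin n) (Fin n) ℝ := W * D * Wᵀ with hA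
  have hAs : Aᵀ = A := by
    rw [hA, Matrix.transpose_mul, Matrix.transpose_mul, Matrix.transpose_transpose, hDs,
      mul_assoc]
  set E : ℝ → Matrix (Fin n) (Fin n) ℝ := fun t => NormedSpace.exp (t • A) with hE
  have hEs : ∀ t, (E t)ᵀ = E t := by
    intro t
    rw [hE]
    simp only
    rw [← Matrix.exp_transpose, Matrix.transpose_smul, hAs]
  set S : ℝ → Matrix (Fin n) (Fin n) ℝ := fun t => E t * S₀ * E t with hS
  have key : ∀ (i j : Fin n) (t : ℝ),
      HasDerivAt (fun u => S u i j) ((A * S t + S t * A) i j) t := by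
    letI : SeminormedRing (Matrix (Fin n) (Fin n) ℝ) := Matrix.linftyOpSemiNormedRing
    letI : NormedRing (Matrix (Fin n) (Fin n) ℝ) := Matrix.linftyOpNormedRing
    letI : NormedAlgebra ℝ (Matrix (Fin n) (Fin n) ℝ) := Matrix.linftyOpNormedAlgebra
    intro i j t
    have h1 : HasDerivAt (fun u : ℝ => NormedSpace.exp (u • A)) (A * E t) t :=
      hasDerivAt_exp_smul_const' A t
    have h2 : HasDerivAt (fun u : ℝ => NormedSpace.exp (u • A)) (E t * A) t :=
      hasDerivAt_exp_smul_const A t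
    have h3 : HasDerivAt (fun u : ℝ => S₀ * E u) (S₀ * (E t * A)) t := h2.const_mul S₀
    have h4 := h1.mul h3
    have h5 : HasDerivAt (fun u => S u)
        (A * S t + S t * A) t := by
      have heq : (fun u => S u) = fun u => (NormedSpace.exp (u • A)) * (S₀ * E u) := by
        funext u
        rw [hS]
        simp only
        rw [mul_assoc]
      rw [heq]
      refine h4.congr_deriv ?_
      rw [hS]
      simp only
      noncomm_ring
    let L : Matrix (Fin n) (Fin n) ℝ →ₗ[ℝ] ℝ :=
      { toFun := fun M => M i j, map_add' := fun _ _ => rfl, map_smul' := fun _ _ => rfl }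
    have hL := (LinearMap.toContinuousLinearMap L).hasFDerivAt (x := S t)
    exact hL.comp_hasDerivAt t h5
  have hcont : ∀ (i j : Fin n), Continuous fun t => S t i j := by
    intro i j
    rw [continuous_iff_continuousAt]
    exact fun t => (key i j t).continuousAt
  have hE0 : E 0 = 1 := by
    rw [hE]; simp only [zero_smul]; exact NormedSpace.exp_zero
  have hS0 : S 0 = S₀ := by rw [hS]; simp only [hE0, one_mul, mul_one]
  have hSpos : ∀ t, (S t).PosDef := by
    intro t
    have hunit : IsUnit (E t).det :=
      (Matrix.isUnit_iff_isUnit_det _).mp (Matrix.isUnit_exp (t • A))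
    have := posDef_conj (B := E t) hS₀ hunit
    rwa [hEs t] at this
  refine ⟨fun _ => W, S, fun i j => measurable_const, fun t _ => hW, fun t _ => hSpos t,
    hS0, ?_, ?_, ?_⟩
  · show E τ * S₀ * E τ = E τ * S₀ * (E τ)ᵀ
    rw [hEs τ]
  · intro i j
    apply Continuous.intervalIntegrable
    have : Continuous fun t : ℝ => (A * S t + S t * A) i j := by
      simp only [Matrix.add_apply, Matrix.mul_apply]
      apply Continuous.add <;> exact continuous_finset_sum _ fun k _ => by
        first
        | exact (continuous_const.mul (hcont k j))
        | exact ((hcont i k).mul continuous_const)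
    exact this
  · intro t ht i j
    have hint : ∀ u v : ℝ, IntervalIntegrable (fun s => (A * S s + S s * A) i j) volume u v := by
      intro u v
      apply Continuous.intervalIntegrable
      simp only [Matrix.add_apply, Matrix.mul_apply]
      apply Continuous.add <;> exact continuous_finset_sum _ fun k _ => by
        first
        | exact (continuous_const.mul (hcont k j))
        | exact ((hcont i k).mul continuous_const)
    have heq : ∫ s in (0:ℝ)..t, (A * S s + S s * A) i j = S t i j - S 0 i j := by
      apply intervalIntegral.integral_eq_sub_of_hasDerivAt
      · intro x _
        exact key i j x
      · exact hint 0 t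
    have : ∫ s in (0:ℝ)..t,
        ((W * D * Wᵀ) * S s + S s * (W * D * Wᵀ)) i j = S t i j - S 0 i j := by
      rw [← hA]; exact heq
    rw [this, hS0]
    ring

lemma isReachable_trans {P₀ P₁ P₂ D : Matrix (Fin n) (Fin n) ℝ} {T₁ T₂ : ℝ}
    (hT₁ : 0 ≤ T₁) (hT₂ : 0 ≤ T₂)
    (h₁ : IsReachable P₀ P₁ D T₁) (h₂ : IsReachable P₁ P₂ D T₂) :
    IsReachable P₀ P₂ D (T₁ + T₂) := by
  classical
  obtain ⟨U₁, S₁, hm₁, ho₁, hp₁, hs₁0, hs₁T, hi₁, hid₁⟩ := h₁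
  obtain ⟨U₂, S₂, hm₂, ho₂, hp₂, hs₂0, hs₂T, hi₂, hid₂⟩ := h₂
  set U : ℝ → Matrix (Fin n) (Fin n) ℝ := fun t => if t < T₁ then U₁ t else U₂ (t - T₁) with hU
  set S : ℝ → Matrix (Fin n) (Fin n) ℝ := fun t => if t < T₁ then S₁ t else S₂ (t - T₁) with hS
  have hae : ∀ᵐ s : ℝ ∂volume, s ≠ T₁ := by
    rw [MeasureTheory.ae_iff]
    simp only [ne_eq, not_not, Set.setOf_eq_eq_singleton]
    exact measure_singleton T₁
  have hUlt : ∀ s, s < T₁ → U s = U₁ s := fun s h => by simp only [hU, if_pos h]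
  have hUge : ∀ s, T₁ ≤ s → U s = U₂ (s - T₁) := fun s h => by
    simp only [hU, if_neg (not_lt.mpr h)]
  have hSlt : ∀ s, s < T₁ → S s = S₁ s := fun s h => by simp only [hS, if_pos h]
  have hSge : ∀ s, T₁ ≤ s → S s = S₂ (s - T₁) := fun s h => by
    simp only [hS, if_neg (not_lt.mpr h)]
  have hST₁ : S T₁ = P₁ := by rw [hSge T₁ le_rfl, sub_self, hs₂0]
  have key : ∀ (i j : Fin n),
      (IntervalIntegrable
        (fun t => ((U t * D * (U t)ᵀ) * S t + S t * (U t * D * (U t)ᵀ)) i j) volume 0 T₁)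
      ∧ (IntervalIntegrable
        (fun t => ((U t * D * (U t)ᵀ) * S t + S t * (U t * D * (U t)ᵀ)) i j) volume T₁ (T₁+T₂))
      ∧ (∀ t, 0 ≤ t → t ≤ T₁ →
          ∫ s in (0:ℝ)..t, ((U s * D * (U s)ᵀ) * S s + S s * (U s * D * (U s)ᵀ)) i j
          = ∫ s in (0:ℝ)..t, ((U₁ s * D * (U₁ s)ᵀ) * S₁ s + S₁ s * (U₁ s * D * (U₁ s)ᵀ)) i j)
      ∧ (∀ t, T₁ ≤ t →
          ∫ s in T₁..t, ((U s * D * (U s)ᵀ) * S s + S s * (U s * D * (U s)ᵀ)) i j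
          = ∫ s in (0:ℝ)..(t - T₁),
              ((U₂ s * D * (U₂ s)ᵀ) * S₂ s + S₂ s * (U₂ s * D * (U₂ s)ᵀ)) i j) := by
    intro i j
    set g : ℝ → ℝ :=
      fun t => ((U t * D * (U t)ᵀ) * S t + S t * (U t * D * (U t)ᵀ)) i j with hg
    set g₁ : ℝ → ℝ :=
      fun t => ((U₁ t * D * (U₁ t)ᵀ) * S₁ t + S₁ t * (U₁ t * D * (U₁ t)ᵀ)) i j with hg₁
    set g₂ : ℝ → ℝ :=
      fun t => ((U₂ t * D * (U₂ t)ᵀ) * S₂ t + S₂ t * (U₂ t * D * (U₂ t)ᵀ)) i j with hg₂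
    have hglt : ∀ s, s < T₁ → g s = g₁ s := by
      intro s h
      simp only [hg, hg₁, hUlt s h, hSlt s h]
    have hgge : ∀ s, T₁ ≤ s → g s = g₂ (s - T₁) := by
      intro s h
      simp only [hg, hg₂, hUge s h, hSge s h]
    have piece1 : IntervalIntegrable g volume 0 T₁ := by
      rw [intervalIntegrable_iff]
      have h1 := (intervalIntegrable_iff).mp (hi₁ i j)
      refine h1.congr ?_
      filter_upwards [MeasureTheory.ae_restrict_mem measurableSet_uIoc,
        MeasureTheory.ae_restrict_of_ae hae] with s hmem hne
      rw [Set.uIoc_of_le hT₁] at hmem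
      exact (hglt s (lt_of_le_of_ne hmem.2 hne)).symm
    have piece2 : IntervalIntegrable g volume T₁ (T₁ + T₂) := by
      have h2 := (hi₂ i j).comp_sub_right T₁
      rw [zero_add, add_comm T₂ T₁] at h2
      rw [intervalIntegrable_iff] at h2 ⊢
      refine h2.congr ?_
      filter_upwards [MeasureTheory.ae_restrict_mem measurableSet_uIoc] with s hmem
      rw [Set.uIoc_of_le (by linarith : T₁ ≤ T₁ + T₂)] at hmem
      exact (hgge s hmem.1.le).symm
    refine ⟨piece1, piece2, ?_, ?_⟩
    · intro t ht0 htT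
      apply intervalIntegral.integral_congr_ae
      filter_upwards [hae] with s hne hmem
      rw [Set.uIoc_of_le ht0] at hmem
      exact hglt s (lt_of_le_of_ne (le_trans hmem.2 htT) hne)
    · intro t htT
      have hcv := intervalIntegral.integral_comp_sub_right (a := T₁) (b := t) g₂ T₁
      rw [sub_self] at hcv
      rw [← hcv]
      apply intervalIntegral.integral_congr_ae
      filter_upwards [] with s hmem
      rw [Set.uIoc_of_le htT] at hmem
      exact hgge s hmem.1.le
  refine ⟨U, S, ?_, ?_, ?_, ?_, ?_, ?_, ?_⟩
  · intro i j
    have heq : (fun t => U t i j)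
        = fun t => if t < T₁ then U₁ t i j else U₂ (t - T₁) i j := by
      funext t
      by_cases h : t < T₁ <;> simp [hU, h]
    rw [heq]
    exact Measurable.ite (measurableSet_lt measurable_id measurable_const) (hm₁ i j)
      ((hm₂ i j).comp (measurable_id.sub measurable_const))
  · intro t ht
    by_cases h : t < T₁
    · rw [hUlt t h]; exact ho₁ t ⟨ht.1, h.le⟩
    · rw [hUge t (not_lt.mp h)]
      exact ho₂ (t - T₁) ⟨by linarith [not_lt.mp h], by linarith [ht.2]⟩
  · intro t ht
    by_cases h : t < T₁
    · rw [hSlt t h]; exact hp₁ t ⟨ht.1, h.le⟩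
    · rw [hSge t (not_lt.mp h)]
      exact hp₂ (t - T₁) ⟨by linarith [not_lt.mp h], by linarith [ht.2]⟩
  · by_cases h : (0:ℝ) < T₁
    · rw [hSlt 0 h]; exact hs₁0
    · have hT10 : T₁ = 0 := le_antisymm (not_lt.mp h) hT₁
      rw [hSge 0 (le_of_eq hT10), hT10, sub_zero, hs₂0, ← hs₁T, hT10, hs₁0]
  · rw [hSge (T₁ + T₂) (by linarith), add_sub_cancel_left]
    exact hs₂T
  · intro i j
    exact ((key i j).1).trans ((key i j).2.1)
  · intro t ht i j
    by_cases h : t ≤ T₁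
    · have hseq : S t = S₁ t := by
        by_cases h' : t < T₁
        · exact hSlt t h'
        · have : t = T₁ := le_antisymm h (not_lt.mp h')
          rw [this, hST₁, ← hs₁T]
      rw [hseq, (key i j).2.2.1 t ht.1 h]
      exact hid₁ t ⟨ht.1, h⟩ i j
    · push_neg at h
      have hmem2 : t - T₁ ∈ Set.Icc (0:ℝ) T₂ := ⟨by linarith, by linarith [ht.2]⟩
      rw [hSge t h.le]
      have hsplit :
          ∫ s in (0:ℝ)..t, ((U s * D * (U s)ᵀ) * S s + S s * (U s * D * (U s)ᵀ)) i j
          = (∫ s in (0:ℝ)..T₁, ((U s * D * (U s)ᵀ) * S s + S s * (U s * D * (U s)ᵀ)) i j)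
          + ∫ s in T₁..t, ((U s * D * (U s)ᵀ) * S s + S s * (U s * D * (U s)ᵀ)) i j := by
        refine (intervalIntegral.integral_add_adjacent_intervals (key i j).1 ?_).symm
        refine ((key i j).2.1).mono_set ?_
        rw [Set.uIcc_of_le (by linarith : T₁ ≤ t), Set.uIcc_of_le (by linarith : T₁ ≤ T₁ + T₂)]
        exact Set.Icc_subset_Icc le_rfl (by linarith [ht.2])
      rw [hsplit, (key i j).2.2.1 T₁ hT₁ le_rfl, (key i j).2.2.2 t h.le]
      have e1 := hid₁ T₁ ⟨hT₁, le_rfl⟩ i j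
      have e2 := hid₂ (t - T₁) hmem2 i j
      rw [hs₁T] at e1
      rw [e2]
      linarith [e1]

/-- The ordered product of exponentials attached to a list of (time, frame) pairs. -/
noncomputable def prodExp (D : Matrix (Fin n) (Fin n) ℝ) :
    List (ℝ × Matrix (Fin n) (Fin n) ℝ) → Matrix (Fin n) (Fin n) ℝ
  | [] => 1
  | p :: L => prodExp D L * NormedSpace.exp (p.1 • (p.2 * D * p.2ᵀ))

lemma isReachable_refl (D : Matrix (Fin n) (Fin n) ℝ) (hDs : Dᵀ = D)
    (S₀ : Matrix (Fin n) (Fin n) ℝ) (hS₀ : S₀.PosDef) : IsReachable S₀ S₀ D 0 := by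
  have h := isReachable_segment D hDs 1 S₀ (by simp) hS₀ (le_refl 0)
  have he : NormedSpace.exp ((0:ℝ) • ((1:Matrix (Fin n) (Fin n) ℝ) * D * (1:Matrix (Fin n) (Fin n) ℝ)ᵀ)) = 1 := by
    rw [zero_smul]
    exact NormedSpace.exp_zero
  rwa [he, one_mul, Matrix.transpose_one, mul_one] at h

lemma isReachable_list (D : Matrix (Fin n) (Fin n) ℝ) (hDs : Dᵀ = D)
    (L : List (ℝ × Matrix (Fin n) (Fin n) ℝ)) :
    (∀ p ∈ L, 0 ≤ p.1 ∧ p.2 * p.2ᵀ = 1) → ∀ S₀ : Matrix (Fin n) (Fin n) ℝ, S₀.PosDef →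
      IsReachable S₀ (prodExp D L * S₀ * (prodExp D L)ᵀ) D (L.map Prod.fst).sum := by
  induction L with
  | nil =>
    intro _ S₀ hS₀
    simpa [prodExp, Matrix.transpose_one] using isReachable_refl D hDs S₀ hS₀
  | cons p L ih =>
    intro hL S₀ hS₀
    have hp := hL p List.mem_cons_self
    have hLrest : ∀ q ∈ L, 0 ≤ q.1 ∧ q.2 * q.2ᵀ = 1 :=
      fun q hq => hL q (List.mem_cons_of_mem p hq)
    set Ep : Matrix (Fin n) (Fin n) ℝ := NormedSpace.exp (p.1 • (p.2 * D * p.2ᵀ)) with hEp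
    have hseg : IsReachable S₀ (Ep * S₀ * Epᵀ) D p.1 :=
      isReachable_segment D hDs p.2 S₀ hp.2 hS₀ hp.1
    have hEpUnit : IsUnit Ep.det :=
      (Matrix.isUnit_iff_isUnit_det _).mp (Matrix.isUnit_exp _)
    have hpos : (Ep * S₀ * Epᵀ).PosDef := posDef_conj hS₀ hEpUnit
    have hIH := ih hLrest (Ep * S₀ * Epᵀ) hpos
    have hsum0 : (0:ℝ) ≤ (L.map Prod.fst).sum := by
      apply List.sum_nonneg
      intro x hx
      obtain ⟨q, hq, rfl⟩ := List.mem_map.mp hx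
      exact (hLrest q hq).1
    have := isReachable_trans hp.1 hsum0 hseg hIH
    have hmat : prodExp D L * (Ep * S₀ * Epᵀ) * (prodExp D L)ᵀ
        = prodExp D (p :: L) * S₀ * (prodExp D (p :: L))ᵀ := by
      show _ = (prodExp D L * Ep) * S₀ * (prodExp D L * Ep)ᵀ
      rw [Matrix.transpose_mul]
      noncomm_ring
    rw [hmat] at this
    have hsum : p.1 + (L.map Prod.fst).sum = ((p :: L).map Prod.fst).sum := by simp
    rwa [hsum] at this

lemma prodExp_perm_list (lam : Fin n → ℝ) (V : Matrix (Fin n) (Fin n) ℝ) (hV : V * Vᵀ = 1)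
    (L : List (ℝ × Equiv.Perm (Fin n))) :
    prodExp (Matrix.diagonal lam) (L.map fun p => (p.1, V * permMat p.2))
      = V * NormedSpace.exp
          (Matrix.diagonal ((L.map fun p => p.1 • (lam ∘ p.2)).sum)) * Vᵀ := by
  classical
  have hVt : Vᵀ * V = 1 := mul_eq_one_comm.mp hV
  have hVdet : IsUnit V.det := by
    refine isUnit_iff_ne_zero.mpr fun h => ?_
    have := congrArg Matrix.det hV
    rw [Matrix.det_mul, Matrix.det_transpose, h, zero_mul, Matrix.det_one] at this
    norm_num at this
  have hVunit : IsUnit V := (Matrix.isUnit_iff_isUnit_det V).mpr hVdet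
  have hVinv : V⁻¹ = Vᵀ := Matrix.inv_eq_right_inv hV
  induction L with
  | nil =>
    show (1 : Matrix (Fin n) (Fin n) ℝ) = _
    rw [List.map_nil, List.sum_nil]
    rw [show (Matrix.diagonal (0 : Fin n → ℝ)) = 0 from Matrix.diagonal_zero]
    rw [NormedSpace.exp_zero, mul_one, hV]
  | cons p L ih =>
    show prodExp (Matrix.diagonal lam) (L.map fun p => (p.1, V * permMat p.2))
        * NormedSpace.exp (p.1 • ((V * permMat p.2) * Matrix.diagonal lam * (V * permMat p.2)ᵀ))
        = _
    rw [ih]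
    have hconj : (V * permMat p.2) * Matrix.diagonal lam * (V * permMat p.2)ᵀ
        = V * Matrix.diagonal (lam ∘ p.2) * Vᵀ := by
      rw [Matrix.transpose_mul]
      calc V * permMat p.2 * Matrix.diagonal lam * ((permMat p.2)ᵀ * Vᵀ)
          = V * (permMat p.2 * Matrix.diagonal lam * (permMat p.2)ᵀ) * Vᵀ := by noncomm_ring
        _ = V * Matrix.diagonal (lam ∘ p.2) * Vᵀ := by rw [permMat_conj_diag]
    rw [hconj]
    have hsmul : p.1 • (V * Matrix.diagonal (lam ∘ p.2) * Vᵀ)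
        = V * Matrix.diagonal (p.1 • (lam ∘ p.2)) * Vᵀ := by
      rw [Matrix.diagonal_smul]
      rw [Matrix.mul_smul, Matrix.smul_mul]
    rw [hsmul]
    have hexpconj : NormedSpace.exp (V * Matrix.diagonal (p.1 • (lam ∘ p.2)) * Vᵀ)
        = V * NormedSpace.exp (Matrix.diagonal (p.1 • (lam ∘ p.2))) * Vᵀ := by
      rw [← hVinv]
      exact Matrix.exp_conj V _ hVunit
    rw [hexpconj]
    have hcomm : Commute (Matrix.diagonal ((L.map fun p => p.1 • (lam ∘ p.2)).sum))
        (Matrix.diagonal (p.1 • (lam ∘ p.2))) := by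
      unfold Commute SemiconjBy
      have heq : (fun i => ((L.map fun p => p.1 • (lam ∘ p.2)).sum) i * (p.1 • (lam ∘ p.2)) i)
          = fun i => (p.1 • (lam ∘ p.2)) i * ((L.map fun p => p.1 • (lam ∘ p.2)).sum) i :=
        funext fun i => mul_comm _ _
      rw [Matrix.diagonal_mul_diagonal, Matrix.diagonal_mul_diagonal, heq]
    calc V * NormedSpace.exp (Matrix.diagonal ((L.map fun p => p.1 • (lam ∘ p.2)).sum)) * Vᵀ
          * (V * NormedSpace.exp (Matrix.diagonal (p.1 • (lam ∘ p.2))) * Vᵀ)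
        = V * (NormedSpace.exp (Matrix.diagonal ((L.map fun p => p.1 • (lam ∘ p.2)).sum))
            * (Vᵀ * V) * NormedSpace.exp (Matrix.diagonal (p.1 • (lam ∘ p.2)))) * Vᵀ := by
          noncomm_ring
      _ = V * (NormedSpace.exp (Matrix.diagonal ((L.map fun p => p.1 • (lam ∘ p.2)).sum))
            * NormedSpace.exp (Matrix.diagonal (p.1 • (lam ∘ p.2)))) * Vᵀ := by
          rw [hVt, mul_one]
      _ = V * NormedSpace.exp (Matrix.diagonal ((L.map fun p => p.1 • (lam ∘ p.2)).sum)
            + Matrix.diagonal (p.1 • (lam ∘ p.2))) * Vᵀ := by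
          rw [Matrix.exp_add_of_commute _ _ hcomm]
      _ = V * NormedSpace.exp
            (Matrix.diagonal (((p :: L).map fun p => p.1 • (lam ∘ p.2)).sum)) * Vᵀ := by
          rw [Matrix.diagonal_add, List.map_cons, List.sum_cons]
          have heq : (fun i => ((L.map fun p => p.1 • (lam ∘ p.2)).sum) i + (p.1 • (lam ∘ p.2)) i)
              = (p.1 • (lam ∘ p.2)) + ((L.map fun p => p.1 • (lam ∘ p.2)).sum) :=
            funext fun i => add_comm _ _
          rw [heq]


end IsoCtrlAux

/-- Theorem 19, finite-time controllability.
For any nonzero traceless diagonal `D` and any `Σ₁, Σ₂ ∈ S⁺⁺ⁿ` with equal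
determinants, there is a finite time `T > 0` with `Σ₂ ∈ R(Σ₁, D, T)`. -/
theorem exists_time_isReachable_of_det_eq
    {n : ℕ} (hn : 1 ≤ n)
    (D : Matrix (Fin n) (Fin n) ℝ) (hD : D.IsDiag) (hD0 : D ≠ 0)
    (hDtr : D.trace = 0)
    (P₁ P₂ : Matrix (Fin n) (Fin n) ℝ)
    (hP₁ : P₁.PosDef) (hP₂ : P₂.PosDef)
    (hdet : P₁.det = P₂.det) :
    ∃ T : ℝ, 0 < T ∧ IsReachable P₁ P₂ D T := by
  classical
  haveI : NeZero n := ⟨by omega⟩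
  open IsoCtrlAux in
  set lam : Fin n → ℝ := fun i => D i i with hlam
  have hDdiag : Matrix.diagonal lam = D := hD.diagonal_diag
  have hDs : Dᵀ = D := by
    rw [← hDdiag]
    exact Matrix.diagonal_transpose lam
  have hsum : ∑ i, lam i = 0 := by
    simpa [Matrix.trace, Matrix.diag] using hDtr
  have hne : ∃ a b, lam a ≠ lam b := by
    by_contra h
    push_neg at h
    apply hD0
    have hz : ∀ i, lam i = 0 := by
      intro i
      have hs : ∑ j, lam j = (n : ℝ) * lam i := by
        rw [Finset.sum_congr rfl (fun j _ => h j i)]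
        simp [Finset.card_univ, mul_comm]
      rw [hsum] at hs
      have hn0 : (n:ℝ) ≠ 0 := by
        have : (0:ℝ) < n := by exact_mod_cast Nat.pos_of_ne_zero (by omega)
        linarith
      rcases mul_eq_zero.mp hs.symm with h' | h'
      · exact absurd h' hn0
      · exact h'
    rw [← hDdiag]
    have hl0 : lam = 0 := funext hz
    rw [hl0]
    show Matrix.diagonal (fun _ => (0:ℝ)) = 0
    exact Matrix.diagonal_zero
  obtain ⟨a, b, hab⟩ := hne
  obtain ⟨P, hPpos, hPdet, hPP⟩ := IsoCtrlAux.exists_riccati hP₁ hP₂ hdet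
  obtain ⟨V, μ, hVV, hPspec, hμsum⟩ := IsoCtrlAux.exists_orth_diag hPpos hPdet
  have hν : ∑ i, (μ - lam) i = 0 := by
    simp only [Pi.sub_apply]
    rw [Finset.sum_sub_distrib, hμsum, hsum, sub_zero]
  obtain ⟨L₁, hL₁nonneg, hL₁sum⟩ := IsoCtrlAux.coneRep_of_sum_zero hsum hab hν
  set L : List (ℝ × Equiv.Perm (Fin n)) := ((1:ℝ), (1 : Equiv.Perm (Fin n))) :: L₁ with hL
  have hLsum : (L.map fun p => p.1 • (lam ∘ p.2)).sum = μ := by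
    rw [hL, List.map_cons, List.sum_cons, hL₁sum]
    have h1 : ((1:ℝ) • (lam ∘ ⇑(1 : Equiv.Perm (Fin n)))) = lam := by
      funext x; simp
    rw [h1]
    funext x; simp
  set Lm : List (ℝ × Matrix (Fin n) (Fin n) ℝ) :=
    L.map (fun p => (p.1, V * IsoCtrlAux.permMat p.2)) with hLm
  have hLmgood : ∀ q ∈ Lm, 0 ≤ q.1 ∧ q.2 * q.2ᵀ = 1 := by
    intro q hq
    obtain ⟨p, hp, rfl⟩ := List.mem_map.mp hq
    constructor
    · rcases List.mem_cons.mp hp with h | h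
      · rw [h]; norm_num
      · exact hL₁nonneg p h
    · show V * IsoCtrlAux.permMat p.2 * (V * IsoCtrlAux.permMat p.2)ᵀ = 1
      rw [Matrix.transpose_mul]
      calc V * IsoCtrlAux.permMat p.2 * ((IsoCtrlAux.permMat p.2)ᵀ * Vᵀ)
          = V * (IsoCtrlAux.permMat p.2 * (IsoCtrlAux.permMat p.2)ᵀ) * Vᵀ := by noncomm_ring
        _ = 1 := by rw [IsoCtrlAux.permMat_mul_transpose, mul_one, hVV]
  have hreach := IsoCtrlAux.isReachable_list D hDs Lm hLmgood P₁ hP₁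
  have hGP : IsoCtrlAux.prodExp D Lm = P := by
    rw [hLm, ← hDdiag, IsoCtrlAux.prodExp_perm_list lam V hVV L, hLsum]
    have hexp : NormedSpace.exp (Matrix.diagonal μ)
        = Matrix.diagonal (fun i => Real.exp (μ i)) := by
      rw [Matrix.exp_diagonal, Real.exp_eq_exp_ℝ]
      exact congrArg Matrix.diagonal (Pi.exp_def μ)
    rw [hexp, ← hPspec]
  have hPt : Pᵀ = P := by
    rw [← IsoCtrlAux.ctr]
    exact hPpos.isHermitian
  have hfinal : IsoCtrlAux.prodExp D Lm * P₁ * (IsoCtrlAux.prodExp D Lm)ᵀ = P₂ := by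
    rw [hGP, hPt, hPP]
  rw [hfinal] at hreach
  refine ⟨(Lm.map Prod.fst).sum, ?_, hreach⟩
  have hmm : (Lm.map Prod.fst).sum = (L.map Prod.fst).sum := by
    rw [hLm, List.map_map]
    rfl
  rw [hmm, hL, List.map_cons, List.sum_cons]
  have hnn : 0 ≤ (L₁.map Prod.fst).sum := by
    apply List.sum_nonneg
    intro x hx
    obtain ⟨q, hq, rfl⟩ := List.mem_map.mp hx
    exact hL₁nonneg q hq
  simp only [Prod.fst]
  linarith
end

section
/- Let n ≥ 1, T > 0, α ∈ ℝ, D a real diagonal n×n matrix, and Σ₀, Σ ∈ S⁺⁺ⁿ. Then Σ ∈ R(Σ₀, D + αI, T) if and only if e^{−2Tα}·Σ ∈ R(Σ₀, D, T); that is, adding a multiple α of the identity to the prescribed spectrum rescales the reachable set isotropically: R(Σ₀, D, T) = e^{−2Tα}·R(Σ₀, D + αI, T). -/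
open MeasureTheory Matrix

lemma exp_fubini (a t : ℝ) (ht : 0 ≤ t) (g : ℝ → ℝ) (hgm : Measurable g)
    (hg : IntegrableOn g (Set.Ioc 0 t)) :
    ∫ s in Set.Ioc (0:ℝ) t, ((-a * Real.exp (-a*s)) * ∫ u in Set.Ioc (0:ℝ) s, g u)
      = ∫ u in Set.Ioc (0:ℝ) t, (Real.exp (-a*t) - Real.exp (-a*u)) * g u := by
  have hμfin : IsFiniteMeasure (volume.restrict (Set.Ioc (0:ℝ) t)) := by
    constructor
    rw [Measure.restrict_apply_univ]
    exact measure_Ioc_lt_top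
  set F : ℝ → ℝ → ℝ := fun s u => if u ≤ s then (-a * Real.exp (-a*s)) * g u else 0 with hF
  set μ : Measure ℝ := volume.restrict (Set.Ioc (0:ℝ) t) with hμ
  set C : ℝ := |a| * Real.exp (|a| * t) with hC
  have hC0 : 0 ≤ C := by positivity
  have hFm : AEStronglyMeasurable (Function.uncurry F) (μ.prod μ) := by
    have h1 : MeasurableSet {p : ℝ × ℝ | p.2 ≤ p.1} :=
      measurableSet_le measurable_snd measurable_fst
    have h2 : Measurable fun p : ℝ × ℝ => (-a * Real.exp (-a*p.1)) * g p.2 :=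
      ((measurable_const.mul ((measurable_const.mul measurable_fst).exp))).mul
        (hgm.comp measurable_snd)
    have h3 : Function.uncurry F = fun p : ℝ × ℝ =>
        Set.indicator {p : ℝ × ℝ | p.2 ≤ p.1} (fun p => (-a * Real.exp (-a*p.1)) * g p.2) p := by
      funext p
      simp [Function.uncurry, hF, Set.indicator_apply]
    rw [h3]
    exact (h2.indicator h1).aestronglyMeasurable
  have hgabs : Integrable (fun u => |g u|) μ := hg.abs
  have hbound : Integrable (fun p : ℝ × ℝ => C * |g p.2|) (μ.prod μ) := by
    rw [integrable_prod_iff]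
    · constructor
      · exact Filter.Eventually.of_forall fun s => hgabs.const_mul _
      · have hval : ∀ s : ℝ, (∫ u, ‖C * |g u|‖ ∂μ) = C * ∫ u, |g u| ∂μ := by
          intro s
          have : ∀ u : ℝ, ‖C * |g u|‖ = C * |g u| := by
            intro u
            rw [Real.norm_eq_abs, abs_of_nonneg (by positivity)]
          simp_rw [this]
          exact integral_const_mul _ _
        refine Integrable.mono' (integrable_const (C * ∫ u, |g u| ∂μ))
          (aestronglyMeasurable_const :
            AEStronglyMeasurable (fun _ : ℝ => ∫ y, ‖C * |g y|‖ ∂μ) μ)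
          (Filter.Eventually.of_forall fun s => ?_)
        rw [Real.norm_eq_abs, hval s, abs_of_nonneg (by positivity)]
    · exact (measurable_const.mul ((hgm.comp measurable_snd).abs)).aestronglyMeasurable
  have hFint : Integrable (Function.uncurry F) (μ.prod μ) := by
    apply Integrable.mono' hbound hFm
    have hnull : (μ.prod μ) {p : ℝ × ℝ | ¬ (p.1 ∈ Set.Ioc (0:ℝ) t)} = 0 := by
      have h1 : {p : ℝ × ℝ | ¬ (p.1 ∈ Set.Ioc (0:ℝ) t)}
          = (Set.Ioc (0:ℝ) t)ᶜ ×ˢ (Set.univ : Set ℝ) := by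
        ext p; simp
      rw [h1, Measure.prod_prod]
      have h2 : μ ((Set.Ioc (0:ℝ) t)ᶜ) = 0 := by
        rw [hμ, Measure.restrict_apply measurableSet_Ioc.compl]
        simp
      rw [h2, zero_mul]
    have hael : ∀ᵐ p : ℝ × ℝ ∂(μ.prod μ), p.1 ∈ Set.Ioc (0:ℝ) t := ae_iff.2 hnull
    filter_upwards [hael] with p hp
    simp only [Function.uncurry, hF]
    split_ifs with h
    · have h5 : Real.exp (-a * p.1) ≤ Real.exp (|a| * t) := by
        rw [Real.exp_le_exp]
        calc -a * p.1 ≤ |(-a) * p.1| := le_abs_self _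
          _ = |a| * |p.1| := by rw [abs_mul, abs_neg]
          _ ≤ |a| * t := by
              apply mul_le_mul le_rfl _ (abs_nonneg _) (abs_nonneg _)
              rw [abs_of_pos hp.1]; exact hp.2
      calc ‖-a * Real.exp (-a*p.1) * g p.2‖
          = |a| * Real.exp (-a*p.1) * |g p.2| := by
            rw [Real.norm_eq_abs, abs_mul, abs_mul, abs_neg,
              abs_of_pos (Real.exp_pos _)]
        _ ≤ C * |g p.2| := by
            rw [hC]
            apply mul_le_mul _ le_rfl (abs_nonneg _) (by positivity)
            exact mul_le_mul le_rfl h5 (Real.exp_pos _).le (abs_nonneg _)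
    · simp only [norm_zero]
      positivity
  calc ∫ s in Set.Ioc (0:ℝ) t, ((-a * Real.exp (-a*s)) * ∫ u in Set.Ioc (0:ℝ) s, g u)
      = ∫ s, (∫ u, F s u ∂μ) ∂μ := by
        apply setIntegral_congr_fun measurableSet_Ioc
        intro s hs
        dsimp only
        have h1 : (∫ u, F s u ∂μ)
            = ∫ u in Set.Ioc (0:ℝ) t,
                (Set.Iic s).indicator (fun u => (-a * Real.exp (-a*s)) * g u) u := by
          rw [hμ]
          apply integral_congr_ae
          refine Filter.Eventually.of_forall fun u => ?_
          simp [hF, Set.indicator_apply]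
        rw [h1, setIntegral_indicator measurableSet_Iic]
        have h2 : Set.Ioc (0:ℝ) t ∩ Set.Iic s = Set.Ioc 0 s := by
          ext x
          simp only [Set.mem_inter_iff, Set.mem_Ioc, Set.mem_Iic]
          constructor
          · rintro ⟨⟨hx0, _⟩, hxs⟩; exact ⟨hx0, hxs⟩
          · rintro ⟨hx0, hxs⟩; exact ⟨⟨hx0, hxs.trans hs.2⟩, hxs⟩
        rw [h2, integral_const_mul]
    _ = ∫ u, (∫ s, F s u ∂μ) ∂μ := integral_integral_swap hFint
    _ = ∫ u in Set.Ioc (0:ℝ) t, (Real.exp (-a*t) - Real.exp (-a*u)) * g u := by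
        apply setIntegral_congr_fun measurableSet_Ioc
        intro u hu
        dsimp only
        have h1 : (∫ s, F s u ∂μ)
            = ∫ s in Set.Ioc (0:ℝ) t,
                (Set.Ici u).indicator (fun s => (-a * Real.exp (-a*s)) * g u) s := by
          rw [hμ]
          apply integral_congr_ae
          refine Filter.Eventually.of_forall fun s => ?_
          by_cases h : u ≤ s <;> simp [hF, Set.indicator_apply, h]
        rw [h1, setIntegral_indicator measurableSet_Ici]
        have h2 : Set.Ioc (0:ℝ) t ∩ Set.Ici u = Set.Icc u t := by
          ext x
          simp only [Set.mem_inter_iff, Set.mem_Ioc, Set.mem_Icc, Set.mem_Ici]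
          constructor
          · rintro ⟨⟨_, hxt⟩, hux⟩; exact ⟨hux, hxt⟩
          · rintro ⟨hux, hxt⟩; exact ⟨⟨lt_of_lt_of_le hu.1 hux, hxt⟩, hux⟩
        have h3 : ∫ s in Set.Icc u t, ((-a * Real.exp (-a*s)) * g u)
            = (∫ s in Set.Icc u t, (-a * Real.exp (-a*s))) * g u := integral_mul_const _ _
        rw [h2, h3]
        congr 1
        rw [integral_Icc_eq_integral_Ioc, ← intervalIntegral.integral_of_le hu.2]
        have h4 : ∀ s ∈ Set.uIcc u t,
            HasDerivAt (fun x => Real.exp (-a*x)) (-a * Real.exp (-a*s)) s := by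
          intro s _
          have h5 : HasDerivAt (fun x : ℝ => -a*x) (-a) s := by
            simpa using (hasDerivAt_id s).const_mul (-a)
          simpa [mul_comm] using h5.exp
        rw [intervalIntegral.integral_eq_sub_of_hasDerivAt h4]
        exact (Continuous.intervalIntegrable (by continuity) _ _)

lemma key_scalar (a c T t : ℝ) (ht : t ∈ Set.Icc (0:ℝ) T) (g : ℝ → ℝ)
    (hg : IntervalIntegrable g volume 0 T) :
    Real.exp (-a*t) * (c + ∫ s in (0:ℝ)..t, g s)
      = c + ∫ s in (0:ℝ)..t,
          (Real.exp (-a*s) * g s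
            - a * Real.exp (-a*s) * (c + ∫ u in (0:ℝ)..s, g u)) := by
  obtain ⟨ht0, htT⟩ := ht
  have hgt : IntervalIntegrable g volume 0 t :=
    hg.mono_set (by
      rw [Set.uIcc_of_le ht0, Set.uIcc_of_le (ht0.trans htT)]
      exact Set.Icc_subset_Icc le_rfl htT)
  have hgtIoc : IntegrableOn g (Set.Ioc 0 t) :=
    (intervalIntegrable_iff_integrableOn_Ioc_of_le ht0).1 hgt
  -- measurable modification
  have hsm := hgtIoc.aestronglyMeasurable
  set g' : ℝ → ℝ := hsm.mk g with hg'def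
  have hgg' : g =ᵐ[volume.restrict (Set.Ioc (0:ℝ) t)] g' := hsm.ae_eq_mk
  have hg'm : Measurable g' := hsm.stronglyMeasurable_mk.measurable
  have hg'Ioc : IntegrableOn g' (Set.Ioc 0 t) := hgtIoc.congr_fun_ae hgg'
  -- primitive and notation
  set E : ℝ → ℝ := fun s => Real.exp (-a*s) with hE
  have hEcont : Continuous E := by continuity
  -- continuity of the primitive
  have hFcont : ContinuousOn (fun s => ∫ u in (0:ℝ)..s, g u) (Set.uIcc (0:ℝ) t) :=
    intervalIntegral.continuousOn_primitive_interval' hgt Set.left_mem_uIcc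
  -- integrability of pieces
  have h1 : IntervalIntegrable (fun s => E s * g s) volume 0 t :=
    hgt.continuousOn_mul hEcont.continuousOn
  have h2cont : ContinuousOn
      (fun s => a * E s * (c + ∫ u in (0:ℝ)..s, g u)) (Set.uIcc (0:ℝ) t) :=
    ((continuousOn_const.mul hEcont.continuousOn).mul
      (continuousOn_const.add hFcont))
  have h2 : IntervalIntegrable
      (fun s => a * E s * (c + ∫ u in (0:ℝ)..s, g u)) volume 0 t :=
    h2cont.intervalIntegrable
  rw [intervalIntegral.integral_sub h1 h2]
  -- compute ∫ a*E s ds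
  have hJ : (∫ s in (0:ℝ)..t, a * E s) = 1 - E t := by
    have h4 : ∀ s ∈ Set.uIcc (0:ℝ) t,
        HasDerivAt (fun x => -Real.exp (-a*x)) (a * E s) s := by
      intro s _
      have h5 : HasDerivAt (fun x : ℝ => -a*x) (-a) s := by
        simpa using (hasDerivAt_id s).const_mul (-a)
      have h6 : HasDerivAt (fun x => -Real.exp (-a*x)) (-(Real.exp (-a*s) * -a)) s :=
        h5.exp.neg
      simpa [hE, mul_comm, neg_mul] using h6
    rw [intervalIntegral.integral_eq_sub_of_hasDerivAt h4
      (Continuous.intervalIntegrable (by continuity) _ _)]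
    simp [hE]
    ring
  -- compute ∫ a*E s * F s ds via Fubini
  have hEg' : IntegrableOn (fun s => E s * g' s) (Set.Ioc 0 t) := by
    apply (((intervalIntegrable_iff_integrableOn_Ioc_of_le ht0).1 h1)).congr_fun_ae
    filter_upwards [hgg'] with x hx
    rw [hx]
  have hK : (∫ s in (0:ℝ)..t, a * E s * (∫ u in (0:ℝ)..s, g u))
      = (∫ s in (0:ℝ)..t, E s * g s) - E t * (∫ u in (0:ℝ)..t, g u) := by
    rw [intervalIntegral.integral_of_le ht0]
    have step1 : (∫ s in Set.Ioc (0:ℝ) t, a * E s * (∫ u in (0:ℝ)..s, g u))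
        = -∫ s in Set.Ioc (0:ℝ) t, ((-a * E s) * ∫ u in Set.Ioc (0:ℝ) s, g' u) := by
      rw [← integral_neg]
      apply setIntegral_congr_fun measurableSet_Ioc
      intro s hs
      dsimp only
      have : (∫ u in (0:ℝ)..s, g u) = ∫ u in Set.Ioc (0:ℝ) s, g' u := by
        rw [intervalIntegral.integral_of_le hs.1.le]
        exact integral_congr_ae
          (ae_restrict_of_ae_restrict_of_subset (Set.Ioc_subset_Ioc le_rfl hs.2) hgg')
      rw [this]; ring
    rw [step1, exp_fubini a t ht0 g' hg'm hg'Ioc]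
    have step2 : (∫ u in Set.Ioc (0:ℝ) t, (Real.exp (-a*t) - Real.exp (-a*u)) * g' u)
        = E t * (∫ u in Set.Ioc (0:ℝ) t, g' u) - ∫ u in Set.Ioc (0:ℝ) t, E u * g' u := by
      have : ∀ u, (Real.exp (-a*t) - Real.exp (-a*u)) * g' u
          = E t * g' u - E u * g' u := by intro u; rw [hE]; ring
      simp_rw [this]
      rw [integral_sub ((hg'Ioc.const_mul _)) hEg', integral_const_mul]
    rw [step2]
    have e1 : (∫ u in Set.Ioc (0:ℝ) t, g' u) = ∫ u in (0:ℝ)..t, g u := by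
      rw [intervalIntegral.integral_of_le ht0]
      exact (integral_congr_ae hgg').symm
    have e2 : (∫ u in Set.Ioc (0:ℝ) t, E u * g' u) = ∫ s in (0:ℝ)..t, E s * g s := by
      rw [intervalIntegral.integral_of_le ht0]
      apply integral_congr_ae
      filter_upwards [hgg'] with x hx
      rw [hx]
    rw [e1, e2]
    ring
  -- put everything together
  have hsplit : (∫ s in (0:ℝ)..t, a * E s * (c + ∫ u in (0:ℝ)..s, g u))
      = c * (∫ s in (0:ℝ)..t, a * E s)
        + ∫ s in (0:ℝ)..t, a * E s * (∫ u in (0:ℝ)..s, g u) := by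
    have hsum : (fun s => a * E s * (c + ∫ u in (0:ℝ)..s, g u))
        = fun s => c * (a * E s) + a * E s * (∫ u in (0:ℝ)..s, g u) := by
      funext s; ring
    have ha : IntervalIntegrable (fun s => c * (a * E s)) volume 0 t :=
      Continuous.intervalIntegrable (by continuity) _ _
    have hb : IntervalIntegrable
        (fun s => a * E s * (∫ u in (0:ℝ)..s, g u)) volume 0 t :=
      (((continuousOn_const.mul hEcont.continuousOn)).mul hFcont).intervalIntegrable
    rw [hsum, intervalIntegral.integral_add ha hb, intervalIntegral.integral_const_mul]
  rw [hsplit, hJ, hK]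
  ring

lemma posDef_smul' {n : ℕ} {M : Matrix (Fin n) (Fin n) ℝ} (hM : M.PosDef) {c : ℝ}
    (hc : 0 < c) : (c • M).PosDef := by
  refine ⟨?_, fun x hx => ?_⟩
  · have h1 : (c • M)ᴴ = c • Mᴴ := by
      ext i j; simp [Matrix.conjTranspose_apply]
    rw [Matrix.IsHermitian, h1, hM.1.eq]
  · have h2 := hM.2 hx
    have h4 : (x.sum fun i xi => x.sum fun j xj => star xi * (c • M) i j * xj)
        = c * (x.sum fun i xi => x.sum fun j xj => star xi * M i j * xj) := by
      simp only [Finsupp.mul_sum, Matrix.smul_apply, smul_eq_mul]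
      apply Finsupp.sum_congr; intro i _; apply Finsupp.sum_congr; intro j _; ring
    rw [h4]
    exact mul_pos hc h2

lemma reach_shift {n : ℕ} (T α : ℝ) (hT : 0 ≤ T) (D P₀ P : Matrix (Fin n) (Fin n) ℝ)
    (h : IsReachable P₀ P (D + α • (1 : Matrix (Fin n) (Fin n) ℝ)) T) :
    IsReachable P₀ (Real.exp (-(2*T*α)) • P) D T := by
  obtain ⟨U, S, hUm, hUo, hSpos, hS0, hST, hInt, hEq⟩ := h
  set a : ℝ := 2*α with ha
  set D' : Matrix (Fin n) (Fin n) ℝ := D + α • (1 : Matrix (Fin n) (Fin n) ℝ) with hD'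
  -- pointwise matrix identity on [0,T]
  have hAB : ∀ t ∈ Set.Icc (0:ℝ) T, ∀ i j,
      ((U t * D * (U t)ᵀ) * (Real.exp (-a*t) • S t)
        + (Real.exp (-a*t) • S t) * (U t * D * (U t)ᵀ)) i j
      = Real.exp (-a*t) * (((U t * D' * (U t)ᵀ) * S t + S t * (U t * D' * (U t)ᵀ)) i j)
        - a * Real.exp (-a*t) * (S t i j) := by
    intro t ht i j
    have hA : U t * D' * (U t)ᵀ
        = U t * D * (U t)ᵀ + α • (1 : Matrix (Fin n) (Fin n) ℝ) := by
      calc U t * D' * (U t)ᵀ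
          = U t * D * (U t)ᵀ + α • (U t * (U t)ᵀ) := by
            rw [hD', Matrix.mul_add, Matrix.add_mul, Matrix.mul_smul,
              Matrix.smul_mul, Matrix.mul_one]
        _ = _ := by rw [hUo t ht]
    rw [hA]
    simp only [Matrix.add_mul, Matrix.mul_add, Matrix.smul_mul, Matrix.mul_smul,
      Matrix.one_mul, Matrix.mul_one, Matrix.add_apply, Matrix.smul_apply, smul_eq_mul, ha]
    ring
  refine ⟨U, fun t => Real.exp (-a*t) • S t, hUm, hUo,
    fun t ht => posDef_smul' (hSpos t ht) (Real.exp_pos _), ?_, ?_, ?_, ?_⟩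
  · simp [hS0]
  · show Real.exp (-a*T) • S T = _
    rw [hST]
    congr 1
    rw [ha]
    ring_nf
  · intro i j
    set f : ℝ → ℝ :=
      fun u => ((U u * D' * (U u)ᵀ) * S u + S u * (U u * D' * (U u)ᵀ)) i j with hf
    set ψ : ℝ → ℝ := fun s =>
      Real.exp (-a*s) * f s
        - a * Real.exp (-a*s) * (P₀ i j + ∫ u in (0:ℝ)..s, f u) with hψdef
    have hold : IntervalIntegrable f volume 0 T := hInt i j
    have hψ : IntervalIntegrable ψ volume 0 T := by
      apply IntervalIntegrable.sub
      · exact hold.continuousOn_mul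
          (Real.continuous_exp.comp (continuous_const.mul continuous_id)).continuousOn
      · exact (((continuousOn_const.mul
          (Real.continuous_exp.comp
            (continuous_const.mul continuous_id)).continuousOn)).mul
          (continuousOn_const.add
            (intervalIntegral.continuousOn_primitive_interval' hold
              Set.left_mem_uIcc))).intervalIntegrable
    have hEqOn : ∀ s ∈ Set.Icc (0:ℝ) T,
        ((U s * D * (U s)ᵀ) * (Real.exp (-a*s) • S s)
          + (Real.exp (-a*s) • S s) * (U s * D * (U s)ᵀ)) i j = ψ s := by
      intro s hs
      rw [hAB s hs i j, hψdef]
      dsimp only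
      rw [← hEq s hs i j]
    rw [intervalIntegrable_iff_integrableOn_Ioc_of_le hT]
    exact ((intervalIntegrable_iff_integrableOn_Ioc_of_le hT).1 hψ).congr_fun
      (fun s hs => (hEqOn s (Set.Ioc_subset_Icc_self hs)).symm) measurableSet_Ioc
  · intro t ht i j
    set f : ℝ → ℝ :=
      fun u => ((U u * D' * (U u)ᵀ) * S u + S u * (U u * D' * (U u)ᵀ)) i j with hf
    have hold : IntervalIntegrable f volume 0 T := hInt i j
    have hEqOn : ∀ s ∈ Set.Icc (0:ℝ) T,
        ((U s * D * (U s)ᵀ) * (Real.exp (-a*s) • S s)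
          + (Real.exp (-a*s) • S s) * (U s * D * (U s)ᵀ)) i j
        = Real.exp (-a*s) * f s
            - a * Real.exp (-a*s) * (P₀ i j + ∫ u in (0:ℝ)..s, f u) := by
      intro s hs
      rw [hAB s hs i j]
      rw [← hEq s hs i j]
    have h5 : (∫ s in (0:ℝ)..t,
        ((U s * D * (U s)ᵀ) * (Real.exp (-a*s) • S s)
          + (Real.exp (-a*s) • S s) * (U s * D * (U s)ᵀ)) i j)
        = ∫ s in (0:ℝ)..t, (Real.exp (-a*s) * f s
            - a * Real.exp (-a*s) * (P₀ i j + ∫ u in (0:ℝ)..s, f u)) := by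
      apply intervalIntegral.integral_congr
      intro s hs
      apply hEqOn s
      rw [Set.uIcc_of_le ht.1] at hs
      exact ⟨hs.1, hs.2.trans ht.2⟩
    show Real.exp (-a*t) • S t i j = _
    rw [smul_eq_mul, hEq t ht i j, h5]
    exact key_scalar a (P₀ i j) T t ht f hold

/-- Remark 2, isotropic scaling of the reachable set.
`Σ ∈ R(Σ₀, D + αI, T)` if and only if `e^{−2Tα}·Σ ∈ R(Σ₀, D, T)`, i.e.
`R(Σ₀, D, T) = e^{−2Tα}·R(Σ₀, D + αI, T)`. -/
theorem isReachable_add_smul_one_iff_smul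
    {n : ℕ} (hn : 1 ≤ n) (T α : ℝ) (hT : 0 < T)
    (D P₀ P : Matrix (Fin n) (Fin n) ℝ) (hD : D.IsDiag)
    (hP₀ : P₀.PosDef) (hP : P.PosDef) :
    IsReachable P₀ P (D + α • (1 : Matrix (Fin n) (Fin n) ℝ)) T ↔
      IsReachable P₀ (Real.exp (-(2 * T * α)) • P) D T := by
  constructor
  · intro h
    exact reach_shift T α hT.le D P₀ P h
  · intro h
    have hDD : (D + α • (1 : Matrix (Fin n) (Fin n) ℝ))
        + (-α) • (1 : Matrix (Fin n) (Fin n) ℝ) = D := by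
      rw [add_assoc, ← add_smul]
      simp
    have h2 := reach_shift T (-α) hT.le
      (D + α • (1 : Matrix (Fin n) (Fin n) ℝ)) P₀
      (Real.exp (-(2 * T * α)) • P) (by rwa [hDD])
    rwa [smul_smul, ← Real.exp_add,
      show -(2*T*(-α)) + -(2*T*α) = 0 by ring, Real.exp_zero, one_smul] at h2
end

section
/- Let A be a real n×n matrix and 1 ≤ k ≤ n. Then for every t ∈ ℝ, the multiplicative compound of the matrix exponential equals the exponential of the additive compound: ∧ᵏ(exp(tA)) = exp(t·A^[k]). -/
open MeasureTheory Matrix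

/-- The `k`-th multiplicative compound of `X`: the matrix indexed by the
`k`-element subsets of `{1,…,n}` whose `(I,J)` entry is the `k×k` minor of `X`
with rows `I` and columns `J`. -/
noncomputable def mulCompound {n : ℕ} (k : ℕ) (X : Matrix (Fin n) (Fin n) ℝ) :
    Matrix {s : Finset (Fin n) // s.card = k} {s : Finset (Fin n) // s.card = k} ℝ :=
  fun I J =>
    (X.submatrix (fun a : Fin k => (I.1.orderIsoOfFin I.2 a : Fin n))
      (fun a : Fin k => (J.1.orderIsoOfFin J.2 a : Fin n))).det

/-- The `k`-th additive compound of `A`: the entrywise derivative at `t = 0`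
of `t ↦ ∧ᵏ(I + tA)`. -/
noncomputable def addCompound {n : ℕ} (k : ℕ) (A : Matrix (Fin n) (Fin n) ℝ) :
    Matrix {s : Finset (Fin n) // s.card = k} {s : Finset (Fin n) // s.card = k} ℝ :=
  fun I J =>
    deriv (fun t : ℝ => mulCompound k ((1 : Matrix (Fin n) (Fin n) ℝ) + t • A) I J) 0

/-- The singular values of a real square matrix `M`: the square roots of the
eigenvalues of `MᵀM` (as an unordered family). -/
noncomputable def singularValues {m : Type*} [Fintype m] [DecidableEq m]
    (M : Matrix m m ℝ) : m → ℝ :=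
  fun i => Real.sqrt ((show (Mᵀ * M).IsHermitian by
    simpa [Matrix.conjTranspose_eq_transpose_of_trivial] using
      Matrix.isHermitian_conjTranspose_mul_self M).eigenvalues i)

/-- The operator (spectral) norm of a real square matrix, i.e. the norm of the
induced linear operator on Euclidean space. -/
noncomputable def opNorm {m : Type*} [Fintype m] [DecidableEq m]
    (M : Matrix m m ℝ) : ℝ :=
  ‖(Matrix.toEuclideanCLM (𝕜 := ℝ) M : EuclideanSpace ℝ m →L[ℝ] EuclideanSpace ℝ m)‖

namespace MCAux

open Finset Equiv Equiv.Perm Function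


variable {n k : ℕ}

noncomputable def es (s : {s : Finset (Fin n) // s.card = k}) : Fin k → Fin n :=
  fun a => (s.1.orderIsoOfFin s.2 a : Fin n)

lemma es_injective (s : {s : Finset (Fin n) // s.card = k}) : Function.Injective (es s) :=
  fun a b h => (s.1.orderIsoOfFin s.2).injective (Subtype.ext h)

lemma es_mem (s : {s : Finset (Fin n) // s.card = k}) (a : Fin k) : es s a ∈ s.1 :=
  (s.1.orderIsoOfFin s.2 a).2

lemma sum_perm_eq_zero (M : Matrix (Fin k) (Fin n) ℝ) (N : Matrix (Fin n) (Fin k) ℝ)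
    {p : Fin k → Fin n} (H : ¬Function.Injective p) :
    (∑ σ : Perm (Fin k), ((Equiv.Perm.sign σ : ℤ) : ℝ) * ∏ x, M (σ x) (p x) * N (p x) x) = 0 := by
  obtain ⟨i, j, hpij, hij⟩ : ∃ i j, p i = p j ∧ i ≠ j := by
    rw [Function.Injective] at H
    push_neg at H
    obtain ⟨i, j, h1, h2⟩ := H
    exact ⟨i, j, h1, h2⟩
  exact
    Finset.sum_involution (fun σ _ => σ * Equiv.swap i j)
      (fun σ _ => by
        have : (∏ x, M (σ x) (p x)) = ∏ x, M ((σ * Equiv.swap i j) x) (p x) :=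
          Fintype.prod_equiv (Equiv.swap i j) _ _ (by simp [Equiv.apply_swap_eq_self hpij])
        simp [this, sign_swap hij, -sign_swap', prod_mul_distrib])
      (fun σ _ _ => (not_congr mul_swap_eq_iff).mpr hij) (fun _ _ => Finset.mem_univ _)
      fun σ _ => mul_swap_involutive i j σ



lemma range_es (s : {s : Finset (Fin n) // s.card = k}) (y : Fin n) :
    y ∈ s.1 ↔ ∃ i, es s i = y := by
  constructor
  · intro hy
    refine ⟨(s.1.orderIsoOfFin s.2).symm ⟨y, hy⟩, ?_⟩
    simp [es]
  · rintro ⟨i, rfl⟩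
    exact es_mem s i

lemma cauchy_binet (M : Matrix (Fin k) (Fin n) ℝ) (N : Matrix (Fin n) (Fin k) ℝ) :
    (M * N).det = ∑ s : {s : Finset (Fin n) // s.card = k},
      (M.submatrix id (es s)).det * (N.submatrix (es s) id).det :=
  calc
    (M * N).det = ∑ p : Fin k → Fin n, ∑ σ : Perm (Fin k),
        ((Equiv.Perm.sign σ : ℤ) : ℝ) * ∏ i, M (σ i) (p i) * N (p i) i := by
      simp only [det_apply', Matrix.mul_apply, Finset.prod_univ_sum, Finset.mul_sum,
        Fintype.piFinset_univ]
      rw [Finset.sum_comm]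
    _ = ∑ p : Fin k → Fin n with Function.Injective p, ∑ σ : Perm (Fin k),
        ((Equiv.Perm.sign σ : ℤ) : ℝ) * ∏ i, M (σ i) (p i) * N (p i) i := by
      refine (Finset.sum_subset (Finset.filter_subset _ _) fun p _ hp =>
        sum_perm_eq_zero M N ?_).symm
      simpa using hp
    _ = ∑ x : {s : Finset (Fin n) // s.card = k} × Perm (Fin k), ∑ σ : Perm (Fin k),
        ((Equiv.Perm.sign σ : ℤ) : ℝ) * ∏ i, M (σ i) (es x.1 (x.2 i)) * N (es x.1 (x.2 i)) i := by
      refine (Finset.sum_bij (fun (x : {s : Finset (Fin n) // s.card = k} × Perm (Fin k)) _ =>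
        (fun i => es x.1 (x.2 i))) ?_ ?_ ?_ ?_).symm
      · intro x _
        simp only [Finset.mem_filter, Finset.mem_univ, true_and]
        exact (es_injective x.1).comp x.2.injective
      · rintro ⟨s₁, τ₁⟩ _ ⟨s₂, τ₂⟩ _ h
        have hs : s₁ = s₂ := by
          refine Subtype.ext (Finset.ext fun y => ?_)
          rw [range_es, range_es]
          constructor
          · rintro ⟨i, rfl⟩
            exact ⟨τ₂ (τ₁.symm i), by simpa using (congrFun h (τ₁.symm i)).symm⟩
          · rintro ⟨i, rfl⟩
            exact ⟨τ₁ (τ₂.symm i), by simpa using congrFun h (τ₂.symm i)⟩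
        subst hs
        simp only [Prod.mk.injEq, true_and]
        exact Equiv.ext fun i => es_injective s₁ (congrFun h i)
      · intro p hp
        have hpi : Function.Injective p := by simpa using hp
        have hcard : (Finset.univ.image p).card = k := by
          rw [Finset.card_image_of_injective _ hpi, Finset.card_univ, Fintype.card_fin]
        set s : {s : Finset (Fin n) // s.card = k} := ⟨Finset.univ.image p, hcard⟩ with hs
        have hmem : ∀ i, p i ∈ s.1 := fun i => Finset.mem_image_of_mem p (Finset.mem_univ i)
        set τ : Fin k → Fin k := fun i => (s.1.orderIsoOfFin s.2).symm ⟨p i, hmem i⟩ with hτ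
        have hτi : Function.Injective τ := by
          intro a b hab
          apply hpi
          have := (s.1.orderIsoOfFin s.2).symm.injective.eq_iff.mp hab
          exact congrArg Subtype.val this
        refine ⟨⟨s, Equiv.ofBijective τ ((Finite.injective_iff_bijective).mp hτi)⟩,
          Finset.mem_univ _, ?_⟩
        funext i
        show es s (τ i) = p i
        simp [es, hτ]
      · intro x _
        rfl
    _ = ∑ s : {s : Finset (Fin n) // s.card = k}, ∑ τ : Perm (Fin k), ∑ σ : Perm (Fin k),
        ((Equiv.Perm.sign σ : ℤ) : ℝ) * ∏ i, M (σ i) (es s (τ i)) * N (es s (τ i)) i := by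
      rw [Fintype.sum_prod_type]
    _ = ∑ s : {s : Finset (Fin n) // s.card = k},
        (M.submatrix id (es s)).det * (N.submatrix (es s) id).det := by
      refine Finset.sum_congr rfl fun s _ => ?_
      have h1 : ∀ τ : Perm (Fin k), (∑ σ : Perm (Fin k),
          ((Equiv.Perm.sign σ : ℤ) : ℝ) * ∏ i, M (σ i) (es s (τ i)) * N (es s (τ i)) i)
          = ∑ ρ : Perm (Fin k), (((Equiv.Perm.sign ρ : ℤ) : ℝ) * ∏ i, M (ρ i) (es s i)) *
              (((Equiv.Perm.sign τ : ℤ) : ℝ) * ∏ i, N (es s (τ i)) i) := by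
        intro τ
        refine (Fintype.sum_equiv (Equiv.mulRight τ) _ _ fun ρ => ?_).symm
        simp only [Equiv.coe_mulRight, Equiv.Perm.sign_mul, Units.val_mul, Int.cast_mul,
          Finset.prod_mul_distrib, Equiv.Perm.coe_mul, Function.comp_apply]
        rw [← Equiv.prod_comp τ (fun j => M (ρ j) (es s j))]
        ring
      simp only [h1]
      rw [Finset.sum_comm, det_apply', det_apply', Finset.sum_mul_sum]
      simp only [Matrix.submatrix_apply, id_eq]

lemma mulCompound_apply {n k : ℕ} (X : Matrix (Fin n) (Fin n) ℝ)
    (I J : {s : Finset (Fin n) // s.card = k}) :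
    mulCompound k X I J = (X.submatrix (es I) (es J)).det := rfl

lemma mulCompound_mul {n k : ℕ} (X Y : Matrix (Fin n) (Fin n) ℝ) :
    mulCompound k (X * Y) = mulCompound k X * mulCompound k Y := by
  ext I J
  rw [Matrix.mul_apply]
  rw [mulCompound_apply,
    Matrix.submatrix_mul X Y (es I) id (es J) Function.bijective_id, cauchy_binet]
  refine Finset.sum_congr rfl fun s _ => ?_
  rw [mulCompound_apply, mulCompound_apply]
  simp [Matrix.submatrix_submatrix, Function.comp_def]

lemma mulCompound_one {n k : ℕ} :
    mulCompound k (1 : Matrix (Fin n) (Fin n) ℝ) = 1 := by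
  ext I J
  by_cases h : I = J
  · subst h
    rw [mulCompound_apply, Matrix.submatrix_one (es I) (es_injective I), Matrix.det_one,
      Matrix.one_apply_eq]
  · rw [Matrix.one_apply_ne h]
    obtain ⟨x, hxJ, hxI⟩ : ∃ x, x ∈ J.1 ∧ x ∉ I.1 := by
      by_contra hc
      push_neg at hc
      exact h (Subtype.ext (Finset.eq_of_subset_of_card_le hc (by rw [I.2, J.2])).symm)
    obtain ⟨b, hb⟩ : ∃ b, es J b = x :=
      ⟨(J.1.orderIsoOfFin J.2).symm ⟨x, hxJ⟩, by simp [es]⟩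
    rw [mulCompound_apply]
    apply Matrix.det_eq_zero_of_column_eq_zero b
    intro a
    rw [Matrix.submatrix_apply, Matrix.one_apply_ne]
    intro hax
    exact hxI (hb ▸ hax ▸ es_mem I a)

lemma hasDerivAt_det {m : Type*} [Fintype m] [DecidableEq m] {f : ℝ → Matrix m m ℝ}
    {f' : Matrix m m ℝ} {t : ℝ} (hf : ∀ i j, HasDerivAt (fun s => f s i j) (f' i j) t) :
    HasDerivAt (fun s => (f s).det)
      (∑ σ : Perm m, ((Equiv.Perm.sign σ : ℤ) : ℝ) *
        ∑ i, (∏ j ∈ Finset.univ.erase i, f t (σ j) j) * f' (σ i) i) t := by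
  simp only [Matrix.det_apply']
  refine HasDerivAt.fun_sum fun σ _ => ?_
  have h := (HasDerivAt.fun_finsetProd (u := Finset.univ) (f := fun i s => f s (σ i) i)
    (f' := fun i => f' (σ i) i) (x := t) (fun i _ => hf (σ i) i)).const_mul
    (((Equiv.Perm.sign σ : ℤ) : ℝ))
  simpa [smul_eq_mul, Finset.mul_sum] using h

/-- The candidate additive compound: the directional derivative of the minor map at `1`
in direction `A`. -/
noncomputable def Cmat {n : ℕ} (k : ℕ) (A : Matrix (Fin n) (Fin n) ℝ) :
    Matrix {s : Finset (Fin n) // s.card = k} {s : Finset (Fin n) // s.card = k} ℝ :=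
  fun I J => ∑ σ : Perm (Fin k), ((Equiv.Perm.sign σ : ℤ) : ℝ) *
    ∑ i, (∏ j ∈ Finset.univ.erase i, (1 : Matrix (Fin n) (Fin n) ℝ) (es I (σ j)) (es J j)) *
      A (es I (σ i)) (es J i)

lemma hasDerivAt_mulCompound_entry {n k : ℕ} {A : Matrix (Fin n) (Fin n) ℝ}
    {γ : ℝ → Matrix (Fin n) (Fin n) ℝ} {t : ℝ} (hγ0 : γ t = 1)
    (hγ : ∀ a b, HasDerivAt (fun s => γ s a b) (A a b) t)
    (I J : {s : Finset (Fin n) // s.card = k}) :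
    HasDerivAt (fun s => mulCompound k (γ s) I J) (Cmat k A I J) t := by
  have h := hasDerivAt_det (f := fun s => (γ s).submatrix (es I) (es J))
    (f' := A.submatrix (es I) (es J)) (t := t)
    (fun i j => hγ (es I i) (es J j))
  simp only [Matrix.submatrix_apply, hγ0] at h
  exact h


lemma entry_hasDerivAt_exp {m : Type*} [Fintype m] [DecidableEq m] (M : Matrix m m ℝ) (t : ℝ)
    (i j : m) :
    HasDerivAt (fun u : ℝ => NormedSpace.exp (u • M) i j)
      ((M * NormedSpace.exp (t • M)) i j) t := by
  letI : SeminormedRing (Matrix m m ℝ) := Matrix.linftyOpSemiNormedRing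
  letI : NormedRing (Matrix m m ℝ) := Matrix.linftyOpNormedRing
  letI : NormedAlgebra ℝ (Matrix m m ℝ) := Matrix.linftyOpNormedAlgebra
  have H := hasDerivAt_exp_smul_const' (𝕂 := ℝ) M t
  have hcont : Continuous (fun X : Matrix m m ℝ => X i j) :=
    (continuous_apply j).comp (continuous_apply i)
  let ψ : Matrix m m ℝ →ₗ[ℝ] ℝ :=
    { toFun := fun X => X i j, map_add' := fun _ _ => rfl, map_smul' := fun _ _ => rfl }
  let φ : Matrix m m ℝ →L[ℝ] ℝ := ⟨ψ, hcont⟩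
  exact φ.hasFDerivAt.comp_hasDerivAt t H

lemma addCompound_eq {n k : ℕ} (A : Matrix (Fin n) (Fin n) ℝ) :
    addCompound k A = Cmat k A := by
  ext I J
  have h : HasDerivAt (fun t : ℝ => mulCompound k ((1 : Matrix (Fin n) (Fin n) ℝ) + t • A) I J)
      (Cmat k A I J) 0 := by
    refine hasDerivAt_mulCompound_entry (by simp) (fun a b => ?_) I J
    have heq : (fun s : ℝ => ((1 : Matrix (Fin n) (Fin n) ℝ) + s • A) a b)
        = fun s : ℝ => (1 : Matrix (Fin n) (Fin n) ℝ) a b + s * A a b := by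
      funext s
      simp [Matrix.add_apply, Matrix.smul_apply, smul_eq_mul]
    rw [heq]
    simpa using ((hasDerivAt_id (0 : ℝ)).mul_const (A a b)).const_add
      ((1 : Matrix (Fin n) (Fin n) ℝ) a b)
  exact h.deriv

lemma hasDerivAt_G0 {n k : ℕ} (A : Matrix (Fin n) (Fin n) ℝ)
    (I K : {s : Finset (Fin n) // s.card = k}) :
    HasDerivAt (fun u : ℝ => mulCompound k (NormedSpace.exp (u • A)) I K)
      (Cmat k A I K) 0 := by
  refine hasDerivAt_mulCompound_entry ?_ (fun a b => ?_) I K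
  · rw [zero_smul, NormedSpace.exp_zero]
  · have h := entry_hasDerivAt_exp A 0 a b
    rw [zero_smul, NormedSpace.exp_zero, mul_one] at h
    exact h

end MCAux

/-- exponential relation between the two compounds:
`∧ᵏ(exp(tA)) = exp(t·A^[k])` for all `t ∈ ℝ`. -/
theorem mulCompound_exp
    {n k : ℕ} (hk1 : 1 ≤ k) (hkn : k ≤ n)
    (A : Matrix (Fin n) (Fin n) ℝ) (t : ℝ) :
    mulCompound k (NormedSpace.exp (t • A)) =
      NormedSpace.exp (t • addCompound k A) := by
  classical
  rw [MCAux.addCompound_eq]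
  set C := MCAux.Cmat k A with hC
  have hF : ∀ (t : ℝ) (I J : {s : Finset (Fin n) // s.card = k}),
      HasDerivAt (fun s : ℝ => mulCompound k (NormedSpace.exp (s • A)) I J)
        ((C * mulCompound k (NormedSpace.exp (t • A))) I J) t := by
    intro t I J
    have hfac : ∀ s : ℝ, mulCompound k (NormedSpace.exp (s • A)) I J
        = ∑ K, mulCompound k (NormedSpace.exp ((s - t) • A)) I K *
            mulCompound k (NormedSpace.exp (t • A)) K J := by
      intro s
      rw [← Matrix.mul_apply, ← MCAux.mulCompound_mul, ← Matrix.exp_add_of_commute _ _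
        (((Commute.refl A).smul_left (s - t)).smul_right t), ← add_smul, sub_add_cancel]
    simp only [hfac]
    rw [Matrix.mul_apply]
    refine HasDerivAt.fun_sum fun K _ => ?_
    have h0 : HasDerivAt (fun u : ℝ => mulCompound k (NormedSpace.exp (u • A)) I K)
        (C I K) ((fun s : ℝ => s - t) t) := by
      simp only [sub_self]; exact MCAux.hasDerivAt_G0 A I K
    have h1 := HasDerivAt.comp (x := t) (h := fun s : ℝ => s - t) h0
      ((hasDerivAt_id t).sub_const t)
    simpa [Function.comp_def, mul_one] using
      h1.mul_const (mulCompound k (NormedSpace.exp (t • A)) K J)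
  have hE' : ∀ (t : ℝ) (I K : {s : Finset (Fin n) // s.card = k}),
      HasDerivAt (fun s : ℝ => NormedSpace.exp ((-s) • C) I K)
        (-((C * NormedSpace.exp ((-t) • C)) I K)) t := by
    intro t I K
    have h0 : HasDerivAt (fun u : ℝ => NormedSpace.exp (u • C) I K)
        ((C * NormedSpace.exp ((-t) • C)) I K) ((fun s : ℝ => -s) t) :=
      MCAux.entry_hasDerivAt_exp C (-t) I K
    have h1 := HasDerivAt.comp (x := t) (h := fun s : ℝ => -s) h0 (hasDerivAt_neg t)
    simpa [Function.comp_def, mul_neg_one] using h1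
  have hH : ∀ (I J : {s : Finset (Fin n) // s.card = k}) (t : ℝ),
      HasDerivAt (fun s : ℝ => ∑ K, NormedSpace.exp ((-s) • C) I K *
        mulCompound k (NormedSpace.exp (s • A)) K J) 0 t := by
    intro I J t
    have h := HasDerivAt.fun_sum (u := Finset.univ)
      (fun (K : {s : Finset (Fin n) // s.card = k}) _ => (hE' t I K).mul (hF t K J))
    have hcomm : C * NormedSpace.exp ((-t) • C) = NormedSpace.exp ((-t) • C) * C :=
      ((((Commute.refl C).smul_left (-t)).exp_left)).eq.symm
    set E := NormedSpace.exp ((-t) • C) with hE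
    set F := mulCompound k (NormedSpace.exp (t • A)) with hFdef
    have hzero : ∑ K, (-((C * E) I K) * F K J + E I K * ((C * F) K J)) = 0 := by
      calc ∑ K, (-((C * E) I K) * F K J + E I K * ((C * F) K J))
          = ∑ K, (-((C * E) I K * F K J) + E I K * ((C * F) K J)) := by simp [neg_mul]
        _ = -∑ K, (C * E) I K * F K J + ∑ K, E I K * ((C * F) K J) := by
            rw [Finset.sum_add_distrib, Finset.sum_neg_distrib]
        _ = -(((C * E) * F) I J) + (E * (C * F)) I J := by
            rw [← Matrix.mul_apply, ← Matrix.mul_apply]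
        _ = 0 := by rw [← Matrix.mul_assoc, ← hcomm, neg_add_cancel]
    rw [← hzero]
    exact h
  have hconst : ∀ (I J : {s : Finset (Fin n) // s.card = k}) (t : ℝ),
      ∑ K, NormedSpace.exp ((-t) • C) I K *
        mulCompound k (NormedSpace.exp (t • A)) K J = (1 : Matrix _ _ ℝ) I J := by
    intro I J t
    have h := is_const_of_deriv_eq_zero (𝕜 := ℝ)
      (f := fun s : ℝ => ∑ K, NormedSpace.exp ((-s) • C) I K *
        mulCompound k (NormedSpace.exp (s • A)) K J)
      (fun s => (hH I J s).differentiableAt) (fun s => (hH I J s).deriv) t 0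
    rw [h]
    simp only [neg_zero, zero_smul, NormedSpace.exp_zero, MCAux.mulCompound_one]
    rw [← Matrix.mul_apply, one_mul]
  have hmatrix : ∀ t : ℝ, NormedSpace.exp ((-t) • C) *
      mulCompound k (NormedSpace.exp (t • A)) = 1 := by
    intro t
    ext I J
    rw [Matrix.mul_apply]
    exact hconst I J t
  have hinv : NormedSpace.exp (t • C) * NormedSpace.exp ((-t) • C) = 1 := by
    rw [← Matrix.exp_add_of_commute _ _ (((Commute.refl C).smul_left t).smul_right (-t)),
      ← add_smul, add_neg_cancel, zero_smul, NormedSpace.exp_zero]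
  calc mulCompound k (NormedSpace.exp (t • A))
      = 1 * mulCompound k (NormedSpace.exp (t • A)) := (one_mul _).symm
    _ = NormedSpace.exp (t • C) * (NormedSpace.exp ((-t) • C) *
        mulCompound k (NormedSpace.exp (t • A))) := by rw [← hinv, Matrix.mul_assoc]
    _ = NormedSpace.exp (t • C) * 1 := by rw [hmatrix t]
    _ = NormedSpace.exp (t • C) := mul_one _
end

section
/- Let T > 0, let B : [0,T] → ℝ^{n×n} be integrable with B_t symmetric for almost every t, and let Z : [0,T] → ℝ^{n×n} be absolutely continuous with Z'(t) = B_t Z_t for almost every t ∈ [0,T]. Then for all 0 ≤ s ≤ t ≤ T, the operator norm satisfies ‖Z_t‖ ≤ exp(∫ₛᵗ λ_max(B_τ) dτ) · ‖Z_s‖, where λ_max(B) denotes the largest eigenvalue of the symmetric matrix B. -/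
open MeasureTheory Matrix

/-- The largest eigenvalue of a real symmetric matrix (junk value `0` if the
matrix is not symmetric). -/
noncomputable def lambdaMax {n : ℕ} (B : Matrix (Fin n) (Fin n) ℝ) : ℝ :=
  if h : B.IsHermitian then ⨆ i, h.eigenvalues i else 0

section Auxiliary

open Set


lemma integral_parts {s t : ℝ} {g h : ℝ → ℝ}
    (hg : IntegrableOn g (Set.Ioc s t))
    (hh : IntegrableOn h (Set.Ioc s t)) :
    (∫ τ in Set.Ioc s t, g τ * ∫ σ in Set.Ioc s τ, h σ)
      + ∫ τ in Set.Ioc s t, h τ * ∫ σ in Set.Ioc s τ, g σ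
    = (∫ τ in Set.Ioc s t, g τ) * ∫ τ in Set.Ioc s t, h τ := by
  set μ := volume.restrict (Set.Ioc s t) with hμ
  have hgμ : Integrable g μ := hg
  have hhμ : Integrable h μ := hh
  have hbase : Integrable (fun p : ℝ × ℝ => g p.1 * h p.2) (μ.prod μ) :=
    hgμ.mul_prod hhμ
  have hbase' : Integrable (fun p : ℝ × ℝ => h p.1 * g p.2) (μ.prod μ) :=
    hhμ.mul_prod hgμ
  have hA : MeasurableSet {p : ℝ × ℝ | p.2 ≤ p.1} :=
    measurableSet_le measurable_snd measurable_fst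
  have hF1 : Integrable (fun p : ℝ × ℝ => if p.2 ≤ p.1 then g p.1 * h p.2 else 0) (μ.prod μ) := by
    have := hbase.indicator hA
    exact this.congr (Filter.Eventually.of_forall fun p => by simp [Set.indicator_apply])
  have hF2 : Integrable (fun p : ℝ × ℝ => if p.2 ≤ p.1 then h p.1 * g p.2 else 0) (μ.prod μ) := by
    have := hbase'.indicator hA
    exact this.congr (Filter.Eventually.of_forall fun p => by simp [Set.indicator_apply])
  -- inner integral identity
  have key : ∀ (f : ℝ → ℝ), ∀ τ ∈ Set.Ioc s t,
      (∫ σ in Set.Ioc s τ, f σ) = ∫ σ, (if σ ≤ τ then f σ else 0) ∂μ := by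
    intro f τ hτ
    have h1 : Set.Ioc s τ = Set.Iic τ ∩ Set.Ioc s t := by
      ext x; simp only [Set.mem_Ioc, Set.mem_inter_iff, Set.mem_Iic]
      constructor
      · rintro ⟨h1, h2⟩; exact ⟨h2, h1, h2.trans hτ.2⟩
      · rintro ⟨h2, h1, _⟩; exact ⟨h1, h2⟩
    rw [h1, ← Measure.restrict_restrict measurableSet_Iic, ← hμ,
      ← integral_indicator measurableSet_Iic]
    simp [Set.indicator_apply]
  -- first term as a double integral
  have T1 : (∫ τ in Set.Ioc s t, g τ * ∫ σ in Set.Ioc s τ, h σ)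
      = ∫ τ, (∫ σ, (if σ ≤ τ then g τ * h σ else 0) ∂μ) ∂μ := by
    refine integral_congr_ae ?_
    filter_upwards [ae_restrict_mem measurableSet_Ioc] with τ hτ
    rw [key h τ hτ, ← integral_const_mul]
    congr 1 with σ
    by_cases hc : σ ≤ τ <;> simp [hc]
  -- second term as a double integral, then swapped
  have T2 : (∫ τ in Set.Ioc s t, h τ * ∫ σ in Set.Ioc s τ, g σ)
      = ∫ τ, (∫ σ, (if τ ≤ σ then h σ * g τ else 0) ∂μ) ∂μ := by
    have e1 : (∫ τ in Set.Ioc s t, h τ * ∫ σ in Set.Ioc s τ, g σ)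
        = ∫ τ, (∫ σ, (if σ ≤ τ then h τ * g σ else 0) ∂μ) ∂μ := by
      refine integral_congr_ae ?_
      filter_upwards [ae_restrict_mem measurableSet_Ioc] with τ hτ
      rw [key g τ hτ, ← integral_const_mul]
      congr 1 with σ
      by_cases hc : σ ≤ τ <;> simp [hc]
    rw [e1, integral_integral_swap hF2]
  rw [T1, T2, ← integral_add hF1.integral_prod_left hF2.integral_prod_right]
  have hone : (∫ τ, g τ ∂μ) * ∫ τ, h τ ∂μ = ∫ τ, (g τ * ∫ σ, h σ ∂μ) ∂μ := by
    rw [integral_mul_const]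
  rw [hone]
  refine integral_congr_ae ?_
  filter_upwards [hF1.prod_right_ae, hF2.prod_left_ae] with τ h1 h2
  have hne : ∀ᵐ σ ∂μ, σ ≠ τ := by
    refine ae_iff.mpr ?_
    have : {σ : ℝ | ¬ σ ≠ τ} = {τ} := by ext x; simp
    rw [this]
    exact le_antisymm ((Measure.restrict_le_self _).trans_eq (measure_singleton τ)) zero_le
  rw [← integral_add h1 h2, ← integral_const_mul]
  refine integral_congr_ae ?_
  filter_upwards [hne] with σ hσ
  rcases lt_trichotomy σ τ with hc | hc | hc
  · simp [hc.le, not_le.mpr hc, mul_comm]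
  · exact absurd hc hσ
  · simp [not_le.mpr hc, hc.le, mul_comm]

lemma primitive_pow_identity {s t : ℝ} {c : ℝ → ℝ}
    (hc : IntegrableOn c (Set.Icc s t)) (k : ℕ) :
    ∀ u ∈ Set.Icc s t,
      (∫ τ in Set.Ioc s u, c τ * (∫ σ in Set.Ioc s τ, c σ) ^ k)
        = (∫ τ in Set.Ioc s u, c τ) ^ (k + 1) / (k + 1) := by
  have hCcont : ContinuousOn (fun u => ∫ τ in Set.Ioc s u, c τ) (Set.Icc s t) :=
    intervalIntegral.continuousOn_primitive hc
  induction k with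
  | zero =>
      intro u hu
      simp
  | succ k ih =>
      intro u hu
      set C : ℝ → ℝ := fun u => ∫ τ in Set.Ioc s u, c τ with hC
      have hsub : Set.Ioc s u ⊆ Set.Icc s t := fun x hx =>
        ⟨le_of_lt hx.1, hx.2.trans hu.2⟩
      have hgi : IntegrableOn c (Set.Ioc s u) := hc.mono_set hsub
      have hpowcont : ∀ m : ℕ, ContinuousOn (fun τ => C τ ^ m) (Set.Icc s t) :=
        fun m => hCcont.pow m
      have hhi : IntegrableOn (fun τ => c τ * C τ ^ k) (Set.Ioc s u) :=
        hgi.mul_continuousOn_of_subset (hpowcont k) measurableSet_Ioc isCompact_Icc hsub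
      have hparts := integral_parts hgi hhi
      -- rewrite inner integral of h via ih
      have hIH : ∀ τ ∈ Set.Ioc s u,
          (∫ σ in Set.Ioc s τ, c σ * C σ ^ k) = C τ ^ (k + 1) / (k + 1) := by
        intro τ hτ
        exact ih τ (hsub hτ)
      have e1 : (∫ τ in Set.Ioc s u, c τ * ∫ σ in Set.Ioc s τ, (c σ * C σ ^ k))
          = (1 / ((k:ℝ) + 1)) * ∫ τ in Set.Ioc s u, c τ * C τ ^ (k + 1) := by
        rw [← integral_const_mul]
        refine setIntegral_congr_fun measurableSet_Ioc ?_
        intro τ hτ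
        show c τ * (∫ σ in Set.Ioc s τ, c σ * C σ ^ k) = 1 / ((k:ℝ) + 1) * (c τ * C τ ^ (k + 1))
        rw [hIH τ hτ]
        push_cast
        ring
      have e2 : (∫ τ in Set.Ioc s u, (c τ * C τ ^ k) * ∫ σ in Set.Ioc s τ, c σ)
          = ∫ τ in Set.Ioc s u, c τ * C τ ^ (k + 1) := by
        refine setIntegral_congr_fun measurableSet_Ioc ?_
        intro τ hτ
        show (c τ * C τ ^ k) * C τ = c τ * C τ ^ (k + 1)
        ring
      have e3 : (∫ σ in Set.Ioc s u, (c σ * C σ ^ k)) = C u ^ (k + 1) / (k + 1) := ih u hu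
      rw [e3] at hparts
      rw [e1, e2] at hparts
      have hk : ((k:ℝ) + 1) ≠ 0 := by positivity
      have hk2 : ((k:ℝ) + 2) ≠ 0 := by positivity
      -- hparts : (1/(k+1)) * J + J = C u * (C u ^ (k+1) / (k+1))
      set J := ∫ τ in Set.Ioc s u, c τ * C τ ^ (k + 1) with hJ
      have h4 : J * ((k:ℝ) + 2) = C u ^ (k + 2) := by
        field_simp at hparts
        linear_combination hparts
      show J = C u ^ (k + 1 + 1) / (↑(k + 1) + 1)
      push_cast
      rw [show k + 1 + 1 = k + 2 from rfl]
      field_simp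
      linear_combination h4

lemma exp_primitive_rep {s t : ℝ} {c : ℝ → ℝ} (hc : IntegrableOn c (Set.Icc s t)) :
    ∀ u ∈ Set.Icc s t,
      Real.exp (-(∫ τ in Set.Ioc s u, c τ))
        = 1 + ∫ τ in Set.Ioc s u, (- c τ) * Real.exp (-(∫ σ in Set.Ioc s τ, c σ)) := by
  intro u hu
  set C : ℝ → ℝ := fun v => ∫ τ in Set.Ioc s v, c τ with hCdef
  have hCcont : ContinuousOn C (Set.Icc s t) := intervalIntegral.continuousOn_primitive hc
  obtain ⟨M, hM⟩ := isCompact_Icc.exists_bound_of_continuousOn hCcont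
  have hM0 : 0 ≤ M := le_trans (norm_nonneg _) (hM s ⟨le_refl s, hu.1.trans hu.2⟩)
  have hsub : Set.Ioc s u ⊆ Set.Icc s t := fun x hx => ⟨le_of_lt hx.1, hx.2.trans hu.2⟩
  have hci : IntegrableOn c (Set.Ioc s u) := hc.mono_set hsub
  -- the summands
  set F : ℕ → ℝ → ℝ := fun k τ => (- c τ) * (- C τ) ^ k / (k.factorial : ℝ) with hFdef
  have hFint : ∀ k, IntegrableOn (F k) (Set.Ioc s u) := by
    intro k
    have h1 : IntegrableOn (fun τ => c τ * ((- C τ) ^ k / (k.factorial : ℝ))) (Set.Ioc s u) :=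
      hci.mul_continuousOn_of_subset
        (((hCcont.neg).pow k).div_const _) measurableSet_Ioc isCompact_Icc hsub
    have : F k = fun τ => -(c τ * ((- C τ) ^ k / (k.factorial : ℝ))) := by
      funext τ; simp [hFdef]; ring
    rw [this]
    exact h1.neg
  have hFnorm : ∀ k, (∫ τ in Set.Ioc s u, ‖F k τ‖)
      ≤ (M ^ k / (k.factorial : ℝ)) * ∫ τ in Set.Ioc s u, |c τ| := by
    intro k
    rw [← integral_const_mul]
    refine setIntegral_mono_on (hFint k).norm ((hci.abs).const_mul _) measurableSet_Ioc ?_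
    intro τ hτ
    have hCb : |C τ| ≤ M := by
      have := hM τ (hsub hτ); rwa [Real.norm_eq_abs] at this
    have : ‖F k τ‖ = |c τ| * (|C τ| ^ k / (k.factorial : ℝ)) := by
      simp [hFdef, abs_mul, abs_div, abs_pow, abs_neg]
      ring
    rw [this]
    have h1 : |C τ| ^ k ≤ M ^ k := pow_le_pow_left₀ (abs_nonneg _) hCb k
    have h2 : (0:ℝ) < (k.factorial : ℝ) := by positivity
    have h3 : (0:ℝ) ≤ |c τ| := abs_nonneg _
    calc |c τ| * (|C τ| ^ k / (k.factorial : ℝ))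
        ≤ |c τ| * (M ^ k / (k.factorial : ℝ)) := by
          gcongr
      _ = M ^ k / (k.factorial : ℝ) * |c τ| := by ring
  have hsumm : Summable (fun k => ∫ τ in Set.Ioc s u, ‖F k τ‖) := by
    refine Summable.of_nonneg_of_le (fun k => integral_nonneg (fun τ => norm_nonneg _)) hFnorm ?_
    exact (Real.summable_pow_div_factorial M).mul_right _
  have hHasSum := MeasureTheory.hasSum_integral_of_summable_integral_norm hFint hsumm
  have hptwise : ∀ τ : ℝ, (∑' k, F k τ) = (- c τ) * Real.exp (- C τ) := by
    intro τ
    have h5 : HasSum (fun k => (- C τ) ^ k / (k.factorial : ℝ)) (Real.exp (- C τ)) := by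
      rw [Real.exp_eq_exp_ℝ]
      exact NormedSpace.expSeries_div_hasSum_exp _
    have : (fun k => F k τ) = fun k => (- c τ) * ((- C τ) ^ k / (k.factorial : ℝ)) := by
      funext k; simp only [hFdef]; ring
    rw [this, tsum_mul_left, h5.tsum_eq]
  have hIk : ∀ k : ℕ, (∫ τ in Set.Ioc s u, F k τ) = (- C u) ^ (k + 1) / ((k+1).factorial : ℝ) := by
    intro k
    have hI := primitive_pow_identity hc k u hu
    have e1 : (∫ τ in Set.Ioc s u, F k τ)
        = ((-1 : ℝ) ^ (k + 1) / (k.factorial : ℝ)) * ∫ τ in Set.Ioc s u, c τ * C τ ^ k := by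
      rw [← integral_const_mul]
      refine setIntegral_congr_fun measurableSet_Ioc (fun τ _ => ?_)
      show (- c τ) * (- C τ) ^ k / (k.factorial : ℝ) = _
      rw [neg_pow (C τ) k]
      ring
    rw [e1, hI, neg_pow (C u) (k+1)]
    have hfac : (((k+1).factorial : ℝ)) = ((k:ℝ)+1) * (k.factorial : ℝ) := by
      rw [Nat.factorial_succ]; push_cast; ring
    rw [hfac]
    have h2 : (k.factorial : ℝ) ≠ 0 := by positivity
    have h3 : ((k:ℝ) + 1) ≠ 0 := by positivity
    field_simp
    ring_nf
    tauto
  have h5 : HasSum (fun k : ℕ => (- C u) ^ k / (k.factorial : ℝ)) (Real.exp (- C u)) := by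
    rw [Real.exp_eq_exp_ℝ]
    exact NormedSpace.expSeries_div_hasSum_exp _
  have h6 : HasSum (fun k : ℕ => (- C u) ^ (k + 1) / ((k+1).factorial : ℝ))
      (Real.exp (- C u) - 1) := by
    have := (hasSum_nat_add_iff' (f := fun k : ℕ => (- C u) ^ k / (k.factorial : ℝ)) 1).mpr h5
    simpa using this
  have hFk : (fun k : ℕ => ∫ τ in Set.Ioc s u, F k τ)
      = fun k : ℕ => (- C u) ^ (k + 1) / ((k+1).factorial : ℝ) := funext hIk
  have hmain : (∫ τ in Set.Ioc s u, ∑' k, F k τ) = Real.exp (- C u) - 1 := by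
    refine HasSum.unique ?_ h6
    rw [← hFk]
    exact hHasSum
  have hcongr : (∫ τ in Set.Ioc s u, (- c τ) * Real.exp (-(∫ σ in Set.Ioc s τ, c σ)))
      = ∫ τ in Set.Ioc s u, ∑' k, F k τ := by
    refine integral_congr_ae (Filter.Eventually.of_forall (fun τ => ?_))
    exact (hptwise τ).symm
  rw [hcongr, hmain]
  ring

lemma gronwall_aux {s t : ℝ} (hst : s ≤ t) {c q f : ℝ → ℝ}
    (hc : IntegrableOn c (Set.Icc s t))
    (hq : IntegrableOn q (Set.Icc s t))
    (hf : ∀ u ∈ Set.Icc s t, f u = f s + ∫ τ in Set.Ioc s u, q τ)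
    (hfnn : ∀ u ∈ Set.Icc s t, 0 ≤ f u)
    (hqc : ∀ᵐ τ ∂(volume.restrict (Set.Ioc s t)), q τ ≤ c τ * f τ) :
    f t ≤ f s * Real.exp (∫ τ in Set.Ioc s t, c τ) := by
  rcases eq_or_lt_of_le hst with rfl | hlt
  · have h := hf s ⟨le_refl s, le_refl s⟩
    simp only [Set.Ioc_self, Measure.restrict_empty, integral_zero_measure] at h ⊢
    rw [h]
    simp
  have htt : t ∈ Set.Icc s t := ⟨hst, le_refl t⟩
  have htt' : t ∈ Set.Ioc s t := ⟨hlt, le_refl t⟩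
  set C : ℝ → ℝ := fun v => ∫ τ in Set.Ioc s v, c τ with hCdef
  set E : ℝ → ℝ := fun v => Real.exp (- C v) with hEdef
  have hCcont : ContinuousOn C (Set.Icc s t) := intervalIntegral.continuousOn_primitive hc
  have hEcont : ContinuousOn E (Set.Icc s t) := (hCcont.neg).rexp
  have hfcont : ContinuousOn f (Set.Icc s t) := by
    have h1 : ContinuousOn (fun u => f s + ∫ τ in Set.Ioc s u, q τ) (Set.Icc s t) :=
      (continuousOn_const).add (intervalIntegral.continuousOn_primitive hq)
    exact ContinuousOn.congr h1 hf
  have hErep := exp_primitive_rep hc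
  have hqi : IntegrableOn q (Set.Ioc s t) := hq.mono_set Set.Ioc_subset_Icc_self
  have hci : IntegrableOn c (Set.Ioc s t) := hc.mono_set Set.Ioc_subset_Icc_self
  have hcE : IntegrableOn (fun τ => c τ * E τ) (Set.Ioc s t) :=
    hci.mul_continuousOn_of_subset hEcont measurableSet_Ioc isCompact_Icc
      Set.Ioc_subset_Icc_self
  have hcfE : IntegrableOn (fun τ => - c τ * E τ) (Set.Ioc s t) := by
    exact hcE.neg.congr (Filter.Eventually.of_forall fun τ => by simp [neg_mul])
  have hqE : IntegrableOn (fun τ => q τ * E τ) (Set.Ioc s t) :=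
    hqi.mul_continuousOn_of_subset hEcont measurableSet_Ioc isCompact_Icc
      Set.Ioc_subset_Icc_self
  have hcEf : IntegrableOn (fun τ => (- c τ * E τ) * f τ) (Set.Ioc s t) :=
    hcfE.mul_continuousOn_of_subset hfcont measurableSet_Ioc isCompact_Icc
      Set.Ioc_subset_Icc_self
  -- inner integral identities
  have hinner1 : ∀ τ ∈ Set.Ioc s t, (∫ σ in Set.Ioc s τ, - c σ * E σ) = E τ - 1 := by
    intro τ hτ
    have h := hErep τ (Set.Ioc_subset_Icc_self hτ)
    have h2 : (∫ σ in Set.Ioc s τ, - c σ * E σ)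
        = ∫ σ in Set.Ioc s τ, (- c σ) * Real.exp (-(∫ σ' in Set.Ioc s σ, c σ')) :=
      setIntegral_congr_fun measurableSet_Ioc (fun σ _ => by rw [neg_mul])
    have hEτ : E τ = Real.exp (-(∫ σ in Set.Ioc s τ, c σ)) := rfl
    rw [h2, hEτ, h]
    ring
  have hinner2 : ∀ τ ∈ Set.Ioc s t, (∫ σ in Set.Ioc s τ, q σ) = f τ - f s := by
    intro τ hτ
    have := hf τ (Set.Ioc_subset_Icc_self hτ)
    linarith [this]
  have hparts := integral_parts hqi hcfE
  have e1 : (∫ τ in Set.Ioc s t, q τ * ∫ σ in Set.Ioc s τ, - c σ * E σ)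
      = ∫ τ in Set.Ioc s t, q τ * (E τ - 1) := by
    refine setIntegral_congr_fun measurableSet_Ioc (fun τ hτ => ?_)
    simp only [hinner1 τ hτ]
  have e2 : (∫ τ in Set.Ioc s t, (- c τ * E τ) * ∫ σ in Set.Ioc s τ, q σ)
      = ∫ τ in Set.Ioc s t, (- c τ * E τ) * (f τ - f s) := by
    refine setIntegral_congr_fun measurableSet_Ioc (fun τ hτ => ?_)
    simp only [hinner2 τ hτ]
  rw [e1, e2, hinner1 t htt', hinner2 t htt'] at hparts
  -- split the integrals
  have s1 : (∫ τ in Set.Ioc s t, q τ * (E τ - 1))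
      = (∫ τ in Set.Ioc s t, q τ * E τ) - (f t - f s) := by
    have : (∫ τ in Set.Ioc s t, q τ * (E τ - 1))
        = (∫ τ in Set.Ioc s t, (q τ * E τ - q τ)) :=
      setIntegral_congr_fun measurableSet_Ioc (fun τ _ => by ring)
    rw [this, integral_sub hqE hqi, hinner2 t htt']
  have s2 : (∫ τ in Set.Ioc s t, (- c τ * E τ) * (f τ - f s))
      = (∫ τ in Set.Ioc s t, (- c τ * E τ) * f τ) - f s * (E t - 1) := by
    have : (∫ τ in Set.Ioc s t, (- c τ * E τ) * (f τ - f s))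
        = (∫ τ in Set.Ioc s t, ((- c τ * E τ) * f τ - f s * (- c τ * E τ))) :=
      setIntegral_congr_fun measurableSet_Ioc (fun τ _ => by ring)
    rw [this, integral_sub hcEf (hcfE.const_mul _), integral_const_mul, hinner1 t htt']
  rw [s1, s2] at hparts
  -- the combined integral and its sign
  have hD : (∫ τ in Set.Ioc s t, (q τ * E τ + (- c τ * E τ) * f τ))
      = f t * E t - f s := by
    rw [integral_add hqE hcEf]
    linarith [hparts]
  have hDneg : (∫ τ in Set.Ioc s t, (q τ * E τ + (- c τ * E τ) * f τ)) ≤ 0 := by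
    refine integral_nonpos_of_ae ?_
    filter_upwards [hqc, ae_restrict_mem measurableSet_Ioc] with τ hqcτ hτ
    have hE0 : 0 ≤ E τ := le_of_lt (Real.exp_pos _)
    have hfE : q τ * E τ ≤ (c τ * f τ) * E τ := mul_le_mul_of_nonneg_right hqcτ hE0
    show q τ * E τ + (- c τ * E τ) * f τ ≤ 0
    nlinarith [hfE]
  have hkey : f t * E t ≤ f s := by linarith [hD, hDneg]
  have hEt : E t = Real.exp (- C t) := rfl
  have hexp : E t * Real.exp (C t) = 1 := by
    rw [hEt, ← Real.exp_add]
    simp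
  have := mul_le_mul_of_nonneg_right hkey (le_of_lt (Real.exp_pos (C t)))
  calc f t = f t * (E t * Real.exp (C t)) := by rw [hexp]; ring
    _ = f t * E t * Real.exp (C t) := by ring
    _ ≤ f s * Real.exp (C t) := this

lemma sq_rep {s t : ℝ} {g a : ℝ → ℝ} (hg : IntegrableOn g (Set.Icc s t))
    (ha : ∀ u ∈ Set.Icc s t, a u = a s + ∫ τ in Set.Ioc s u, g τ) :
    ∀ u ∈ Set.Icc s t, a u ^ 2 = a s ^ 2 + ∫ τ in Set.Ioc s u, 2 * g τ * a τ := by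
  have hacont : ContinuousOn a (Set.Icc s t) := by
    have h1 : ContinuousOn (fun u => a s + ∫ τ in Set.Ioc s u, g τ) (Set.Icc s t) :=
      (continuousOn_const).add (intervalIntegral.continuousOn_primitive hg)
    exact ContinuousOn.congr h1 ha
  intro u hu
  have hsub : Set.Ioc s u ⊆ Set.Icc s t := fun x hx => ⟨le_of_lt hx.1, hx.2.trans hu.2⟩
  have hgu : IntegrableOn g (Set.Ioc s u) := hg.mono_set hsub
  have hparts := integral_parts hgu hgu
  set G : ℝ → ℝ := fun τ => ∫ σ in Set.Ioc s τ, g σ with hG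
  have hGa : ∀ τ ∈ Set.Ioc s u, G τ = a τ - a s := by
    intro τ hτ
    have := ha τ (hsub hτ)
    rw [this]
    ring
  have hga : IntegrableOn (fun τ => g τ * (a τ - a s)) (Set.Ioc s u) :=
    hgu.mul_continuousOn_of_subset (hacont.sub continuousOn_const) measurableSet_Ioc
      isCompact_Icc hsub
  have e0 : (∫ τ in Set.Ioc s u, 2 * g τ * a τ)
      = ∫ τ in Set.Ioc s u, (2 * a s * g τ + 2 * (g τ * (a τ - a s))) :=
    setIntegral_congr_fun measurableSet_Ioc (fun τ _ => by ring)
  have e1 : (∫ τ in Set.Ioc s u, (2 * a s * g τ + 2 * (g τ * (a τ - a s))))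
      = 2 * a s * G u + 2 * ∫ τ in Set.Ioc s u, g τ * (a τ - a s) := by
    rw [integral_add ((hgu.const_mul _)) (hga.const_mul _), integral_const_mul,
      integral_const_mul]
  have e2 : (∫ τ in Set.Ioc s u, g τ * (a τ - a s))
      = ∫ τ in Set.Ioc s u, g τ * G τ :=
    setIntegral_congr_fun measurableSet_Ioc (fun τ hτ => by rw [hGa τ hτ])
  have e3 : (∫ τ in Set.Ioc s u, g τ * G τ) + (∫ τ in Set.Ioc s u, g τ * G τ)
      = G u * G u := hparts
  have e4 : a u = a s + G u := ha u hu
  rw [e0, e1, e2, e4]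
  ring_nf
  nlinarith [e3]

end Auxiliary

section Spectral

lemma lambdaMax_of_hermitian {n : ℕ} {B : Matrix (Fin n) (Fin n) ℝ} (hB : B.IsHermitian) :
    lambdaMax B = ⨆ i, hB.eigenvalues i := by
  rw [lambdaMax, dif_pos hB]

lemma inner_euclidean {n : ℕ} (x z : EuclideanSpace ℝ (Fin n)) :
    (inner ℝ x z : ℝ) = ∑ i, x i * z i := by
  rw [PiLp.inner_apply]
  simp [RCLike.inner_apply, mul_comm]

lemma toEuclideanCLM_apply' {n : ℕ} (B : Matrix (Fin n) (Fin n) ℝ)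
    (y : EuclideanSpace ℝ (Fin n)) (i : Fin n) :
    (Matrix.toEuclideanCLM (𝕜 := ℝ) B) y i = B.mulVec (⇑y) i := rfl

lemma selfadj {n : ℕ} {B : Matrix (Fin n) (Fin n) ℝ} (hB : B.IsHermitian) :
    IsSelfAdjoint (Matrix.toEuclideanCLM (𝕜 := ℝ) B) := by
  have : star B = B := hB
  rw [show _root_.IsSelfAdjoint (Matrix.toEuclideanCLM (𝕜 := ℝ) B) ↔ star (Matrix.toEuclideanCLM (𝕜 := ℝ) B) = Matrix.toEuclideanCLM (𝕜 := ℝ) B from Iff.rfl, ← map_star, this]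

lemma quad_le_sum {n : ℕ} {B : Matrix (Fin n) (Fin n) ℝ} (hB : B.IsHermitian) (x : Fin n → ℝ) :
    ∑ i, (B.mulVec x i) * x i ≤ lambdaMax B * ∑ i, (x i)^2 := by
  classical
  set y : EuclideanSpace ℝ (Fin n) := (WithLp.equiv 2 (Fin n → ℝ)).symm x with hy
  set A := Matrix.toEuclideanCLM (𝕜 := ℝ) B with hA
  set b := hB.eigenvectorBasis with hb
  have hAb : ∀ i, A (b i) = hB.eigenvalues i • (b i) := by
    intro i
    have h1 := hB.mulVec_eigenvectorBasis i
    apply (WithLp.equiv 2 (Fin n → ℝ)).injective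
    funext j
    have : (WithLp.equiv 2 (Fin n → ℝ)) (A (b i)) j = B.mulVec (⇑(b i)) j := rfl
    rw [this, h1]
    rfl
  have hself : ∀ i, (inner ℝ (b i) (A y) : ℝ) = hB.eigenvalues i * (inner ℝ (b i) y : ℝ) := by
    intro i
    have h1 : (inner ℝ (b i) (A y) : ℝ) = (inner ℝ (A (b i)) y : ℝ) := by
      rw [← ContinuousLinearMap.adjoint_inner_left]
      congr 1
      exact congrFun (congrArg _ ((ContinuousLinearMap.isSelfAdjoint_iff' ).mp (selfadj hB))) (b i)
    rw [h1, hAb i, real_inner_smul_left]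
  have hsum := b.sum_inner_mul_inner y (A y)
  have hsum2 := b.sum_inner_mul_inner y y
  have hquad : (inner ℝ y (A y) : ℝ) = ∑ i, hB.eigenvalues i * ((inner ℝ y (b i) : ℝ) * (inner ℝ y (b i) : ℝ)) := by
    rw [← hsum]
    refine Finset.sum_congr rfl (fun i _ => ?_)
    rw [hself i, real_inner_comm (b i) y]
    ring
  have hbdd : BddAbove (Set.range hB.eigenvalues) := Set.Finite.bddAbove (Set.finite_range _)
  have hle : (inner ℝ y (A y) : ℝ) ≤ lambdaMax B * (inner ℝ y y : ℝ) := by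
    rw [hquad, lambdaMax_of_hermitian hB, ← hsum2]
    have : ∀ i, (inner ℝ y (b i) : ℝ) * (inner ℝ (b i) y : ℝ) = (inner ℝ y (b i) : ℝ) * (inner ℝ y (b i) : ℝ) := by
      intro i; rw [real_inner_comm (b i) y]
    rw [Finset.mul_sum]
    refine Finset.sum_le_sum (fun i _ => ?_)
    rw [this i]
    exact mul_le_mul_of_nonneg_right (le_ciSup hbdd i) (mul_self_nonneg _)
  have e1 : (inner ℝ y (A y) : ℝ) = ∑ i, (B.mulVec x i) * x i := by
    rw [inner_euclidean]
    refine Finset.sum_congr rfl (fun i _ => ?_)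
    rw [toEuclideanCLM_apply']
    show y i * B.mulVec x i = B.mulVec x i * x i
    rw [mul_comm]
    rfl
  have e2 : (inner ℝ y y : ℝ) = ∑ i, (x i)^2 := by
    rw [inner_euclidean]
    refine Finset.sum_congr rfl (fun i _ => ?_)
    show y i * y i = (x i)^2
    rw [sq]; rfl
  rw [e1, e2] at hle
  exact hle

lemma lambdaMax_attained {n : ℕ} (hn : 0 < n) {B : Matrix (Fin n) (Fin n) ℝ}
    (hB : B.IsHermitian) :
    ∃ x : Fin n → ℝ, (∑ i, (x i)^2 = 1) ∧ ∑ i, (B.mulVec x i) * x i = lambdaMax B := by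
  classical
  haveI : Nonempty (Fin n) := ⟨⟨0, hn⟩⟩
  obtain ⟨i₀, hi₀⟩ := Finite.exists_max hB.eigenvalues
  have h2 : ‖hB.eigenvectorBasis i₀‖ = 1 := hB.eigenvectorBasis.orthonormal.1 i₀
  have h3 : (inner ℝ (hB.eigenvectorBasis i₀) (hB.eigenvectorBasis i₀) : ℝ) = 1 := by
    rw [real_inner_self_eq_norm_sq, h2]; norm_num
  rw [inner_euclidean] at h3
  have h1 := hB.mulVec_eigenvectorBasis i₀
  refine ⟨⇑(hB.eigenvectorBasis i₀), ?_, ?_⟩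
  · rw [← h3]
    refine Finset.sum_congr rfl (fun i _ => ?_)
    rw [sq]
  · have step : ∀ i : Fin n, B.mulVec (⇑(hB.eigenvectorBasis i₀)) i * (hB.eigenvectorBasis i₀) i
        = hB.eigenvalues i₀ * ((hB.eigenvectorBasis i₀) i * (hB.eigenvectorBasis i₀) i) := by
      intro i
      have hh : B.mulVec (⇑(hB.eigenvectorBasis i₀)) i
          = hB.eigenvalues i₀ * (hB.eigenvectorBasis i₀) i := by
        rw [h1]
        exact rfl
      rw [hh]; ring
    calc ∑ i, B.mulVec (⇑(hB.eigenvectorBasis i₀)) i * (hB.eigenvectorBasis i₀) i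
        = ∑ i, hB.eigenvalues i₀ * ((hB.eigenvectorBasis i₀) i * (hB.eigenvectorBasis i₀) i) :=
          Finset.sum_congr rfl (fun i _ => step i)
      _ = hB.eigenvalues i₀ * ∑ i, (hB.eigenvectorBasis i₀) i * (hB.eigenvectorBasis i₀) i :=
          (Finset.mul_sum _ _ _).symm
      _ = hB.eigenvalues i₀ := by rw [h3, mul_one]
      _ = lambdaMax B := by
          rw [lambdaMax_of_hermitian hB]
          exact (le_antisymm (ciSup_le fun i => hi₀ i)
            (le_ciSup (Set.Finite.bddAbove (Set.finite_range _)) i₀)).symm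

lemma abs_quad_le {n : ℕ} (B : Matrix (Fin n) (Fin n) ℝ) (x : Fin n → ℝ)
    (hx : ∑ i, (x i)^2 = 1) :
    |∑ i, (B.mulVec x i) * x i| ≤ ∑ i, ∑ j, |B i j| := by
  have hxb : ∀ i, |x i| ≤ 1 := by
    intro i
    have h1 : (x i)^2 ≤ 1 := by
      rw [← hx]
      exact Finset.single_le_sum (fun j _ => sq_nonneg (x j)) (Finset.mem_univ i)
    nlinarith [abs_nonneg (x i), sq_abs (x i)]
  calc |∑ i, (B.mulVec x i) * x i| ≤ ∑ i, |(B.mulVec x i) * x i| :=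
        Finset.abs_sum_le_sum_abs _ _
    _ ≤ ∑ i, ∑ j, |B i j| := by
      refine Finset.sum_le_sum (fun i _ => ?_)
      have : B.mulVec x i = ∑ j, B i j * x j := rfl
      rw [this, abs_mul]
      calc |∑ j, B i j * x j| * |x i| ≤ (∑ j, |B i j * x j|) * 1 := by
            refine mul_le_mul (Finset.abs_sum_le_sum_abs _ _) (hxb i) (abs_nonneg _) ?_
            positivity
        _ = ∑ j, |B i j| * |x j| := by rw [mul_one]; exact Finset.sum_congr rfl (fun j _ => abs_mul _ _)
        _ ≤ ∑ j, |B i j| := by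
            refine Finset.sum_le_sum (fun j _ => ?_)
            calc |B i j| * |x j| ≤ |B i j| * 1 :=
                  mul_le_mul_of_nonneg_left (hxb j) (abs_nonneg _)
              _ = |B i j| := mul_one _

lemma abs_lambdaMax_le {n : ℕ} {B : Matrix (Fin n) (Fin n) ℝ} (hB : B.IsHermitian) :
    |lambdaMax B| ≤ ∑ i, ∑ j, |B i j| := by
  rcases Nat.eq_zero_or_pos n with hn | hn
  · subst hn
    have : lambdaMax B = 0 := by
      rw [lambdaMax_of_hermitian hB, iSup_of_empty', Real.sSup_empty]
    rw [this]
    simp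
  · obtain ⟨x, hx1, hx2⟩ := lambdaMax_attained hn hB
    rw [← hx2]
    exact abs_quad_le B x hx1

lemma lambdaMax_eq_iSup_seq {n : ℕ} (hn : 0 < n) :
    ∃ d : ℕ → (Fin n → ℝ), (∀ k, ∑ i, (d k i)^2 = 1) ∧
      ∀ B : Matrix (Fin n) (Fin n) ℝ, B.IsHermitian →
        lambdaMax B = ⨆ k, ∑ i, (B.mulVec (d k) i) * (d k i) := by
  classical
  haveI : Nonempty (Fin n) := ⟨⟨0, hn⟩⟩
  set S := Metric.sphere (0 : EuclideanSpace ℝ (Fin n)) 1 with hS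
  haveI : Nonempty S := by
    refine ⟨⟨EuclideanSpace.single ⟨0, hn⟩ (1:ℝ), ?_⟩⟩
    rw [mem_sphere_zero_iff_norm, EuclideanSpace.norm_single]
    norm_num
  set e : ℕ → S := TopologicalSpace.denseSeq S with he
  have hdense : DenseRange e := TopologicalSpace.denseRange_denseSeq S
  -- norms and squares
  have hnorm_sq : ∀ z : EuclideanSpace ℝ (Fin n), (∑ i, (z i)^2) = ‖z‖^2 := by
    intro z
    rw [← real_inner_self_eq_norm_sq, inner_euclidean]
    exact Finset.sum_congr rfl (fun i _ => by rw [sq])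
  have hunit : ∀ k, ‖((e k : EuclideanSpace ℝ (Fin n)))‖ = 1 := fun k =>
    mem_sphere_zero_iff_norm.mp (e k).2
  refine ⟨fun k => ⇑((e k : EuclideanSpace ℝ (Fin n))), ?_, ?_⟩
  · intro k
    show ∑ i, (((e k : EuclideanSpace ℝ (Fin n))) i)^2 = 1
    rw [hnorm_sq, hunit k]
    norm_num
  · intro B hB
    set Q : EuclideanSpace ℝ (Fin n) → ℝ := fun z => ∑ i, (B.mulVec (⇑z) i) * z i with hQ
    have hQcont : Continuous Q := by
      rw [hQ]
      refine continuous_finset_sum _ (fun i _ => Continuous.mul ?_ ?_)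
      · have : (fun z : EuclideanSpace ℝ (Fin n) => B.mulVec (⇑z) i)
            = fun z => ∑ j, B i j * (WithLp.equiv 2 (Fin n → ℝ)) z j := by
          funext z
          rfl
        rw [this]
        refine continuous_finset_sum _ (fun j _ => Continuous.mul continuous_const ?_)
        exact (continuous_apply j).comp (PiLp.continuous_ofLp (p := 2) (β := fun _ : Fin n => ℝ))
      · exact (continuous_apply i).comp (PiLp.continuous_ofLp (p := 2) (β := fun _ : Fin n => ℝ))
    have hub : ∀ k, Q ((e k : EuclideanSpace ℝ (Fin n))) ≤ lambdaMax B := by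
      intro k
      have h1 := quad_le_sum hB (⇑(e k : EuclideanSpace ℝ (Fin n)))
      have h2 : (∑ i, (((e k : EuclideanSpace ℝ (Fin n))) i)^2) = 1 := by
        rw [hnorm_sq, hunit k]; norm_num
      have h1' : Q ((e k : EuclideanSpace ℝ (Fin n)))
          ≤ lambdaMax B * ∑ i, (((e k : EuclideanSpace ℝ (Fin n))) i)^2 := h1
      rw [h2, mul_one] at h1'
      exact h1'
    have hbdd : BddAbove (Set.range (fun k => Q ((e k : EuclideanSpace ℝ (Fin n))))) := by
      refine ⟨lambdaMax B, ?_⟩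
      rintro - ⟨k, rfl⟩
      exact hub k
    refine le_antisymm ?_ (ciSup_le hub)
    -- lower bound via attainment and density
    obtain ⟨x, hx1, hx2⟩ := lambdaMax_attained hn hB
    set y : EuclideanSpace ℝ (Fin n) := (WithLp.equiv 2 (Fin n → ℝ)).symm x with hy
    have hymem : y ∈ S := by
      show y ∈ Metric.sphere 0 1
      rw [mem_sphere_zero_iff_norm]
      have h3 : (∑ i, (y i)^2) = 1 := hx1
      rw [hnorm_sq] at h3
      nlinarith [norm_nonneg y]
    have hQy : Q y = lambdaMax B := hx2
    have hclo : (⟨y, hymem⟩ : S) ∈ closure (Set.range e) := hdense _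
    obtain ⟨w, hw1, hw2⟩ := mem_closure_iff_seq_limit.mp hclo
    have htend : Filter.Tendsto (fun m => Q ((w m : EuclideanSpace ℝ (Fin n))))
        Filter.atTop (nhds (Q y)) := by
      have h1 : Filter.Tendsto (fun m => ((w m : EuclideanSpace ℝ (Fin n))))
          Filter.atTop (nhds y) :=
        (continuous_subtype_val.tendsto _).comp hw2
      exact (hQcont.tendsto y).comp h1
    rw [← hQy]
    refine le_of_tendsto htend (Filter.Eventually.of_forall (fun m => ?_))
    obtain ⟨k, hk⟩ := hw1 m
    rw [← hk]
    exact le_ciSup hbdd k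

end Spectral

/-- Lemma 12, operator norm growth. If `Z` is an absolutely
continuous solution of `Z' = B_t Z` a.e. on `[0,T]` (encoded in integral form)
with `B_t` symmetric for a.e. `t`, then for `0 ≤ s ≤ t ≤ T`,
`‖Z_t‖ ≤ exp(∫ₛᵗ λ_max(B_τ) dτ)·‖Z_s‖`. -/
theorem opNorm_growth
    {n : ℕ} (T : ℝ) (hT : 0 < T)
    (B Z : ℝ → Matrix (Fin n) (Fin n) ℝ)
    (hBint : ∀ i j, IntervalIntegrable (fun t => B t i j) MeasureTheory.volume 0 T)
    (hBsym : ∀ᵐ t ∂(MeasureTheory.volume.restrict (Set.Icc (0:ℝ) T)), (B t).IsHermitian)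
    (hprod : ∀ i j,
      IntervalIntegrable (fun t => (B t * Z t) i j) MeasureTheory.volume 0 T)
    (hZ : ∀ t ∈ Set.Icc (0:ℝ) T, ∀ i j,
      Z t i j = Z 0 i j + ∫ τ in (0:ℝ)..t, (B τ * Z τ) i j)
    (s t : ℝ) (hs : 0 ≤ s) (hst : s ≤ t) (ht : t ≤ T) :
    opNorm (Z t) ≤ Real.exp (∫ τ in s..t, lambdaMax (B τ)) * opNorm (Z s) := by
  classical
  rcases Nat.eq_zero_or_pos n with hn0 | hn
  · subst hn0
    have hz : ∀ M : Matrix (Fin 0) (Fin 0) ℝ, opNorm M = 0 := by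
      intro M
      rw [opNorm]
      have h0 : (Matrix.toEuclideanCLM (𝕜 := ℝ) M :
          EuclideanSpace ℝ (Fin 0) →L[ℝ] EuclideanSpace ℝ (Fin 0)) = 0 :=
        Subsingleton.elim _ _
      rw [h0, norm_zero]
    rw [hz, hz, mul_zero]
  -- main case
  have hIoc_sub : Set.Ioc s t ⊆ Set.Ioc 0 T := fun x hx => ⟨lt_of_le_of_lt hs hx.1, hx.2.trans ht⟩
  have hIcc_sub : Set.Icc s t ⊆ Set.Icc 0 T := fun x hx => ⟨hs.trans hx.1, hx.2.trans ht⟩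
  have hIocIcc : Set.Ioc s t ⊆ Set.Icc 0 T := fun x hx => hIcc_sub ⟨le_of_lt hx.1, hx.2⟩
  -- integrability of entries on Icc s t
  have hBint' : ∀ i j, IntegrableOn (fun τ => B τ i j) (Set.Icc s t) := by
    intro i j
    have h1 : IntegrableOn (fun τ => B τ i j) (Set.Ioc 0 T) :=
      (intervalIntegrable_iff_integrableOn_Ioc_of_le hT.le).mp (hBint i j)
    exact (integrableOn_Icc_iff_integrableOn_Ioc).mpr (h1.mono_set hIoc_sub)
  have hprod' : ∀ i j, IntegrableOn (fun τ => (B τ * Z τ) i j) (Set.Icc s t) := by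
    intro i j
    have h1 : IntegrableOn (fun τ => (B τ * Z τ) i j) (Set.Ioc 0 T) :=
      (intervalIntegrable_iff_integrableOn_Ioc_of_le hT.le).mp (hprod i j)
    exact (integrableOn_Icc_iff_integrableOn_Ioc).mpr (h1.mono_set hIoc_sub)
  -- a.e. symmetry on the subintervals
  have hsym_Icc : ∀ᵐ τ ∂(volume.restrict (Set.Icc s t)), (B τ).IsHermitian :=
    ae_restrict_of_ae_restrict_of_subset hIcc_sub hBsym
  have hsym_Ioc : ∀ᵐ τ ∂(volume.restrict (Set.Ioc s t)), (B τ).IsHermitian :=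
    ae_restrict_of_ae_restrict_of_subset hIocIcc hBsym
  -- integrability of lambdaMax ∘ B
  obtain ⟨d, hd1, hd2⟩ := lambdaMax_eq_iSup_seq hn
  have hK : IntegrableOn (fun τ => ∑ i, ∑ j, |B τ i j|) (Set.Icc s t) :=
    integrable_finset_sum _ (fun i _ =>
      integrable_finset_sum _ (fun j _ => (hBint' i j).abs))
  have hQk : ∀ k, AEMeasurable (fun τ => ∑ i, (B τ).mulVec (d k) i * d k i)
      (volume.restrict (Set.Icc s t)) := by
    intro k
    have : ∀ i, AEMeasurable (fun τ => (B τ).mulVec (d k) i)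
        (volume.restrict (Set.Icc s t)) := by
      intro i
      have : (fun τ => (B τ).mulVec (d k) i) = fun τ => ∑ j, B τ i j * d k j := rfl
      rw [this]
      exact Finset.aemeasurable_fun_sum _ (fun j _ =>
        ((hBint' i j).aestronglyMeasurable.aemeasurable).mul_const _)
    exact Finset.aemeasurable_fun_sum _ (fun i _ => ((this i).mul_const _))
  have hlamAEM : AEMeasurable (fun τ => lambdaMax (B τ)) (volume.restrict (Set.Icc s t)) := by
    have hsup : AEMeasurable (fun τ => ⨆ k, ∑ i, (B τ).mulVec (d k) i * d k i)
        (volume.restrict (Set.Icc s t)) := AEMeasurable.iSup hQk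
    refine AEMeasurable.congr hsup ?_
    filter_upwards [hsym_Icc] with τ hτ
    exact (hd2 (B τ) hτ).symm
  have hlam_int : IntegrableOn (fun τ => lambdaMax (B τ)) (Set.Icc s t) := by
    refine Integrable.mono' hK hlamAEM.aestronglyMeasurable ?_
    filter_upwards [hsym_Icc] with τ hτ
    rw [Real.norm_eq_abs]
    exact abs_lambdaMax_le hτ
  set c : ℝ → ℝ := fun τ => 2 * lambdaMax (B τ) with hcdef
  have hc : IntegrableOn c (Set.Icc s t) := hlam_int.const_mul 2
  -- the key pointwise-in-`v` Grönwall estimate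
  have key : ∀ v : Fin n → ℝ,
      (∑ i, ((Z t).mulVec v i)^2)
        ≤ (∑ i, ((Z s).mulVec v i)^2) * Real.exp (∫ τ in Set.Ioc s t, c τ) := by
    intro v
    set x : ℝ → Fin n → ℝ := fun τ => (Z τ).mulVec v with hxdef
    set g : ℝ → Fin n → ℝ := fun τ => (B τ * Z τ).mulVec v with hgdef
    have hgi : ∀ i, IntegrableOn (fun τ => g τ i) (Set.Icc s t) := by
      intro i
      have : (fun τ => g τ i) = fun τ => ∑ j, (B τ * Z τ) i j * v j := rfl
      rw [this]
      exact integrable_finset_sum _ (fun j _ => (hprod' i j).mul_const _)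
    -- integral representation of the components from `s`
    have hxrep : ∀ i, ∀ u ∈ Set.Icc s t, x u i = x s i + ∫ τ in Set.Ioc s u, g τ i := by
      intro i u hu
      have hu0T : u ∈ Set.Icc 0 T := hIcc_sub hu
      have hs0T : s ∈ Set.Icc 0 T := ⟨hs, hst.trans ht⟩
      have hiiu : ∀ j, IntervalIntegrable (fun τ => (B τ * Z τ) i j) volume 0 u := by
        intro j
        refine (hprod i j).mono_set ?_
        rw [Set.uIcc_of_le hu0T.1, Set.uIcc_of_le hT.le]
        exact Set.Icc_subset_Icc (le_refl 0) hu0T.2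
      have hiis : ∀ j, IntervalIntegrable (fun τ => (B τ * Z τ) i j) volume 0 s := by
        intro j
        refine (hprod i j).mono_set ?_
        rw [Set.uIcc_of_le hs0T.1, Set.uIcc_of_le hT.le]
        exact Set.Icc_subset_Icc (le_refl 0) hs0T.2
      have hiisu : ∀ j, IntervalIntegrable (fun τ => (B τ * Z τ) i j) volume s u := by
        intro j
        refine (hprod i j).mono_set ?_
        rw [Set.uIcc_of_le hu.1, Set.uIcc_of_le hT.le]
        exact Set.Icc_subset_Icc hs0T.1 hu0T.2
      have hstep : ∀ j, Z u i j - Z s i j = ∫ τ in s..u, (B τ * Z τ) i j := by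
        intro j
        rw [hZ u hu0T i j, hZ s hs0T i j]
        have := intervalIntegral.integral_interval_sub_left (hiiu j) (hiis j)
        linarith [this]
      have e1 : x u i - x s i = ∑ j, (∫ τ in s..u, (B τ * Z τ) i j) * v j := by
        have : x u i - x s i = ∑ j, (Z u i j - Z s i j) * v j := by
          show (∑ j, Z u i j * v j) - (∑ j, Z s i j * v j) = _
          rw [← Finset.sum_sub_distrib]
          exact Finset.sum_congr rfl (fun j _ => by ring)
        rw [this]
        exact Finset.sum_congr rfl (fun j _ => by rw [hstep j])
      have e2 : ∑ j, (∫ τ in s..u, (B τ * Z τ) i j) * v j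
          = ∫ τ in s..u, ∑ j, (B τ * Z τ) i j * v j := by
        rw [intervalIntegral.integral_finset_sum]
        · exact Finset.sum_congr rfl (fun j _ => by
            rw [intervalIntegral.integral_mul_const])
        · exact fun j _ => (hiisu j).mul_const _
      have e3 : (∫ τ in s..u, ∑ j, (B τ * Z τ) i j * v j)
          = ∫ τ in Set.Ioc s u, g τ i := by
        rw [intervalIntegral.integral_of_le hu.1]
        rfl
      have e4 : x u i - x s i = ∫ τ in Set.Ioc s u, g τ i := by rw [e1, e2, e3]
      linarith [e4]
    have hxcont : ∀ i, ContinuousOn (fun τ => x τ i) (Set.Icc s t) := by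
      intro i
      have h1 : ContinuousOn (fun u => x s i + ∫ τ in Set.Ioc s u, g τ i) (Set.Icc s t) :=
        (continuousOn_const).add (intervalIntegral.continuousOn_primitive (hgi i))
      exact ContinuousOn.congr h1 (hxrep i)
    set f : ℝ → ℝ := fun τ => ∑ i, (x τ i)^2 with hfdef
    set q : ℝ → ℝ := fun τ => ∑ i, 2 * g τ i * x τ i with hqdef
    have hq_int : IntegrableOn q (Set.Icc s t) := by
      refine integrable_finset_sum _ (fun i _ => ?_)
      have h0 : IntegrableOn (fun τ => 2 * g τ i) (Set.Icc s t) := (hgi i).const_mul 2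
      have h1 : IntegrableOn (fun τ => (2 * g τ i) * x τ i) (Set.Icc s t) :=
        h0.mul_continuousOn (hxcont i) isCompact_Icc
      exact h1.congr (Filter.Eventually.of_forall (fun τ => by ring))
    have hf_rep : ∀ u ∈ Set.Icc s t, f u = f s + ∫ τ in Set.Ioc s u, q τ := by
      intro u hu
      have hsub : Set.Ioc s u ⊆ Set.Icc s t := fun z hz => ⟨le_of_lt hz.1, hz.2.trans hu.2⟩
      have hterm : ∀ i, x u i ^ 2 = x s i ^ 2 + ∫ τ in Set.Ioc s u, 2 * g τ i * x τ i :=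
        fun i => sq_rep (hgi i) (hxrep i) u hu
      have e1 : f u = ∑ i, (x s i ^ 2 + ∫ τ in Set.Ioc s u, 2 * g τ i * x τ i) :=
        Finset.sum_congr rfl (fun i _ => hterm i)
      rw [e1, Finset.sum_add_distrib]
      congr 1
      rw [← integral_finset_sum]
      intro i _
      refine IntegrableOn.mono_set ?_ hsub
      have h0 : IntegrableOn (fun τ => 2 * g τ i) (Set.Icc s t) := (hgi i).const_mul 2
      have h1 : IntegrableOn (fun τ => (2 * g τ i) * x τ i) (Set.Icc s t) :=
        h0.mul_continuousOn (hxcont i) isCompact_Icc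
      exact h1.congr (Filter.Eventually.of_forall (fun τ => by ring))
    have hqc : ∀ᵐ τ ∂(volume.restrict (Set.Ioc s t)), q τ ≤ c τ * f τ := by
      filter_upwards [hsym_Ioc] with τ hτ
      have h1 := quad_le_sum hτ (x τ)
      have hgx : ∀ i, g τ i = (B τ).mulVec (x τ) i := by
        intro i
        show (B τ * Z τ).mulVec v i = (B τ).mulVec ((Z τ).mulVec v) i
        rw [Matrix.mulVec_mulVec]
      have e1 : q τ = 2 * ∑ i, (B τ).mulVec (x τ) i * x τ i := by
        rw [Finset.mul_sum]
        exact Finset.sum_congr rfl (fun i _ => by rw [hgx i]; ring)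
      have e2 : c τ * f τ = 2 * (lambdaMax (B τ) * ∑ i, (x τ i)^2) := by
        show 2 * lambdaMax (B τ) * (∑ i, (x τ i)^2) = _
        ring
      rw [e1, e2]
      linarith [h1]
    have hfnn : ∀ u ∈ Set.Icc s t, 0 ≤ f u :=
      fun u _ => Finset.sum_nonneg (fun i _ => sq_nonneg _)
    exact gronwall_aux hst hc hq_int hf_rep hfnn hqc
  -- wrap up via the operator norm
  have hIocInt : (∫ τ in s..t, lambdaMax (B τ)) = ∫ τ in Set.Ioc s t, lambdaMax (B τ) :=
    intervalIntegral.integral_of_le hst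
  set L : ℝ := ∫ τ in Set.Ioc s t, lambdaMax (B τ) with hLdef
  have hcL : (∫ τ in Set.Ioc s t, c τ) = 2 * L := by
    rw [hLdef, ← integral_const_mul]
  have hexp2 : Real.exp (∫ τ in Set.Ioc s t, c τ) = Real.exp L * Real.exp L := by
    rw [hcL, two_mul, Real.exp_add]
  have hnorm_sq : ∀ z : EuclideanSpace ℝ (Fin n), (∑ i, (z i)^2) = ‖z‖^2 := by
    intro z
    rw [← real_inner_self_eq_norm_sq, inner_euclidean]
    exact Finset.sum_congr rfl (fun i _ => by rw [sq])
  rw [hIocInt, opNorm]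
  refine ContinuousLinearMap.opNorm_le_bound _
    (mul_nonneg (Real.exp_pos _).le (norm_nonneg _)) (fun y => ?_)
  have hAt : ∀ (u : ℝ) i, (Matrix.toEuclideanCLM (𝕜 := ℝ) (Z u)) y i = (Z u).mulVec (⇑y) i :=
    fun u i => rfl
  have hsq : ∀ u : ℝ, ‖(Matrix.toEuclideanCLM (𝕜 := ℝ) (Z u)) y‖^2
      = ∑ i, ((Z u).mulVec (⇑y) i)^2 := by
    intro u
    rw [← hnorm_sq]
    exact Finset.sum_congr rfl (fun i _ => by rw [hAt u i])
  have hkey := key (⇑y)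
  have hs_le : ‖(Matrix.toEuclideanCLM (𝕜 := ℝ) (Z s)) y‖ ≤ opNorm (Z s) * ‖y‖ :=
    ContinuousLinearMap.le_opNorm _ y
  have h2 : ‖(Matrix.toEuclideanCLM (𝕜 := ℝ) (Z t)) y‖^2
      ≤ (Real.exp L * (opNorm (Z s) * ‖y‖))^2 := by
    rw [hsq t]
    calc (∑ i, ((Z t).mulVec (⇑y) i)^2)
        ≤ (∑ i, ((Z s).mulVec (⇑y) i)^2) * Real.exp (∫ τ in Set.Ioc s t, c τ) := hkey
      _ = ‖(Matrix.toEuclideanCLM (𝕜 := ℝ) (Z s)) y‖^2 * (Real.exp L * Real.exp L) := by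
          rw [hsq s, hexp2]
      _ ≤ (opNorm (Z s) * ‖y‖)^2 * (Real.exp L * Real.exp L) := by
          refine mul_le_mul_of_nonneg_right ?_
            (mul_nonneg (Real.exp_pos _).le (Real.exp_pos _).le)
          exact pow_le_pow_left₀ (norm_nonneg _) hs_le 2
      _ = (Real.exp L * (opNorm (Z s) * ‖y‖))^2 := by ring
  have h3 : (0:ℝ) ≤ Real.exp L * (opNorm (Z s) * ‖y‖) :=
    mul_nonneg (Real.exp_pos _).le (mul_nonneg (norm_nonneg _) (norm_nonneg _))
  calc ‖(Matrix.toEuclideanCLM (𝕜 := ℝ) (Z t)) y‖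
      = Real.sqrt (‖(Matrix.toEuclideanCLM (𝕜 := ℝ) (Z t)) y‖^2) :=
        (Real.sqrt_sq (norm_nonneg _)).symm
    _ ≤ Real.sqrt ((Real.exp L * (opNorm (Z s) * ‖y‖))^2) := Real.sqrt_le_sqrt h2
    _ = Real.exp L * (opNorm (Z s) * ‖y‖) := Real.sqrt_sq h3
    _ = Real.exp L * opNorm (Z s) * ‖y‖ := by ring
end
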